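/- arXiv:1805.11389 — 7 statements merged into one kernel-verified Lean document; each statement's English description precedes it below -/
import Mathlib

section
/- Assume (F0)-(F2) and (F4), and for each ε > 0 let u_ε : [0,T] → X be a C² solution of ε² A ü_ε(t) + ε B u̇_ε(t) + ∇ₓF(t, u_ε(t)) = 0 on [0,T], with ‖u_ε(0)‖ ≤ R and ε‖u̇_ε(0)‖ ≤ R for all ε > 0. Then there exists a constant C > 0, independent of ε, such that for all ε > 0 and all t ∈ [0,T]: (i) ‖u_ε(t)‖ ≤ C; (ii) ε‖u̇_ε(t)‖ ≤ C; (iii) ε²‖ü_ε(t)‖ ≤ C; (iv) ε ∫_0^T ‖u̇_ε(r)‖² dr ≤ C. -/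
open Set Filter Topology MeasureTheory
open scoped RealInnerProductSpace

/-- Antitone from nonpositive derivative on a closed interval. -/
lemma aux_antitoneOn {a b : ℝ} {f f' : ℝ → ℝ}
    (hf : ∀ s ∈ Icc a b, HasDerivWithinAt f (f' s) (Icc a b) s)
    (h0 : ∀ s ∈ Ioo a b, f' s ≤ 0) : AntitoneOn f (Icc a b) := by
  apply antitoneOn_of_deriv_nonpos (convex_Icc a b)
    (fun s hs => (hf s hs).continuousWithinAt)
  · rw [interior_Icc]
    exact fun s hs => (((hf s (Ioo_subset_Icc_self hs)).hasDerivAt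
      (Icc_mem_nhds hs.1 hs.2)).differentiableAt).differentiableWithinAt
  · rw [interior_Icc]
    intro s hs
    rw [((hf s (Ioo_subset_Icc_self hs)).hasDerivAt (Icc_mem_nhds hs.1 hs.2)).deriv]
    exact h0 s hs

lemma aux_monotoneOn {a b : ℝ} {f f' : ℝ → ℝ}
    (hf : ∀ s ∈ Icc a b, HasDerivWithinAt f (f' s) (Icc a b) s)
    (h0 : ∀ s ∈ Ioo a b, 0 ≤ f' s) : MonotoneOn f (Icc a b) := by
  apply monotoneOn_of_deriv_nonneg (convex_Icc a b)
    (fun s hs => (hf s hs).continuousWithinAt)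
  · rw [interior_Icc]
    exact fun s hs => (((hf s (Ioo_subset_Icc_self hs)).hasDerivAt
      (Icc_mem_nhds hs.1 hs.2)).differentiableAt).differentiableWithinAt
  · rw [interior_Icc]
    intro s hs
    rw [((hf s (Ioo_subset_Icc_self hs)).hasDerivAt (Icc_mem_nhds hs.1 hs.2)).deriv]
    exact h0 s hs

/-- Positive definite continuous linear operators on finite-dimensional spaces are coercive. -/
lemma aux_coercive {X : Type*} [NormedAddCommGroup X] [InnerProductSpace ℝ X]
    [FiniteDimensional ℝ X] (A : X →L[ℝ] X) (hApos : ∀ x : X, x ≠ 0 → 0 < ⟪x, A x⟫) :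
    ∃ c > (0 : ℝ), ∀ x : X, c * ‖x‖ ^ 2 ≤ ⟪x, A x⟫ := by
  rcases subsingleton_or_nontrivial X with hX | hX
  · exact ⟨1, one_pos, fun x => by rw [Subsingleton.elim x 0]; simp⟩
  · obtain ⟨x₀, hx₀⟩ := exists_ne (0 : X)
    have hsne : (Metric.sphere (0 : X) 1).Nonempty := by
      refine ⟨‖x₀‖⁻¹ • x₀, ?_⟩
      simp [norm_smul, abs_of_nonneg, inv_mul_cancel₀ (norm_ne_zero_iff.mpr hx₀)]
    have hcont : Continuous fun x : X => ⟪x, A x⟫ := continuous_id.inner A.continuous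
    obtain ⟨y, hy, hmin'⟩ := (isCompact_sphere (0 : X) 1).exists_isMinOn hsne hcont.continuousOn
    have hy1 : ‖y‖ = 1 := by simpa using hy
    have hyne : y ≠ 0 := by intro h; rw [h] at hy1; simp at hy1
    refine ⟨⟪y, A y⟫, hApos y hyne, fun x => ?_⟩
    rcases eq_or_ne x 0 with rfl | hx
    · simp
    · have hnx : (0 : ℝ) < ‖x‖ := norm_pos_iff.mpr hx
      have hmem : ‖x‖⁻¹ • x ∈ Metric.sphere (0 : X) 1 := by
        simp [norm_smul, abs_of_nonneg, inv_mul_cancel₀ hnx.ne']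
      have h1 : ⟪y, A y⟫ ≤ ⟪‖x‖⁻¹ • x, A (‖x‖⁻¹ • x)⟫ := hmin' hmem
      rw [_root_.map_smul, real_inner_smul_left, real_inner_smul_right] at h1
      have hx2 : (0 : ℝ) < ‖x‖ ^ 2 := by positivity
      have h3 : ‖x‖⁻¹ * (‖x‖⁻¹ * ⟪x, A x⟫) = ⟪x, A x⟫ / ‖x‖ ^ 2 := by
        rw [eq_div_iff hx2.ne']
        calc ‖x‖⁻¹ * (‖x‖⁻¹ * ⟪x, A x⟫) * ‖x‖ ^ 2
            = (‖x‖⁻¹ * ‖x‖) ^ 2 * ⟪x, A x⟫ := by ring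
          _ = ⟪x, A x⟫ := by rw [inv_mul_cancel₀ hnx.ne']; ring
      rw [h3] at h1
      exact (le_div_iff₀ hx2).mp h1

/-- Derivative of `r ↦ (g r + c) * exp (k r)`. -/
lemma aux_deriv_mul_exp {g : ℝ → ℝ} {gd : ℝ} {s : Set ℝ} {t : ℝ} (k c : ℝ)
    (hg : HasDerivWithinAt g gd s t) :
    HasDerivWithinAt (fun r => (g r + c) * Real.exp (k * r))
      ((gd + k * (g t + c)) * Real.exp (k * t)) s t := by
  have h2 : HasDerivAt (fun r : ℝ => Real.exp (k * r)) (Real.exp (k * t) * k) t := by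
    simpa using ((hasDerivAt_id t).const_mul k).exp
  have h3 : HasDerivWithinAt (fun r => (g r + c) * Real.exp (k * r)) _ s t :=
    (hg.add_const c).mul h2.hasDerivWithinAt
  convert h3 using 1
  ring

lemma aux_op_lower {X : Type*} [NormedAddCommGroup X] [InnerProductSpace ℝ X]
    (A : X →L[ℝ] X) (cA : ℝ) (hcoA : ∀ x : X, cA * ‖x‖ ^ 2 ≤ ⟪x, A x⟫) :
    ∀ z : X, cA * ‖z‖ ≤ ‖A z‖ := by
  intro z
  rcases eq_or_ne z 0 with rfl | hz
  · simp
  · have hn : (0 : ℝ) < ‖z‖ := norm_pos_iff.mpr hz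
    have h1 := hcoA z
    have h2 := real_inner_le_norm z (A z)
    have h3 : cA * ‖z‖ * ‖z‖ ≤ ‖A z‖ * ‖z‖ := by nlinarith
    exact le_of_mul_le_mul_right h3 hn

set_option maxHeartbeats 1000000

/-- A priori bounds (i)-(iv) for the solutions of the singularly perturbed problem. -/
theorem apriori_bounds_i_iv
    {X : Type*} [NormedAddCommGroup X] [InnerProductSpace ℝ X] [FiniteDimensional ℝ X]
    (A B : X →L[ℝ] X)
    (hAsymm : ∀ x y : X, ⟪A x, y⟫ = ⟪x, A y⟫)
    (hApos : ∀ x : X, x ≠ 0 → 0 < ⟪x, A x⟫)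
    (hBsymm : ∀ x y : X, ⟪B x, y⟫ = ⟪x, B y⟫)
    (hBpos : ∀ x : X, x ≠ 0 → 0 < ⟪x, B x⟫)
    (T : ℝ) (hT : 0 < T)
    (F dtF : ℝ → X → ℝ) (gradF : ℝ → X → X)
    -- (F0): F is C¹ on [0,T] × X
    (hF0 : ContDiffOn ℝ 1 (fun p : ℝ × X => F p.1 p.2) (Set.Icc 0 T ×ˢ Set.univ))
    (hgradF : ∀ t ∈ Set.Icc 0 T, ∀ x : X, HasGradientAt (F t) (gradF t x) x)
    (hdtF : ∀ x : X, ∀ t ∈ Set.Icc 0 T,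
      HasDerivWithinAt (fun τ => F τ x) (dtF t x) (Set.Icc 0 T) t)
    -- (F1): sublevel sets of u ↦ sup_t |F(t,u)| are bounded
    (hF1 : ∀ ρ > (0 : ℝ), Bornology.IsBounded {x : X | ∀ t ∈ Set.Icc 0 T, |F t x| ≤ ρ})
    -- (F2): power control
    (C₁ C₂ : ℝ) (hC₁ : 0 < C₁) (hC₂ : 0 < C₂)
    (hF2 : ∀ t ∈ Set.Icc 0 T, ∀ x : X, |dtF t x| ≤ C₁ * F t x + C₂)
    -- (F4): F(t,·) is C², with Hessian continuous on [0,T] × X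
    (hessF : ℝ → X → X →L[ℝ] X)
    (hF4 : ∀ t ∈ Set.Icc 0 T, ContDiff ℝ 2 (F t))
    (hhessF : ∀ t ∈ Set.Icc 0 T, ∀ x : X, HasFDerivAt (gradF t) (hessF t x) x)
    (hhessFc : ContinuousOn (fun p : ℝ × X => hessF p.1 p.2) (Set.Icc 0 T ×ˢ Set.univ))
    -- the family of solutions u_ε, with derivatives u'_ε, u''_ε
    (u u' u'' : ℝ → ℝ → X)
    (hu' : ∀ ε > (0 : ℝ), ∀ t ∈ Set.Icc 0 T, HasDerivWithinAt (u ε) (u' ε t) (Set.Icc 0 T) t)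
    (hu'' : ∀ ε > (0 : ℝ), ∀ t ∈ Set.Icc 0 T, HasDerivWithinAt (u' ε) (u'' ε t) (Set.Icc 0 T) t)
    (hu''c : ∀ ε > (0 : ℝ), ContinuousOn (u'' ε) (Set.Icc 0 T))
    (hode : ∀ ε > (0 : ℝ), ∀ t ∈ Set.Icc 0 T,
      ε ^ 2 • A (u'' ε t) + ε • B (u' ε t) + gradF t (u ε t) = 0)
    -- uniformly bounded initial data
    (R : ℝ) (hR : 0 < R)
    (hinit : ∀ ε > (0 : ℝ), ‖u ε 0‖ ≤ R ∧ ε * ‖u' ε 0‖ ≤ R) :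
    ∃ C > (0 : ℝ), ∀ ε > (0 : ℝ), ∀ t ∈ Set.Icc 0 T,
      ‖u ε t‖ ≤ C ∧
      ε * ‖u' ε t‖ ≤ C ∧
      ε ^ 2 * ‖u'' ε t‖ ≤ C ∧
      ε * (∫ r in (0 : ℝ)..T, ‖u' ε r‖ ^ 2) ≤ C := by
  classical
  obtain ⟨cA, hcA, hcoA⟩ := aux_coercive A hApos
  obtain ⟨cB, hcB, hcoB⟩ := aux_coercive B hBpos
  have hIcc0 : (0 : ℝ) ∈ Icc (0 : ℝ) T := ⟨le_refl 0, hT.le⟩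
  have hIccT : T ∈ Icc (0 : ℝ) T := ⟨hT.le, le_refl T⟩
  have hUI : UniqueDiffOn ℝ (Icc (0 : ℝ) T) := uniqueDiffOn_Icc hT
  have hUS : UniqueDiffOn ℝ ((Icc (0 : ℝ) T) ×ˢ (univ : Set X)) :=
    hUI.prod uniqueDiffOn_univ
  set S : Set (ℝ × X) := (Icc (0 : ℝ) T) ×ˢ (univ : Set X) with hS
  set f : ℝ × X → ℝ := fun p => F p.1 p.2 with hf
  set D : ℝ × X → (ℝ × X →L[ℝ] ℝ) := fderivWithin ℝ f S with hD
  have hDc : ContinuousOn D S := hF0.continuousOn_fderivWithin hUS le_rfl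
  have hDf : ∀ p ∈ S, HasFDerivWithinAt f (D p) S p := fun p hp =>
    ((hF0.differentiableOn one_ne_zero) p hp).hasFDerivWithinAt
  have hmemS : ∀ t ∈ Icc (0 : ℝ) T, ∀ x : X, (t, x) ∈ S := fun t ht x => ⟨ht, mem_univ x⟩
  -- identification of the x-partial derivative with the gradient
  have hgradD : ∀ t ∈ Icc (0 : ℝ) T, ∀ x : X,
      (InnerProductSpace.toDual ℝ X) (gradF t x)
        = (D (t, x)).comp ((0 : X →L[ℝ] ℝ).prod (ContinuousLinearMap.id ℝ X)) := by
    intro t ht x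
    have hι : HasFDerivAt (fun y : X => ((t, y) : ℝ × X))
        ((0 : X →L[ℝ] ℝ).prod (ContinuousLinearMap.id ℝ X)) x :=
      (hasFDerivAt_const t x).prodMk (hasFDerivAt_id x)
    have hcomp : HasFDerivAt (F t)
        ((D (t, x)).comp ((0 : X →L[ℝ] ℝ).prod (ContinuousLinearMap.id ℝ X))) x := by
      have h := ((hDf _ (hmemS t ht x)).comp x hι.hasFDerivWithinAt
        (fun y _ => hmemS t ht y)).hasFDerivAt univ_mem
      exact h
    exact (hgradF t ht x).hasFDerivAt.unique hcomp
  have hpartx : ∀ t ∈ Icc (0 : ℝ) T, ∀ x v : X, (D (t, x)) (0, v) = ⟪gradF t x, v⟫ := by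
    intro t ht x v
    have h := congrFun (congrArg DFunLike.coe (hgradD t ht x)) v
    simpa [InnerProductSpace.toDual_apply_apply] using h.symm
  -- identification of the t-partial derivative
  have hpartt : ∀ t ∈ Icc (0 : ℝ) T, ∀ x : X, (D (t, x)) (1, 0) = dtF t x := by
    intro t ht x
    have hj : HasDerivWithinAt (fun τ : ℝ => ((τ, x) : ℝ × X)) ((1 : ℝ), (0 : X))
        (Icc (0 : ℝ) T) t :=
      (hasDerivWithinAt_id t _).prodMk (hasDerivWithinAt_const t _ x)
    have hcomp : HasDerivWithinAt (fun τ => F τ x) ((D (t, x)) (1, 0)) (Icc (0 : ℝ) T) t :=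
      by have h := (hDf _ (hmemS t ht x)).comp_hasDerivWithinAt t hj (fun τ hτ => hmemS τ hτ x)
         exact h
    exact (hcomp.derivWithin (hUI t ht)).symm.trans ((hdtF x t ht).derivWithin (hUI t ht))
  -- continuity of the partial maps
  have hgradc : ContinuousOn (fun p : ℝ × X => gradF p.1 p.2) S := by
    have h1 : ContinuousOn (fun p : ℝ × X => (InnerProductSpace.toDual ℝ X).symm
        ((D p).comp ((0 : X →L[ℝ] ℝ).prod (ContinuousLinearMap.id ℝ X)))) S :=
      (LinearIsometryEquiv.continuous _).comp_continuousOn (hDc.clm_comp continuousOn_const)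
    refine h1.congr fun p hp => ?_
    beta_reduce
    rw [← hgradD p.1 hp.1 p.2]
    exact ((InnerProductSpace.toDual ℝ X).symm_apply_apply _).symm
  have hdtc : ContinuousOn (fun p : ℝ × X => dtF p.1 p.2) S := by
    have h1 : ContinuousOn (fun p : ℝ × X => (D p) (1, 0)) S :=
      hDc.clm_apply continuousOn_const
    exact h1.congr fun p hp => (hpartt p.1 hp.1 p.2).symm
  -- positivity facts
  have hAnn : ∀ x : X, 0 ≤ ⟪x, A x⟫ := fun x => le_trans (by positivity) (hcoA x)
  have hBnn : ∀ x : X, 0 ≤ ⟪x, B x⟫ := fun x => le_trans (by positivity) (hcoB x)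
  have hBnn' : ∀ x : X, 0 ≤ ⟪B x, x⟫ := fun x => by rw [hBsymm]; exact hBnn x
  have hcoB' : ∀ x : X, cB * ‖x‖ ^ 2 ≤ ⟪B x, x⟫ := fun x => by rw [hBsymm]; exact hcoB x
  set c : ℝ := C₂ / C₁ with hc
  have hcc : C₁ * c = C₂ := by rw [hc]; field_simp
  have hcpos : 0 < c := div_pos hC₂ hC₁
  have hFlow : ∀ t ∈ Icc (0 : ℝ) T, ∀ x : X, -c ≤ F t x := by
    intro t ht x
    have h := hF2 t ht x
    have h2 := abs_nonneg (dtF t x)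
    nlinarith [hcc]
  -- the energy and its derivative
  set En : ℝ → ℝ → ℝ := fun ε t => ε ^ 2 / 2 * ⟪u' ε t, A (u' ε t)⟫ + F t (u ε t) with hEn
  set En' : ℝ → ℝ → ℝ := fun ε t => -(ε * ⟪B (u' ε t), u' ε t⟫) + dtF t (u ε t) with hEn'
  have hderivEn : ∀ ε, 0 < ε → ∀ t ∈ Icc (0 : ℝ) T,
      HasDerivWithinAt (En ε) (En' ε t) (Icc (0 : ℝ) T) t := by
    intro ε hε t ht
    have hu't := hu' ε hε t ht
    have hu''t := hu'' ε hε t ht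
    have hA' : HasDerivWithinAt (fun τ => A (u' ε τ)) (A (u'' ε t)) (Icc (0 : ℝ) T) t :=
      A.hasFDerivAt.comp_hasDerivWithinAt t hu''t
    have hkin : HasDerivWithinAt (fun τ => ⟪u' ε τ, A (u' ε τ)⟫)
        (⟪u' ε t, A (u'' ε t)⟫ + ⟪u'' ε t, A (u' ε t)⟫) (Icc (0 : ℝ) T) t :=
      hu''t.inner ℝ hA'
    have hγ : HasDerivWithinAt (fun τ => ((τ, u ε τ) : ℝ × X)) ((1 : ℝ), u' ε t)
        (Icc (0 : ℝ) T) t :=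
      (hasDerivWithinAt_id t _).prodMk hu't
    have hFc : HasDerivWithinAt (fun τ => F τ (u ε τ)) ((D (t, u ε t)) (1, u' ε t))
        (Icc (0 : ℝ) T) t :=
      by have h := (hDf _ (hmemS t ht _)).comp_hasDerivWithinAt t hγ (fun τ hτ => hmemS τ hτ _)
         exact h
    have hsum := (hkin.const_mul (ε ^ 2 / 2)).add hFc
    have hval : ε ^ 2 / 2 * (⟪u' ε t, A (u'' ε t)⟫ + ⟪u'' ε t, A (u' ε t)⟫)
        + (D (t, u ε t)) (1, u' ε t) = En' ε t := by
      have hsplit : ((1 : ℝ), u' ε t) = ((1 : ℝ), (0 : X)) + ((0 : ℝ), u' ε t) := by simp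
      rw [hsplit, map_add, hpartt t ht _, hpartx t ht _ _]
      have hip : ⟪ε ^ 2 • A (u'' ε t) + ε • B (u' ε t) + gradF t (u ε t), u' ε t⟫ = 0 := by
        rw [hode ε hε t ht, inner_zero_left]
      rw [inner_add_left, inner_add_left, real_inner_smul_left, real_inner_smul_left] at hip
      have s1 : ⟪u' ε t, A (u'' ε t)⟫ = ⟪A (u'' ε t), u' ε t⟫ := real_inner_comm _ _
      have s2 : ⟪u'' ε t, A (u' ε t)⟫ = ⟪A (u'' ε t), u' ε t⟫ := (hAsymm _ _).symm
      simp only [hEn']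
      rw [s1, s2]
      linarith [hip]
    rw [hEn]
    simpa using hval ▸ hsum
  -- initial energy bound
  obtain ⟨MF, hMF⟩ := (isCompact_Icc.prod (isCompact_closedBall (0 : X) R)).exists_bound_of_continuousOn
    (hF0.continuousOn.mono (prod_mono_right (subset_univ _)))
  set M₀ : ℝ := ‖A‖ * R ^ 2 / 2 + MF with hM₀
  have hE0 : ∀ ε, 0 < ε → En ε 0 ≤ M₀ := by
    intro ε hε
    obtain ⟨h0u, h0u'⟩ := hinit ε hε
    have h1 : ⟪u' ε 0, A (u' ε 0)⟫ ≤ ‖A‖ * ‖u' ε 0‖ ^ 2 := by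
      calc ⟪u' ε 0, A (u' ε 0)⟫ ≤ ‖u' ε 0‖ * ‖A (u' ε 0)‖ := real_inner_le_norm _ _
        _ ≤ ‖u' ε 0‖ * (‖A‖ * ‖u' ε 0‖) := by
            exact mul_le_mul_of_nonneg_left (A.le_opNorm _) (norm_nonneg _)
        _ = ‖A‖ * ‖u' ε 0‖ ^ 2 := by ring
    have h2 : F 0 (u ε 0) ≤ MF := by
      have h := hMF (0, u ε 0) ⟨hIcc0, mem_closedBall_zero_iff.mpr h0u⟩
      calc F 0 (u ε 0) ≤ |F 0 (u ε 0)| := le_abs_self _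
        _ ≤ MF := by simpa [Real.norm_eq_abs] using h
    have h4 : (ε * ‖u' ε 0‖) ^ 2 ≤ R ^ 2 := by
      have := pow_le_pow_left₀ (by positivity) h0u' 2
      simpa using this
    have h5 : ε ^ 2 * ‖u' ε 0‖ ^ 2 ≤ R ^ 2 := by rw [mul_pow] at h4; exact h4
    have h3 : ε ^ 2 / 2 * ⟪u' ε 0, A (u' ε 0)⟫ ≤ ‖A‖ * R ^ 2 / 2 := by
      calc ε ^ 2 / 2 * ⟪u' ε 0, A (u' ε 0)⟫
          ≤ ε ^ 2 / 2 * (‖A‖ * ‖u' ε 0‖ ^ 2) :=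
            mul_le_mul_of_nonneg_left h1 (by positivity)
        _ = ‖A‖ / 2 * (ε ^ 2 * ‖u' ε 0‖ ^ 2) := by ring
        _ ≤ ‖A‖ / 2 * R ^ 2 := mul_le_mul_of_nonneg_left h5 (by positivity)
        _ = ‖A‖ * R ^ 2 / 2 := by ring
    simp only [hEn, hM₀]
    linarith
  -- Gronwall for the energy
  set M₁ : ℝ := (M₀ + c) * Real.exp (C₁ * T) with hM₁
  have hEn'le : ∀ ε, 0 < ε → ∀ s ∈ Icc (0 : ℝ) T, En' ε s ≤ C₁ * (En ε s + c) := by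
    intro ε hε s hs
    have hb : 0 ≤ ε * ⟪B (u' ε s), u' ε s⟫ := mul_nonneg hε.le (hBnn' _)
    have hd := hF2 s hs (u ε s)
    have hFE : F s (u ε s) ≤ En ε s := by
      have hk : 0 ≤ ε ^ 2 / 2 * ⟪u' ε s, A (u' ε s)⟫ :=
        mul_nonneg (by positivity) (hAnn _)
      simp only [hEn]
      linarith
    have habs := le_abs_self (dtF s (u ε s))
    simp only [hEn']
    linarith [mul_le_mul_of_nonneg_left hFE hC₁.le, hcc]
  have hEnC : ∀ ε, 0 < ε → ∀ t ∈ Icc (0 : ℝ) T, En ε t + c ≤ M₁ := by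
    intro ε hε t ht
    have hanti : AntitoneOn (fun r => (En ε r + c) * Real.exp ((-C₁) * r)) (Icc (0 : ℝ) T) := by
      apply aux_antitoneOn
        (f' := fun r => (En' ε r + (-C₁) * (En ε r + c)) * Real.exp ((-C₁) * r))
      · exact fun s hs => aux_deriv_mul_exp (-C₁) c (hderivEn ε hε s hs)
      · intro s hs
        have h1 := hEn'le ε hε s (Ioo_subset_Icc_self hs)
        have h2 : En' ε s + (-C₁) * (En ε s + c) ≤ 0 := by linarith
        exact mul_nonpos_of_nonpos_of_nonneg h2 (Real.exp_pos _).le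
    have hGt := hanti hIcc0 ht ht.1
    have hexp : Real.exp ((-C₁) * t) * Real.exp (C₁ * t) = 1 := by
      rw [← Real.exp_add]
      norm_num
    have h0c : 0 ≤ En ε 0 + c := by
      have hk : 0 ≤ ε ^ 2 / 2 * ⟪u' ε 0, A (u' ε 0)⟫ :=
        mul_nonneg (by positivity) (hAnn _)
      simp only [hEn]
      linarith [hFlow 0 hIcc0 (u ε 0)]
    have hstep : En ε t + c ≤ (En ε 0 + c) * Real.exp (C₁ * t) := by
      have h5 := mul_le_mul_of_nonneg_right hGt (Real.exp_pos (C₁ * t)).le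
      calc En ε t + c
          = (En ε t + c) * (Real.exp ((-C₁) * t) * Real.exp (C₁ * t)) := by rw [hexp, mul_one]
        _ = (En ε t + c) * Real.exp ((-C₁) * t) * Real.exp (C₁ * t) := by ring
        _ ≤ (En ε 0 + c) * Real.exp ((-C₁) * 0) * Real.exp (C₁ * t) := h5
        _ = (En ε 0 + c) * Real.exp (C₁ * t) := by norm_num
    calc En ε t + c ≤ (En ε 0 + c) * Real.exp (C₁ * t) := hstep
      _ ≤ (M₀ + c) * Real.exp (C₁ * t) := by
          have := hE0 ε hε
          exact mul_le_mul_of_nonneg_right (by linarith) (Real.exp_pos _).le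
      _ ≤ (M₀ + c) * Real.exp (C₁ * T) := by
          have hM0c : 0 ≤ M₀ + c := le_trans h0c (by linarith [hE0 ε hε])
          exact mul_le_mul_of_nonneg_left
            (Real.exp_le_exp.mpr (mul_le_mul_of_nonneg_left ht.2 hC₁.le)) hM0c
  have hM₁nn : 0 ≤ M₁ := by
    have h0c : 0 ≤ En 1 0 + c := by
      have hk : 0 ≤ (1:ℝ) ^ 2 / 2 * ⟪u' 1 0, A (u' 1 0)⟫ :=
        mul_nonneg (by norm_num) (hAnn _)
      simp only [hEn]
      linarith [hFlow 0 hIcc0 (u 1 0)]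
    exact le_trans h0c (hEnC 1 one_pos 0 hIcc0)
  have hFub : ∀ ε, 0 < ε → ∀ t ∈ Icc (0 : ℝ) T, F t (u ε t) + c ≤ M₁ := by
    intro ε hε t ht
    have hFE : F t (u ε t) ≤ En ε t := by
      have hk : 0 ≤ ε ^ 2 / 2 * ⟪u' ε t, A (u' ε t)⟫ :=
        mul_nonneg (by positivity) (hAnn _)
      simp only [hEn]
      linarith
    linarith [hEnC ε hε t ht]
  -- (i) bound on u
  set ρ : ℝ := max (M₁ * Real.exp (C₁ * T)) c with hρ
  have hρpos : 0 < ρ := lt_of_lt_of_le hcpos (le_max_right _ _)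
  have hsub : ∀ ε, 0 < ε → ∀ t₀ ∈ Icc (0 : ℝ) T,
      u ε t₀ ∈ {x : X | ∀ s ∈ Set.Icc (0:ℝ) T, |F s x| ≤ ρ} := by
    intro ε hε t₀ ht₀
    intro s hs
    set x := u ε t₀ with hx
    have hFt₀ : F t₀ x + c ≤ M₁ := hFub ε hε t₀ ht₀
    have hFt₀nn : 0 ≤ F t₀ x + c := by linarith [hFlow t₀ ht₀ x]
    have hup : F s x + c ≤ M₁ * Real.exp (C₁ * T) := by
      rcases le_total t₀ s with hts | hts
      · -- forward in time: antitone (F r x + c) e^{-C₁ r}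
        have hanti : AntitoneOn (fun r => (F r x + c) * Real.exp ((-C₁) * r))
            (Icc (0 : ℝ) T) := by
          apply aux_antitoneOn
            (f' := fun r => (dtF r x + (-C₁) * (F r x + c)) * Real.exp ((-C₁) * r))
          · exact fun r hr => aux_deriv_mul_exp (-C₁) c (hdtF x r hr)
          · intro r hr
            have h := hF2 r (Ioo_subset_Icc_self hr) x
            have habs := le_abs_self (dtF r x)
            have h2 : dtF r x + (-C₁) * (F r x + c) ≤ 0 := by linarith [hcc]
            exact mul_nonpos_of_nonpos_of_nonneg h2 (Real.exp_pos _).le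
        have h1 := hanti ht₀ hs hts
        have hsc : 0 ≤ F s x + c := by linarith [hFlow s hs x]
        have he1 : Real.exp ((-C₁) * t₀) ≤ 1 := by
          rw [Real.exp_le_one_iff]
          have : 0 ≤ C₁ * t₀ := mul_nonneg hC₁.le ht₀.1
          linarith
        have h2 : (F s x + c) * Real.exp ((-C₁) * s) ≤ M₁ := by
          calc (F s x + c) * Real.exp ((-C₁) * s)
              ≤ (F t₀ x + c) * Real.exp ((-C₁) * t₀) := h1
            _ ≤ (F t₀ x + c) * 1 := mul_le_mul_of_nonneg_left he1 hFt₀nn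
            _ ≤ M₁ := by linarith
        have hexp : Real.exp ((-C₁) * s) * Real.exp (C₁ * s) = 1 := by
          rw [← Real.exp_add]; norm_num
        have he2 : Real.exp (C₁ * s) ≤ Real.exp (C₁ * T) :=
          Real.exp_le_exp.mpr (mul_le_mul_of_nonneg_left hs.2 hC₁.le)
        calc F s x + c = (F s x + c) * Real.exp ((-C₁) * s) * Real.exp (C₁ * s) := by
              rw [mul_assoc, hexp, mul_one]
          _ ≤ M₁ * Real.exp (C₁ * s) := mul_le_mul_of_nonneg_right h2 (Real.exp_pos _).le
          _ ≤ M₁ * Real.exp (C₁ * T) := mul_le_mul_of_nonneg_left he2 hM₁nn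
      · -- backward in time: monotone (F r x + c) e^{C₁ r}
        have hmono : MonotoneOn (fun r => (F r x + c) * Real.exp (C₁ * r))
            (Icc (0 : ℝ) T) := by
          apply aux_monotoneOn
            (f' := fun r => (dtF r x + C₁ * (F r x + c)) * Real.exp (C₁ * r))
          · exact fun r hr => aux_deriv_mul_exp C₁ c (hdtF x r hr)
          · intro r hr
            have h := hF2 r (Ioo_subset_Icc_self hr) x
            have habs := neg_abs_le (dtF r x)
            have h2 : 0 ≤ dtF r x + C₁ * (F r x + c) := by linarith [hcc]
            exact mul_nonneg h2 (Real.exp_pos _).le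
        have h1 := hmono hs ht₀ hts
        have hsc : 0 ≤ F s x + c := by linarith [hFlow s hs x]
        have he1 : 1 ≤ Real.exp (C₁ * s) := Real.one_le_exp (mul_nonneg hC₁.le hs.1)
        have he2 : Real.exp (C₁ * t₀) ≤ Real.exp (C₁ * T) :=
          Real.exp_le_exp.mpr (mul_le_mul_of_nonneg_left ht₀.2 hC₁.le)
        calc F s x + c ≤ (F s x + c) * Real.exp (C₁ * s) :=
              le_mul_of_one_le_right hsc he1
          _ ≤ (F t₀ x + c) * Real.exp (C₁ * t₀) := h1
          _ ≤ M₁ * Real.exp (C₁ * t₀) := mul_le_mul_of_nonneg_right hFt₀ (Real.exp_pos _).le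
          _ ≤ M₁ * Real.exp (C₁ * T) := mul_le_mul_of_nonneg_left he2 hM₁nn
    have hlo : -ρ ≤ F s x := by
      have := hFlow s hs x
      have : -c ≤ F s x := this
      have hcρ : c ≤ ρ := le_max_right _ _
      linarith
    have hhi : F s x ≤ ρ := by
      have h1 : F s x ≤ M₁ * Real.exp (C₁ * T) - c := by linarith
      have h2 : M₁ * Real.exp (C₁ * T) ≤ ρ := le_max_left _ _
      linarith
    exact abs_le.mpr ⟨hlo, hhi⟩
  obtain ⟨r₀, hr₀⟩ := (hF1 ρ hρpos).subset_closedBall 0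
  set Cu : ℝ := max r₀ 0 with hCu
  have hCunn : 0 ≤ Cu := le_max_right _ _
  have hubound : ∀ ε, 0 < ε → ∀ t ∈ Icc (0 : ℝ) T, ‖u ε t‖ ≤ Cu := by
    intro ε hε t ht
    have := hr₀ (hsub ε hε t ht)
    rw [Metric.mem_closedBall, dist_zero_right] at this
    exact le_trans this (le_max_left _ _)
  -- (ii) bound on ε u'
  set Cv : ℝ := Real.sqrt (2 * M₁ / cA) with hCv
  have hCvnn : 0 ≤ Cv := Real.sqrt_nonneg _
  have hvbound : ∀ ε, 0 < ε → ∀ t ∈ Icc (0 : ℝ) T, ε * ‖u' ε t‖ ≤ Cv := by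
    intro ε hε t ht
    have hkin : ε ^ 2 * ⟪u' ε t, A (u' ε t)⟫ ≤ 2 * M₁ := by
      have h1 := hEnC ε hε t ht
      have h2 := hFlow t ht (u ε t)
      simp only [hEn] at h1
      linarith
    have hco := hcoA (u' ε t)
    have hsq : (ε * ‖u' ε t‖) ^ 2 ≤ 2 * M₁ / cA := by
      rw [le_div_iff₀ hcA]
      calc (ε * ‖u' ε t‖) ^ 2 * cA = ε ^ 2 * (cA * ‖u' ε t‖ ^ 2) := by ring
        _ ≤ ε ^ 2 * ⟪u' ε t, A (u' ε t)⟫ :=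
            mul_le_mul_of_nonneg_left hco (by positivity)
        _ ≤ 2 * M₁ := hkin
    rw [hCv]
    rw [show ε * ‖u' ε t‖ = √((ε * ‖u' ε t‖)^2) from (Real.sqrt_sq (by positivity)).symm]
    exact Real.sqrt_le_sqrt hsq
  -- gradient bound along solutions
  obtain ⟨Mg, hMg⟩ := (isCompact_Icc.prod (isCompact_closedBall (0 : X) Cu)).exists_bound_of_continuousOn
    (hgradc.mono (prod_mono_right (subset_univ _)))
  -- (iii) bound on ε² u''
  have hAlow : ∀ z : X, cA * ‖z‖ ≤ ‖A z‖ := aux_op_lower A cA hcoA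
  set Cw : ℝ := (‖B‖ * Cv + Mg) / cA with hCw
  have hwbound : ∀ ε, 0 < ε → ∀ t ∈ Icc (0 : ℝ) T, ε ^ 2 * ‖u'' ε t‖ ≤ Cw := by
    intro ε hε t ht
    have hv : ε ^ 2 • A (u'' ε t) = -(ε • B (u' ε t) + gradF t (u ε t)) := by
      apply eq_neg_of_add_eq_zero_left
      rw [← add_assoc]
      exact hode ε hε t ht
    have hnorm : ‖ε ^ 2 • A (u'' ε t)‖ ≤ ‖B‖ * Cv + Mg := by
      rw [hv, norm_neg]
      have hb : ‖ε • B (u' ε t)‖ ≤ ‖B‖ * Cv := by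
        rw [norm_smul, Real.norm_eq_abs, abs_of_pos hε]
        calc ε * ‖B (u' ε t)‖ ≤ ε * (‖B‖ * ‖u' ε t‖) :=
              mul_le_mul_of_nonneg_left (B.le_opNorm _) hε.le
          _ = ‖B‖ * (ε * ‖u' ε t‖) := by ring
          _ ≤ ‖B‖ * Cv := mul_le_mul_of_nonneg_left (hvbound ε hε t ht) (norm_nonneg _)
      have hg : ‖gradF t (u ε t)‖ ≤ Mg := by
        have := hMg (t, u ε t) ⟨ht, mem_closedBall_zero_iff.mpr (hubound ε hε t ht)⟩
        simpa using this
      calc ‖ε • B (u' ε t) + gradF t (u ε t)‖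
          ≤ ‖ε • B (u' ε t)‖ + ‖gradF t (u ε t)‖ := norm_add_le _ _
        _ ≤ ‖B‖ * Cv + Mg := add_le_add hb hg
    have hlow : cA * (ε ^ 2 * ‖u'' ε t‖) ≤ ‖ε ^ 2 • A (u'' ε t)‖ := by
      have h1 := hAlow (ε ^ 2 • u'' ε t)
      rw [_root_.map_smul] at h1
      simp only [norm_smul, Real.norm_eq_abs, abs_of_nonneg (sq_nonneg ε)] at h1 ⊢
      linarith [h1]
    rw [hCw, le_div_iff₀ hcA]
    calc ε ^ 2 * ‖u'' ε t‖ * cA = cA * (ε ^ 2 * ‖u'' ε t‖) := by ring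
      _ ≤ ‖ε ^ 2 • A (u'' ε t)‖ := hlow
      _ ≤ ‖B‖ * Cv + Mg := hnorm
  -- (iv) bound on the dissipation integral
  set M₄ : ℝ := C₁ * M₁ * T + M₀ + c with hM₄
  set Cq : ℝ := M₄ / cB with hCq
  have hqbound : ∀ ε, 0 < ε → ε * (∫ r in (0 : ℝ)..T, ‖u' ε r‖ ^ 2) ≤ Cq := by
    intro ε hε
    have hu'c : ContinuousOn (u' ε) (Icc (0 : ℝ) T) :=
      fun t ht => (hu'' ε hε t ht).continuousWithinAt
    have huc : ContinuousOn (u ε) (Icc (0 : ℝ) T) :=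
      fun t ht => (hu' ε hε t ht).continuousWithinAt
    have hdtuc : ContinuousOn (fun r => dtF r (u ε r)) (Icc (0 : ℝ) T) := by
      have := hdtc.comp (continuousOn_id.prodMk huc) (fun t ht => hmemS t ht (u ε t))
      exact this
    have hBuc : ContinuousOn (fun r => ε * ⟪B (u' ε r), u' ε r⟫) (Icc (0 : ℝ) T) :=
      continuousOn_const.mul ((B.continuous.comp_continuousOn hu'c).inner hu'c)
    have hEn'c : ContinuousOn (En' ε) (Icc (0 : ℝ) T) := by
      simp only [hEn']
      exact hBuc.neg.add hdtuc
    have hEnc : ContinuousOn (En ε) (Icc (0 : ℝ) T) :=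
      fun t ht => (hderivEn ε hε t ht).continuousWithinAt
    have hEn'int : IntervalIntegrable (En' ε) volume 0 T :=
      (hEn'c.mono (by rw [uIcc_of_le hT.le])).intervalIntegrable
    have hdtint : IntervalIntegrable (fun r => dtF r (u ε r)) volume 0 T :=
      (hdtuc.mono (by rw [uIcc_of_le hT.le])).intervalIntegrable
    have hBint : IntervalIntegrable (fun r => ε * ⟪B (u' ε r), u' ε r⟫) volume 0 T :=
      (hBuc.mono (by rw [uIcc_of_le hT.le])).intervalIntegrable
    have hn2int : IntervalIntegrable (fun r => ε * cB * ‖u' ε r‖ ^ 2) volume 0 T := by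
      apply ContinuousOn.intervalIntegrable
      rw [uIcc_of_le hT.le]
      exact continuousOn_const.mul ((hu'c.norm).pow 2)
    have hFTC : ∫ r in (0 : ℝ)..T, En' ε r = En ε T - En ε 0 :=
      intervalIntegral.integral_eq_sub_of_hasDeriv_right_of_le hT.le hEnc
        (fun x hx => ((hderivEn ε hε x (Ioo_subset_Icc_self hx)).hasDerivAt
          (Icc_mem_nhds hx.1 hx.2)).hasDerivWithinAt)
        hEn'int
    have hIeq : ∫ r in (0 : ℝ)..T, ε * ⟪B (u' ε r), u' ε r⟫
        = (∫ r in (0 : ℝ)..T, dtF r (u ε r)) - (En ε T - En ε 0) := by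
      rw [← hFTC, ← intervalIntegral.integral_sub hdtint hEn'int]
      apply intervalIntegral.integral_congr
      intro r _
      simp only [hEn']
      ring
    have hdtub : (∫ r in (0 : ℝ)..T, dtF r (u ε r)) ≤ C₁ * M₁ * T := by
      have hptw : ∀ r ∈ Icc (0 : ℝ) T, dtF r (u ε r) ≤ C₁ * M₁ := by
        intro r hr
        have h1 := hF2 r hr (u ε r)
        have h2 := hFub ε hε r hr
        have habs := le_abs_self (dtF r (u ε r))
        linarith [hcc, mul_le_mul_of_nonneg_left (show F r (u ε r) ≤ M₁ - c by linarith) hC₁.le]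
      calc (∫ r in (0 : ℝ)..T, dtF r (u ε r))
          ≤ ∫ _ in (0 : ℝ)..T, C₁ * M₁ :=
            intervalIntegral.integral_mono_on hT.le hdtint intervalIntegrable_const hptw
        _ = C₁ * M₁ * T := by
            rw [intervalIntegral.integral_const]
            simp [mul_comm]
    have hETlow : -c ≤ En ε T := by
      have h1 := hFlow T hIccT (u ε T)
      have hk : 0 ≤ ε ^ 2 / 2 * ⟪u' ε T, A (u' ε T)⟫ :=
        mul_nonneg (by positivity) (hAnn _)
      simp only [hEn]
      linarith
    have hIub : (∫ r in (0 : ℝ)..T, ε * ⟪B (u' ε r), u' ε r⟫) ≤ M₄ := by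
      rw [hIeq, hM₄]
      have := hE0 ε hε
      linarith [hdtub, hETlow]
    have hmono2 : (∫ r in (0 : ℝ)..T, ε * cB * ‖u' ε r‖ ^ 2)
        ≤ ∫ r in (0 : ℝ)..T, ε * ⟪B (u' ε r), u' ε r⟫ := by
      apply intervalIntegral.integral_mono_on hT.le hn2int hBint
      intro r hr
      have := hcoB' (u' ε r)
      calc ε * cB * ‖u' ε r‖ ^ 2 = ε * (cB * ‖u' ε r‖ ^ 2) := by ring
        _ ≤ ε * ⟪B (u' ε r), u' ε r⟫ := mul_le_mul_of_nonneg_left this hε.le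
    have hpull : (∫ r in (0 : ℝ)..T, ε * cB * ‖u' ε r‖ ^ 2)
        = ε * cB * ∫ r in (0 : ℝ)..T, ‖u' ε r‖ ^ 2 := by
      rw [← intervalIntegral.integral_const_mul]
    rw [hCq, le_div_iff₀ hcB]
    calc ε * (∫ r in (0 : ℝ)..T, ‖u' ε r‖ ^ 2) * cB
        = ε * cB * ∫ r in (0 : ℝ)..T, ‖u' ε r‖ ^ 2 := by ring
      _ = ∫ r in (0 : ℝ)..T, ε * cB * ‖u' ε r‖ ^ 2 := hpull.symm
      _ ≤ ∫ r in (0 : ℝ)..T, ε * ⟪B (u' ε r), u' ε r⟫ := hmono2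
      _ ≤ M₄ := hIub
  -- conclusion
  refine ⟨max (max Cu Cv) (max Cw Cq) + 1, ?_, ?_⟩
  · have h1 : Cu ≤ max (max Cu Cv) (max Cw Cq) :=
      le_trans (le_max_left _ _) (le_max_left _ _)
    linarith [hCunn]
  · intro ε hε t ht
    have h1 : Cu ≤ max (max Cu Cv) (max Cw Cq) :=
      le_trans (le_max_left _ _) (le_max_left _ _)
    have h2 : Cv ≤ max (max Cu Cv) (max Cw Cq) :=
      le_trans (le_max_right _ _) (le_max_left _ _)
    have h3 : Cw ≤ max (max Cu Cv) (max Cw Cq) :=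
      le_trans (le_max_left _ _) (le_max_right _ _)
    have h4 : Cq ≤ max (max Cu Cv) (max Cw Cq) :=
      le_trans (le_max_right _ _) (le_max_right _ _)
    exact ⟨by linarith [hubound ε hε t ht],
      by linarith [hvbound ε hε t ht],
      by linarith [hwbound ε hε t ht],
      by linarith [hqbound ε hε]⟩
end

section
/- Assume (F0)-(F3) and (F5). Let t ∈ [0,T], let u₁, u₂ ∈ X with u₁ ≠ u₂, and let s_k, t_k be sequences with 0 ≤ s_k ≤ t_k ≤ T for every k, s_k → t and t_k → t as k → ∞. Let v_k : [s_k, t_k] → X be C¹ curves with v_k(t_k) → u₁ and v_k(s_k) → u₂ as k → ∞, and suppose there exists M > 0 with ‖v_k(r)‖ ≤ M for every r ∈ [s_k, t_k] and every k. Then there exist δ > 0 (depending only on t, M, u₁, u₂) and k₀ ∈ ℕ such that ∫_{s_k}^{t_k} ‖∇ₓF(r, v_k(r))‖ ‖v̇_k(r)‖ dr > δ for every k ≥ k₀. -/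
open Set Filter Topology MeasureTheory
open scoped RealInnerProductSpace

theorem gradF_jointCont' {X : Type*} [NormedAddCommGroup X] [InnerProductSpace ℝ X]
    [CompleteSpace X]
    (T : ℝ) (hT : 0 < T) (F : ℝ → X → ℝ) (gradF : ℝ → X → X)
    (hF0 : ContDiffOn ℝ 1 (fun p : ℝ × X => F p.1 p.2) (Set.Icc 0 T ×ˢ Set.univ))
    (hgradF : ∀ t ∈ Set.Icc 0 T, ∀ x : X, HasGradientAt (F t) (gradF t x) x) :
    ContinuousOn (fun p : ℝ × X => gradF p.1 p.2) (Set.Icc 0 T ×ˢ Set.univ) := by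
  set S : Set (ℝ × X) := Set.Icc 0 T ×ˢ Set.univ with hSdef
  have hS : UniqueDiffOn ℝ S := (uniqueDiffOn_Icc hT).prod uniqueDiffOn_univ
  have hfd : ContinuousOn (fderivWithin ℝ (fun p : ℝ × X => F p.1 p.2) S) S :=
    hF0.continuousOn_fderivWithin hS le_rfl
  have key : ∀ p ∈ S, gradF p.1 p.2 =
      (InnerProductSpace.toDual ℝ X).symm
        ((fderivWithin ℝ (fun p : ℝ × X => F p.1 p.2) S p).comp
          (ContinuousLinearMap.inr ℝ ℝ X)) := by
    rintro ⟨r, x⟩ hp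
    have hdiff : DifferentiableWithinAt ℝ (fun p : ℝ × X => F p.1 p.2) S (r, x) :=
      (hF0.differentiableOn one_ne_zero) _ hp
    have h1 := hdiff.hasFDerivWithinAt
    have hg : HasFDerivAt (fun y : X => ((r, y) : ℝ × X))
        (ContinuousLinearMap.inr ℝ ℝ X) x := by
      exact HasFDerivAt.prodMk (hasFDerivAt_const r x) (hasFDerivAt_id x) |>.congr_fderiv (by ext y <;> simp)
    have h2 : HasFDerivAt (fun y => F r y)
        ((fderivWithin ℝ (fun p : ℝ × X => F p.1 p.2) S (r, x)).comp
          (ContinuousLinearMap.inr ℝ ℝ X)) x := by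
      have := h1.comp x (hg.hasFDerivWithinAt (s := Set.univ)) (fun y _ => ⟨hp.1, trivial⟩)
      simpa [hasFDerivWithinAt_univ, Function.comp_def] using this
    have hu := ((hgradF r hp.1 x).hasFDerivAt.unique h2)
    simp only [← hu, LinearIsometryEquiv.symm_apply_apply]
  refine ContinuousOn.congr ?_ key
  refine (InnerProductSpace.toDual ℝ X).symm.continuous.comp_continuousOn ?_
  exact (((ContinuousLinearMap.compL ℝ X (ℝ × X) ℝ).flip
    (ContinuousLinearMap.inr ℝ ℝ X)).continuous).comp_continuousOn hfd

theorem crossing_exists' {g : ℝ → ℝ} {p q r₁ r₂ : ℝ} (hpq : p ≤ q)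
    (hg : ContinuousOn g (Icc p q)) (hgp : g p < r₁) (h12 : r₁ < r₂) (hgq : r₂ < g q) :
    ∃ a b, p ≤ a ∧ a < b ∧ b ≤ q ∧ g a = r₁ ∧ g b = r₂ ∧
      ∀ τ ∈ Icc a b, r₁ ≤ g τ ∧ g τ ≤ r₂ := by
  set B : Set ℝ := Icc p q ∩ g ⁻¹' (Ici r₂) with hBdef
  have hBclosed : IsClosed B := hg.preimage_isClosed_of_isClosed isClosed_Icc isClosed_Ici
  have hBne : B.Nonempty := ⟨q, ⟨right_mem_Icc.2 hpq, hgq.le⟩⟩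
  have hBbdd : BddBelow B := ⟨p, fun τ hτ => hτ.1.1⟩
  set b := sInf B with hbdef
  have hbB : b ∈ B := hBclosed.csInf_mem hBne hBbdd
  have hblt : ∀ τ ∈ Icc p q, τ < b → g τ < r₂ := by
    intro τ hτ hltb
    by_contra hge
    exact (csInf_le hBbdd ⟨hτ, le_of_not_gt hge⟩).not_gt hltb
  have hpb : p < b := by
    rcases lt_or_eq_of_le hbB.1.1 with h | h
    · exact h
    · exfalso; have h2 : r₂ ≤ g b := hbB.2; rw [← h] at h2; linarith
  have hgb_le : g b ≤ r₂ := by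
    have cw : ContinuousWithinAt g (Ico p b) b :=
      (hg b hbB.1).mono (fun τ hτ => ⟨hτ.1, hτ.2.le.trans hbB.1.2⟩)
    have hne : (𝓝[Ico p b] b).NeBot := by
      rw [← mem_closure_iff_nhdsWithin_neBot, closure_Ico hpb.ne]
      exact right_mem_Icc.2 hpb.le
    refine le_of_tendsto cw ?_
    filter_upwards [eventually_mem_nhdsWithin] with τ hτ
    exact (hblt τ ⟨hτ.1, hτ.2.le.trans hbB.1.2⟩ hτ.2).le
  have hgb : g b = r₂ := le_antisymm hgb_le hbB.2
  set A : Set ℝ := Icc p b ∩ g ⁻¹' (Iic r₁) with hAdef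
  have hsub : Icc p b ⊆ Icc p q := Icc_subset_Icc le_rfl hbB.1.2
  have hAclosed : IsClosed A :=
    (hg.mono hsub).preimage_isClosed_of_isClosed isClosed_Icc isClosed_Iic
  have hAne : A.Nonempty := ⟨p, ⟨left_mem_Icc.2 hpb.le, hgp.le⟩⟩
  have hAbdd : BddAbove A := ⟨b, fun τ hτ => hτ.1.2⟩
  set a := sSup A with hadef
  have haA : a ∈ A := hAclosed.csSup_mem hAne hAbdd
  have hagt : ∀ τ ∈ Icc p b, a < τ → r₁ < g τ := by
    intro τ hτ hlt
    by_contra hle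
    exact (le_csSup hAbdd ⟨hτ, le_of_not_gt hle⟩).not_gt hlt
  have hab : a < b := by
    rcases lt_or_eq_of_le haA.1.2 with h | h
    · exact h
    · exfalso; have h2 : g a ≤ r₁ := haA.2; rw [h, hgb] at h2; linarith
  have hga : g a = r₁ := by
    refine le_antisymm haA.2 ?_
    have cw : ContinuousWithinAt g (Ioc a b) a :=
      (hg a (hsub haA.1)).mono (fun τ hτ => ⟨(haA.1.1.trans hτ.1.le), hτ.2.trans hbB.1.2⟩)
    have hne : (𝓝[Ioc a b] a).NeBot := by
      rw [← mem_closure_iff_nhdsWithin_neBot, closure_Ioc hab.ne]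
      exact left_mem_Icc.2 hab.le
    refine ge_of_tendsto cw ?_
    filter_upwards [eventually_mem_nhdsWithin] with τ hτ
    exact (hagt τ ⟨haA.1.1.trans hτ.1.le, hτ.2⟩ hτ.1).le
  refine ⟨a, b, haA.1.1, hab, hbB.1.2, hga, hgb, ?_⟩
  intro τ hτ
  constructor
  · rcases eq_or_lt_of_le hτ.1 with h | h
    · rw [← h, hga]
    · exact (hagt τ ⟨haA.1.1.trans hτ.1, hτ.2⟩ h).le
  · rcases eq_or_lt_of_le hτ.2 with h | h
    · rw [h, hgb]
    · exact (hblt τ ⟨haA.1.1.trans hτ.1, hτ.2.trans hbB.1.2⟩ h).le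

/-- Curves shrinking to a point with distinct limit endpoints dissipate a definite amount
of energy: the dissipation integrals are bounded away from zero. -/
theorem dissipation_bounded_below
    {X : Type*} [NormedAddCommGroup X] [InnerProductSpace ℝ X] [FiniteDimensional ℝ X]
    (T : ℝ) (hT : 0 < T)
    (F dtF : ℝ → X → ℝ) (gradF : ℝ → X → X)
    -- (F0)
    (hF0 : ContDiffOn ℝ 1 (fun p : ℝ × X => F p.1 p.2) (Set.Icc 0 T ×ˢ Set.univ))
    (hgradF : ∀ t ∈ Set.Icc 0 T, ∀ x : X, HasGradientAt (F t) (gradF t x) x)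
    (hdtF : ∀ x : X, ∀ t ∈ Set.Icc 0 T,
      HasDerivWithinAt (fun τ => F τ x) (dtF t x) (Set.Icc 0 T) t)
    -- (F1)
    (hF1 : ∀ ρ > (0 : ℝ), Bornology.IsBounded {x : X | ∀ t ∈ Set.Icc 0 T, |F t x| ≤ ρ})
    -- (F2)
    (C₁ C₂ : ℝ) (hC₁ : 0 < C₁) (hC₂ : 0 < C₂)
    (hF2 : ∀ t ∈ Set.Icc 0 T, ∀ x : X, |dtF t x| ≤ C₁ * F t x + C₂)
    -- (F3)
    (dtgradF : ℝ → X → X)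
    (hdtgradF : ∀ x : X, ∀ t ∈ Set.Icc 0 T,
      HasDerivWithinAt (fun τ => gradF τ x) (dtgradF t x) (Set.Icc 0 T) t)
    (hF3 : ∀ M > (0 : ℝ), ∃ a : ℝ → ℝ, MeasureTheory.IntegrableOn a (Set.Icc 0 T) ∧
      ∀ t ∈ Set.Icc 0 T, ∀ x : X, ‖x‖ ≤ M → ‖dtgradF t x‖ ≤ a t)
    -- (F5): critical points are isolated
    (hF5 : ∀ t ∈ Set.Icc 0 T, ∀ x : X, gradF t x = 0 →
      ∃ r > (0 : ℝ), ∀ y : X, gradF t y = 0 → y ∈ Metric.ball x r → y = x)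
    -- data of the proposition
    (t : ℝ) (ht : t ∈ Set.Icc 0 T)
    (u₁ u₂ : X) (hu12 : u₁ ≠ u₂)
    (s k_t : ℕ → ℝ)
    (hsk : ∀ k : ℕ, 0 ≤ s k ∧ s k ≤ k_t k ∧ k_t k ≤ T)
    (hs : Filter.Tendsto s Filter.atTop (𝓝 t))
    (htk : Filter.Tendsto k_t Filter.atTop (𝓝 t))
    -- the C¹ curves v_k with derivatives v'_k
    (v v' : ℕ → ℝ → X)
    (hv' : ∀ k : ℕ, ∀ r ∈ Set.Icc (s k) (k_t k),
      HasDerivWithinAt (v k) (v' k r) (Set.Icc (s k) (k_t k)) r)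
    (hv'c : ∀ k : ℕ, ContinuousOn (v' k) (Set.Icc (s k) (k_t k)))
    (hv1 : Filter.Tendsto (fun k => v k (k_t k)) Filter.atTop (𝓝 u₁))
    (hv2 : Filter.Tendsto (fun k => v k (s k)) Filter.atTop (𝓝 u₂))
    (M : ℝ) (hM : 0 < M)
    (hbound : ∀ k : ℕ, ∀ r ∈ Set.Icc (s k) (k_t k), ‖v k r‖ ≤ M) :
    ∃ δ > (0 : ℝ), ∃ k₀ : ℕ, ∀ k ≥ k₀,
      δ < ∫ r in (s k)..(k_t k), ‖gradF r (v k r)‖ * ‖v' k r‖ := by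
  have hjc := gradF_jointCont' T hT F gradF hF0 hgradF
  have hslice : ∀ r ∈ Set.Icc 0 T, Continuous fun x : X => gradF r x := by
    intro r hr
    have hc : ContinuousOn ((fun p : ℝ × X => gradF p.1 p.2) ∘ fun x : X => (r, x))
        Set.univ :=
      hjc.comp (Continuous.continuousOn (by continuity)) (fun x _ => ⟨hr, trivial⟩)
    rw [← continuousOn_univ]
    exact hc
  have hd : (0:ℝ) < ‖u₁ - u₂‖ := by rw [norm_pos_iff]; exact sub_ne_zero.2 hu12
  obtain ⟨r₁, r₂, hr₁pos, hr12, hr₂d, hann⟩ :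
      ∃ r₁ r₂ : ℝ, 0 < r₁ ∧ r₁ < r₂ ∧ r₂ < ‖u₁ - u₂‖ ∧
        ∀ x : X, r₁ ≤ ‖x - u₂‖ → ‖x - u₂‖ ≤ r₂ → gradF t x ≠ 0 := by
    have hex : ∃ r > (0:ℝ), ∀ y : X, gradF t y = 0 → y ∈ Metric.ball u₂ r → y = u₂ := by
      by_cases h0 : gradF t u₂ = 0
      · exact hF5 t ht u₂ h0
      · have hop : IsOpen {x : X | gradF t x ≠ 0} :=
          isOpen_compl_singleton.preimage (hslice t ht)
        obtain ⟨r, hr, hball⟩ := Metric.isOpen_iff.1 hop u₂ h0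
        exact ⟨r, hr, fun y hy hyb => absurd hy (hball hyb)⟩
    obtain ⟨r, hr, hiso⟩ := hex
    have hρ : 0 < min (r/2) (‖u₁ - u₂‖/2) := lt_min (by positivity) (by positivity)
    refine ⟨min (r/2) (‖u₁ - u₂‖/2) / 2, min (r/2) (‖u₁ - u₂‖/2), by positivity,
      half_lt_self hρ, lt_of_le_of_lt (min_le_right _ _) (half_lt_self hd), ?_⟩
    intro x hx1 hx2 hx0
    have hxball : x ∈ Metric.ball u₂ r := by
      rw [Metric.mem_ball, dist_eq_norm]
      have := min_le_left (r/2) (‖u₁ - u₂‖/2)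
      linarith
    have hxu := hiso x hx0 hxball
    rw [hxu] at hx1
    simp at hx1
    linarith
  set K : Set X := Metric.closedBall u₂ r₂ \ Metric.ball u₂ r₁ with hKdef
  have hKmem : ∀ x : X, x ∈ K ↔ ‖x - u₂‖ ≤ r₂ ∧ r₁ ≤ ‖x - u₂‖ := by
    intro x
    simp [hKdef, Metric.mem_closedBall, Metric.mem_ball, dist_eq_norm, not_lt]
  have hKcompact : IsCompact K := (isCompact_closedBall u₂ r₂).diff Metric.isOpen_ball
  have hKne : K.Nonempty := by
    refine ⟨u₂ + (r₁ / ‖u₁ - u₂‖) • (u₁ - u₂), (hKmem _).2 ?_⟩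
    have hnorm : ‖u₂ + (r₁ / ‖u₁ - u₂‖) • (u₁ - u₂) - u₂‖ = r₁ := by
      rw [add_sub_cancel_left, norm_smul, Real.norm_eq_abs,
        abs_of_nonneg (by positivity), div_mul_cancel₀ _ hd.ne']
    rw [hnorm]
    exact ⟨hr12.le, le_rfl⟩
  obtain ⟨x₀, hx₀K, hx₀min⟩ :=
    hKcompact.exists_isMinOn hKne ((hslice t ht).norm.continuousOn)
  set ε := ‖gradF t x₀‖ with hεdef
  have hε : 0 < ε := by
    rw [hεdef, norm_pos_iff]
    have := (hKmem x₀).1 hx₀K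
    exact hann x₀ this.2 this.1
  have hεK : ∀ x ∈ K, ε ≤ ‖gradF t x‖ := fun x hx => hx₀min hx
  obtain ⟨η, hη, hunif⟩ :
      ∃ η > (0:ℝ), ∀ r ∈ Set.Icc 0 T, |r - t| < η → ∀ x ∈ K, ε / 2 < ‖gradF r x‖ := by
    by_contra hcon
    push_neg at hcon
    choose r hrIcc hrt x hxK hxle using fun n : ℕ =>
      hcon (1/(n+1)) (by positivity)
    obtain ⟨xl, hxlK, φ, hφ, hxconv⟩ := hKcompact.tendsto_subseq hxK
    have habs : Filter.Tendsto (fun n : ℕ => |r n - t|) Filter.atTop (𝓝 0) :=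
      squeeze_zero (fun n => abs_nonneg _) (fun n => (hrt n).le)
        tendsto_one_div_add_atTop_nhds_zero_nat
    have hrconv : Filter.Tendsto (fun n => r n) Filter.atTop (𝓝 t) := by
      rw [tendsto_iff_dist_tendsto_zero]
      simpa [Real.dist_eq] using habs
    have hseq : Filter.Tendsto (fun n => ((r (φ n), x (φ n)) : ℝ × X)) Filter.atTop
        (𝓝[Set.Icc 0 T ×ˢ Set.univ] (t, xl)) := by
      rw [tendsto_nhdsWithin_iff]
      exact ⟨((hrconv.comp hφ.tendsto_atTop).prodMk_nhds hxconv),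
        Filter.Eventually.of_forall fun n => ⟨hrIcc (φ n), trivial⟩⟩
    have hlim : Filter.Tendsto (fun n => ‖gradF (r (φ n)) (x (φ n))‖) Filter.atTop
        (𝓝 ‖gradF t xl‖) := ((hjc (t, xl) ⟨ht, trivial⟩).tendsto.comp hseq).norm
    have hle : ‖gradF t xl‖ ≤ ε / 2 :=
      le_of_tendsto hlim (Filter.Eventually.of_forall fun n => hxle (φ n))
    have := hεK xl hxlK
    linarith
  have hE1 : ∀ᶠ k in Filter.atTop, ‖v k (s k) - u₂‖ < r₁ := by
    filter_upwards [hv2 (Metric.ball_mem_nhds u₂ hr₁pos)] with k hk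
    simpa [Metric.mem_ball, dist_eq_norm] using hk
  have hE2 : ∀ᶠ k in Filter.atTop, r₂ < ‖v k (k_t k) - u₂‖ := by
    have h1 : Filter.Tendsto (fun k => ‖v k (k_t k) - u₂‖) Filter.atTop (𝓝 ‖u₁ - u₂‖) :=
      (hv1.sub tendsto_const_nhds).norm
    exact h1.eventually (eventually_gt_nhds hr₂d)
  have hE3 : ∀ᶠ k in Filter.atTop, |s k - t| < η := by
    filter_upwards [hs (Metric.ball_mem_nhds t hη)] with k hk
    simpa [Metric.mem_ball, Real.dist_eq] using hk
  have hE4 : ∀ᶠ k in Filter.atTop, |k_t k - t| < η := by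
    filter_upwards [htk (Metric.ball_mem_nhds t hη)] with k hk
    simpa [Metric.mem_ball, Real.dist_eq] using hk
  obtain ⟨k₀, hk₀⟩ := Filter.eventually_atTop.1 (((hE1.and hE2).and (hE3.and hE4)))
  refine ⟨ε/2 * (r₂ - r₁) / 2,
    div_pos (mul_pos (half_pos hε) (sub_pos.2 hr12)) two_pos, k₀, ?_⟩
  intro k hk
  obtain ⟨⟨h1, h2⟩, h3, h4⟩ := hk₀ k hk
  have hsk0 := (hsk k).1
  have hsktk := (hsk k).2.1
  have htkT := (hsk k).2.2
  have hsubT : Set.Icc (s k) (k_t k) ⊆ Set.Icc 0 T := Set.Icc_subset_Icc hsk0 htkT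
  have hvcont : ContinuousOn (v k) (Set.Icc (s k) (k_t k)) :=
    fun τ hτ => (hv' k τ hτ).continuousWithinAt
  have hgcont : ContinuousOn (fun τ => ‖v k τ - u₂‖) (Set.Icc (s k) (k_t k)) :=
    (hvcont.sub continuousOn_const).norm
  obtain ⟨a, b, hpa, hab, hbq, hga, hgb, hbound2⟩ :=
    crossing_exists' hsktk hgcont h1 hr12 h2
  have habsub : Set.Icc a b ⊆ Set.Icc (s k) (k_t k) := Set.Icc_subset_Icc hpa hbq
  have hKv : ∀ τ ∈ Set.Icc a b, v k τ ∈ K := fun τ hτ =>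
    (hKmem _).2 ⟨(hbound2 τ hτ).2, (hbound2 τ hτ).1⟩
  have hgrad_lb : ∀ τ ∈ Set.Icc a b, ε/2 < ‖gradF τ (v k τ)‖ := by
    intro τ hτ
    have h5 := (habsub hτ).1
    have h6 := (habsub hτ).2
    refine hunif τ (hsubT (habsub hτ)) ?_ _ (hKv τ hτ)
    rw [abs_sub_lt_iff] at h3 h4 ⊢
    constructor <;> [linarith [h4.1]; linarith [h3.2]]
  have hFcont : ContinuousOn (fun τ => ‖gradF τ (v k τ)‖ * ‖v' k τ‖)
      (Set.Icc (s k) (k_t k)) := by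
    have hg1 : ContinuousOn (fun τ => gradF τ (v k τ)) (Set.Icc (s k) (k_t k)) :=
      hjc.comp (f := fun τ => (τ, v k τ)) (s := Set.Icc (s k) (k_t k)) (continuousOn_id.prodMk hvcont) (fun τ hτ => ⟨hsubT hτ, trivial⟩)
    exact hg1.norm.mul (hv'c k).norm
  have hIint : IntervalIntegrable (fun τ => ‖gradF τ (v k τ)‖ * ‖v' k τ‖)
      volume (s k) (k_t k) := hFcont.intervalIntegrable_of_Icc hsktk
  have hIab : IntervalIntegrable (fun τ => ‖gradF τ (v k τ)‖ * ‖v' k τ‖) volume a b :=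
    (hFcont.mono habsub).intervalIntegrable_of_Icc hab.le
  have hv'ab : IntervalIntegrable (fun τ => ‖v' k τ‖) volume a b :=
    (((hv'c k).mono habsub).norm).intervalIntegrable_of_Icc hab.le
  have hv'int : IntervalIntegrable (v' k) volume a b :=
    ((hv'c k).mono habsub).intervalIntegrable_of_Icc hab.le
  have hFTC : ∫ τ in a..b, v' k τ = v k b - v k a := by
    refine intervalIntegral.integral_eq_sub_of_hasDeriv_right_of_le hab.le
      (hvcont.mono habsub) ?_ hv'int
    intro τ hτ
    have hmem : τ ∈ Set.Icc (s k) (k_t k) := habsub ⟨hτ.1.le, hτ.2.le⟩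
    exact (hv' k τ hmem).mono_of_mem_nhdsWithin
      (Icc_mem_nhdsGT_of_mem ⟨hmem.1, lt_of_lt_of_le hτ.2 hbq⟩)
  have hlen : r₂ - r₁ ≤ ‖v k b - v k a‖ := by
    have hns : ‖v k b - u₂‖ - ‖v k a - u₂‖ ≤ ‖(v k b - u₂) - (v k a - u₂)‖ :=
      norm_sub_norm_le _ _
    have heq : (v k b - u₂) - (v k a - u₂) = v k b - v k a := by abel
    rw [heq] at hns
    rw [← hga, ← hgb]
    exact hns
  have step2 : ‖v k b - v k a‖ ≤ ∫ τ in a..b, ‖v' k τ‖ := by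
    rw [← hFTC]
    exact intervalIntegral.norm_integral_le_integral_norm hab.le
  have step3 : ε/2 * ∫ τ in a..b, ‖v' k τ‖ ≤
      ∫ τ in a..b, ‖gradF τ (v k τ)‖ * ‖v' k τ‖ := by
    rw [← intervalIntegral.integral_const_mul]
    refine intervalIntegral.integral_mono_on hab.le (hv'ab.const_mul _) hIab ?_
    intro τ hτ
    exact mul_le_mul_of_nonneg_right (hgrad_lb τ hτ).le (norm_nonneg _)
  have step4 : (∫ τ in a..b, ‖gradF τ (v k τ)‖ * ‖v' k τ‖) ≤
      ∫ τ in (s k)..(k_t k), ‖gradF τ (v k τ)‖ * ‖v' k τ‖ :=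
    intervalIntegral.integral_mono_interval hpa hab.le hbq
      (Filter.Eventually.of_forall fun τ => mul_nonneg (norm_nonneg _) (norm_nonneg _))
      hIint
  have hv'nonneg : (0:ℝ) ≤ ∫ τ in a..b, ‖v' k τ‖ :=
    intervalIntegral.integral_nonneg hab.le (fun τ _ => norm_nonneg _)
  have hchain : ε/2 * (r₂ - r₁) ≤
      ∫ τ in (s k)..(k_t k), ‖gradF τ (v k τ)‖ * ‖v' k τ‖ := by
    calc ε/2 * (r₂ - r₁) ≤ ε/2 * ‖v k b - v k a‖ :=
          mul_le_mul_of_nonneg_left hlen (by positivity)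
      _ ≤ ε/2 * ∫ τ in a..b, ‖v' k τ‖ :=
          mul_le_mul_of_nonneg_left step2 (by positivity)
      _ ≤ ∫ τ in a..b, ‖gradF τ (v k τ)‖ * ‖v' k τ‖ := step3
      _ ≤ _ := step4
  have hhalf : ε/2 * (r₂ - r₁) / 2 < ε/2 * (r₂ - r₁) :=
    half_lt_self (mul_pos (half_pos hε) (sub_pos.2 hr12))
  linarith
end

section
/- Assume (F0)-(F6), with (F3') in place of (F3). Let u : [0,T] → X be a regulated function satisfying ∇ₓF(t, u₊(t)) = ∇ₓF(t, u₋(t)) = 0 in X for every t ∈ (0,T] (with u₊(T) := u(T)) and ∇ₓF(t, u(t)) = 0 for every t outside the jump set of u, and define f₊(t) := F(t, u₊(t)) − ∫_0^t ∂_r F(r, u(r)) dr. Then for every t ∈ [0,T) the lower right Dini derivative of f₊ at t is non-negative: liminf_{h↘0} (f₊(t+h) − f₊(t))/h ≥ 0. -/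
open Set Filter Topology MeasureTheory
open scoped RealInnerProductSpace

lemma countable_of_right_separated' {S : Set ℝ}
    (h : ∀ s ∈ S, ∃ δ > (0:ℝ), ∀ τ ∈ Set.Ioo s (s + δ), τ ∉ S) : S.Countable := by
  have h' : ∀ s ∈ S, ∃ q : ℚ, s < (q:ℝ) ∧ ∀ τ ∈ Set.Ioo s ((q:ℝ)), τ ∉ S := by
    intro s hs
    obtain ⟨δ, hδ, hsep⟩ := h s hs
    obtain ⟨q, hq1, hq2⟩ := exists_rat_btwn (lt_add_of_pos_right s hδ)
    exact ⟨q, hq1, fun τ hτ => hsep τ ⟨hτ.1, hτ.2.trans hq2⟩⟩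
  choose! q hq1 hq2 using h'
  have : Set.MapsTo q S (Set.univ : Set ℚ) := fun s _ => trivial
  refine this.countable_of_injOn ?_ Set.countable_univ
  intro s hs s' hs' hqq
  by_contra hne
  rcases lt_or_gt_of_ne hne with hlt | hlt
  · exact hq2 s hs s' ⟨hlt, by rw [hqq]; exact hq1 s' hs'⟩ hs'
  · exact hq2 s' hs' s ⟨hlt, by rw [← hqq]; exact hq1 s hs⟩ hs

lemma countable_of_left_separated' {S : Set ℝ}
    (h : ∀ s ∈ S, ∃ δ > (0:ℝ), ∀ τ ∈ Set.Ioo (s - δ) s, τ ∉ S) : S.Countable := by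
  have : (Neg.neg '' S).Countable := by
    apply countable_of_right_separated'
    rintro x ⟨s, hs, rfl⟩
    obtain ⟨δ, hδ, hsep⟩ := h s hs
    refine ⟨δ, hδ, fun τ hτ hτS => ?_⟩
    obtain ⟨σ, hσ, rfl⟩ := hτS
    exact hsep σ ⟨by linarith [hτ.2], by linarith [hτ.1]⟩ hσ
  have := this.image Neg.neg
  rw [Set.image_image] at this; simpa using this

section AuxLemmas

variable {X : Type*} [NormedAddCommGroup X] [InnerProductSpace ℝ X] [FiniteDimensional ℝ X]

lemma up_right_cont' (T : ℝ) (u up : ℝ → X)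
    (hup : ∀ s ∈ Set.Ico 0 T, Filter.Tendsto u (𝓝[>] s) (𝓝 (up s))) :
    ∀ t ∈ Set.Ico 0 T, Filter.Tendsto up (𝓝[>] t) (𝓝 (up t)) := by
  intro t ht
  rw [Metric.tendsto_nhdsWithin_nhds]
  intro ε hε
  have hev : ∀ᶠ τ in 𝓝[>] t, dist (u τ) (up t) < ε / 2 :=
    (hup t ht) (Metric.ball_mem_nhds _ (by linarith))
  obtain ⟨δ₀, hδ₀, hball⟩ := Metric.nhdsWithin_basis_ball.eventually_iff.mp hev
  refine ⟨min δ₀ (T - t), by simp [hδ₀, ht.2, sub_pos], ?_⟩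
  intro s hs hd
  have hst : t < s := hs
  have hsT : s < T := by
    have := lt_of_abs_lt (by simpa [Real.dist_eq] using lt_of_lt_of_le hd (min_le_right _ _))
    linarith
  have hsd : s < t + δ₀ := by
    have := lt_of_abs_lt (by simpa [Real.dist_eq] using lt_of_lt_of_le hd (min_le_left _ _))
    linarith
  have h0s : s ∈ Set.Ico 0 T := ⟨le_trans ht.1 hst.le, hsT⟩
  have hlim : Filter.Tendsto (fun τ => dist (u τ) (up t)) (𝓝[>] s) (𝓝 (dist (up s) (up t))) :=
    ((hup s h0s).dist tendsto_const_nhds)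
  have hevs : ∀ᶠ τ in 𝓝[>] s, dist (u τ) (up t) ≤ ε / 2 := by
    have h1 : ∀ᶠ τ in 𝓝[>] s, τ < t + δ₀ := eventually_nhdsWithin_of_eventually_nhds
      (Filter.Tendsto.eventually_lt_const hsd tendsto_id)
    filter_upwards [h1, self_mem_nhdsWithin] with τ h1 h2
    exact (hball ⟨(show τ ∈ Metric.ball t δ₀ by
      rw [Metric.mem_ball, Real.dist_eq, abs_lt]
      constructor <;> [linarith [lt_trans hst (show s < τ from h2)]; linarith]), lt_trans hst h2⟩).le
  have := le_of_tendsto hlim hevs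
  calc dist (up s) (up t) ≤ ε / 2 := this
    _ < ε := by linarith

lemma right_disc_countable' (T : ℝ) (u up : ℝ → X)
    (hup : ∀ s ∈ Set.Ico 0 T, Filter.Tendsto u (𝓝[>] s) (𝓝 (up s))) :
    {s ∈ Set.Ico 0 T | u s ≠ up s}.Countable := by
  have hsub : {s ∈ Set.Ico 0 T | u s ≠ up s} ⊆
      ⋃ n : ℕ, {s ∈ Set.Ico 0 T | 1/(n+1 : ℝ) ≤ dist (u s) (up s)} := by
    rintro s ⟨hs, hne⟩
    have : 0 < dist (u s) (up s) := dist_pos.mpr hne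
    obtain ⟨n, hn⟩ := exists_nat_one_div_lt this
    exact Set.mem_iUnion.mpr ⟨n, hs, hn.le⟩
  refine Set.Countable.mono hsub (Set.countable_iUnion fun n => ?_)
  apply countable_of_right_separated'
  rintro s ⟨hs, hds⟩
  set c : ℝ := 1/(3*(n+1 : ℝ)) with hc
  have hcpos : 0 < c := by positivity
  have hev : ∀ᶠ τ in 𝓝[>] s, dist (u τ) (up s) < c :=
    (hup s hs) (Metric.ball_mem_nhds _ hcpos)
  obtain ⟨δ₀, hδ₀, hball⟩ := Metric.nhdsWithin_basis_ball.eventually_iff.mp hev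
  refine ⟨min δ₀ (T - s), lt_min hδ₀ (by linarith [hs.2]), ?_⟩
  rintro τ ⟨hτ1, hτ2⟩ ⟨hτI, hτd⟩
  have hτδ : τ < s + δ₀ := lt_of_lt_of_le hτ2 (by linarith [min_le_left δ₀ (T - s)])
  have h1 : dist (u τ) (up s) < c := hball ⟨by
      rw [Metric.mem_ball, Real.dist_eq, abs_lt]; constructor <;> linarith, hτ1⟩
  have h2 : dist (up τ) (up s) ≤ c := by
    have hlim : Filter.Tendsto (fun σ => dist (u σ) (up s)) (𝓝[>] τ) (𝓝 (dist (up τ) (up s))) :=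
      ((hup τ hτI).dist tendsto_const_nhds)
    refine le_of_tendsto hlim ?_
    have hevσ : ∀ᶠ σ in 𝓝[>] τ, σ < s + δ₀ := eventually_nhdsWithin_of_eventually_nhds
      (Filter.Tendsto.eventually_lt_const hτδ tendsto_id)
    filter_upwards [hevσ, self_mem_nhdsWithin] with σ h1' h2'
    exact (hball ⟨by
      rw [Metric.mem_ball, Real.dist_eq, abs_lt]
      constructor <;> [linarith [lt_trans hτ1 (show τ < σ from h2')]; linarith], lt_trans hτ1 h2'⟩).le
  have : dist (u τ) (up τ) < 1/(n+1:ℝ) := by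
    calc dist (u τ) (up τ) ≤ dist (u τ) (up s) + dist (up s) (up τ) := dist_triangle _ _ _
      _ < c + c := by rw [dist_comm (up s)]; linarith
      _ < 1/(n+1:ℝ) := by
        rw [hc, ← add_div, div_lt_div_iff₀ (by positivity) (by positivity)]
        ring_nf; nlinarith
  linarith

lemma left_disc_countable' (T : ℝ) (u um : ℝ → X)
    (hum : ∀ s ∈ Set.Ioc 0 T, Filter.Tendsto u (𝓝[<] s) (𝓝 (um s))) :
    {s ∈ Set.Ioc 0 T | u s ≠ um s}.Countable := by
  have hsub : {s ∈ Set.Ioc 0 T | u s ≠ um s} ⊆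
      ⋃ n : ℕ, {s ∈ Set.Ioc 0 T | 1/(n+1 : ℝ) ≤ dist (u s) (um s)} := by
    rintro s ⟨hs, hne⟩
    have : 0 < dist (u s) (um s) := dist_pos.mpr hne
    obtain ⟨n, hn⟩ := exists_nat_one_div_lt this
    exact Set.mem_iUnion.mpr ⟨n, hs, hn.le⟩
  refine Set.Countable.mono hsub (Set.countable_iUnion fun n => ?_)
  apply countable_of_left_separated'
  rintro s ⟨hs, hds⟩
  set c : ℝ := 1/(3*(n+1 : ℝ)) with hc
  have hcpos : 0 < c := by positivity
  have hev : ∀ᶠ τ in 𝓝[<] s, dist (u τ) (um s) < c :=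
    (hum s hs) (Metric.ball_mem_nhds _ hcpos)
  obtain ⟨δ₀, hδ₀, hball⟩ := Metric.nhdsWithin_basis_ball.eventually_iff.mp hev
  refine ⟨min δ₀ s, lt_min hδ₀ hs.1, ?_⟩
  rintro τ ⟨hτ1, hτ2⟩ ⟨hτI, hτd⟩
  have hτδ : s - δ₀ < τ := lt_of_le_of_lt (by linarith [min_le_left δ₀ s]) hτ1
  have h1 : dist (u τ) (um s) < c := hball ⟨by
      rw [Metric.mem_ball, Real.dist_eq, abs_lt]; constructor <;> linarith, hτ2⟩
  have h2 : dist (um τ) (um s) ≤ c := by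
    have hlim : Filter.Tendsto (fun σ => dist (u σ) (um s)) (𝓝[<] τ) (𝓝 (dist (um τ) (um s))) :=
      ((hum τ hτI).dist tendsto_const_nhds)
    refine le_of_tendsto hlim ?_
    have hevσ : ∀ᶠ σ in 𝓝[<] τ, s - δ₀ < σ := eventually_nhdsWithin_of_eventually_nhds
      (Filter.Tendsto.eventually_const_lt hτδ tendsto_id)
    filter_upwards [hevσ, self_mem_nhdsWithin] with σ h1' h2'
    exact (hball ⟨by
      rw [Metric.mem_ball, Real.dist_eq, abs_lt]
      constructor <;> [linarith; linarith [lt_trans (show σ < τ from h2') hτ2]], lt_trans h2' hτ2⟩).le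
  have : dist (u τ) (um τ) < 1/(n+1:ℝ) := by
    calc dist (u τ) (um τ) ≤ dist (u τ) (um s) + dist (um s) (um τ) := dist_triangle _ _ _
      _ < c + c := by rw [dist_comm (um s)]; linarith
      _ < 1/(n+1:ℝ) := by
        rw [hc, ← add_div, div_lt_div_iff₀ (by positivity) (by positivity)]
        ring_nf; nlinarith
  linarith

lemma u_bounded' (T : ℝ) (hT : 0 < T) (u up um : ℝ → X)
    (hup : ∀ s ∈ Set.Ico 0 T, Filter.Tendsto u (𝓝[>] s) (𝓝 (up s)))
    (hum : ∀ s ∈ Set.Ioc 0 T, Filter.Tendsto u (𝓝[<] s) (𝓝 (um s))) :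
    ∃ M : ℝ, ∀ s ∈ Set.Icc 0 T, ‖u s‖ ≤ M := by
  have loc : ∀ s ∈ Set.Icc 0 T, ∃ δ > (0:ℝ), ∃ m : ℝ, 0 ≤ m ∧
      ∀ τ ∈ Set.Icc 0 T ∩ Metric.ball s δ, ‖u τ‖ ≤ m := by
    intro s hs
    have hR : ∃ δ > (0:ℝ), ∃ m : ℝ, 0 ≤ m ∧ ∀ τ ∈ Set.Ioo s (s + δ), τ < T → ‖u τ‖ ≤ m := by
      rcases lt_or_ge s T with hsT | hsT
      · have hev : ∀ᶠ τ in 𝓝[>] s, ‖u τ‖ ≤ ‖up s‖ + 1 := by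
          filter_upwards [(hup s ⟨hs.1, hsT⟩) (Metric.ball_mem_nhds _ one_pos)] with τ hτ
          have : ‖u τ - up s‖ < 1 := by simpa [dist_eq_norm] using hτ
          calc ‖u τ‖ ≤ ‖u τ - up s‖ + ‖up s‖ := by
                simpa using norm_add_le (u τ - up s) (up s)
            _ ≤ ‖up s‖ + 1 := by linarith
        obtain ⟨δ₀, hδ₀, hball⟩ := Metric.nhdsWithin_basis_ball.eventually_iff.mp hev
        refine ⟨δ₀, hδ₀, ‖up s‖ + 1, by positivity, fun τ hτ _ => hball ⟨?_, hτ.1⟩⟩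
        rw [Metric.mem_ball, Real.dist_eq, abs_lt]
        constructor <;> [linarith [hτ.1]; linarith [hτ.2]]
      · exact ⟨1, one_pos, 0, le_rfl, fun τ hτ hτT => absurd hτT (by linarith [hτ.1])⟩
    have hL : ∃ δ > (0:ℝ), ∃ m : ℝ, 0 ≤ m ∧ ∀ τ ∈ Set.Ioo (s - δ) s, 0 ≤ τ → ‖u τ‖ ≤ m := by
      rcases lt_or_ge 0 s with hs0 | hs0
      · have hev : ∀ᶠ τ in 𝓝[<] s, ‖u τ‖ ≤ ‖um s‖ + 1 := by
          filter_upwards [(hum s ⟨hs0, hs.2⟩) (Metric.ball_mem_nhds _ one_pos)] with τ hτ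
          have : ‖u τ - um s‖ < 1 := by simpa [dist_eq_norm] using hτ
          calc ‖u τ‖ ≤ ‖u τ - um s‖ + ‖um s‖ := by
                simpa using norm_add_le (u τ - um s) (um s)
            _ ≤ ‖um s‖ + 1 := by linarith
        obtain ⟨δ₀, hδ₀, hball⟩ := Metric.nhdsWithin_basis_ball.eventually_iff.mp hev
        refine ⟨δ₀, hδ₀, ‖um s‖ + 1, by positivity, fun τ hτ _ => hball ⟨?_, hτ.2⟩⟩
        rw [Metric.mem_ball, Real.dist_eq, abs_lt]
        constructor <;> [linarith [hτ.1]; linarith [hτ.2]]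
      · exact ⟨1, one_pos, 0, le_rfl, fun τ hτ hτ0 => absurd hτ0 (by linarith [hτ.2])⟩
    obtain ⟨δ₁, hδ₁, m₁, hm₁, hR⟩ := hR
    obtain ⟨δ₂, hδ₂, m₂, hm₂, hL⟩ := hL
    refine ⟨min δ₁ δ₂, lt_min hδ₁ hδ₂, max (max m₁ m₂) (max ‖u s‖ ‖u T‖),
      le_max_of_le_left (le_max_of_le_left hm₁), ?_⟩
    rintro τ ⟨hτI, hτb⟩
    rw [Metric.mem_ball, Real.dist_eq, abs_lt] at hτb
    rcases lt_trichotomy τ s with h | h | h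
    · exact le_trans (hL τ ⟨by cases hτb; linarith [min_le_right δ₁ δ₂], h⟩ hτI.1)
        (le_max_of_le_left (le_max_right _ _))
    · subst h; exact le_max_of_le_right (le_max_left _ _)
    · rcases lt_or_eq_of_le hτI.2 with hτT | hτT
      · exact le_trans (hR τ ⟨h, by cases hτb; linarith [min_le_left δ₁ δ₂]⟩ hτT)
          (le_max_of_le_left (le_max_left _ _))
      · rw [hτT]; exact le_max_of_le_right (le_max_right _ _)
  choose! δ hδ m hm0 hmb using loc
  obtain ⟨fs, hfs, hcover⟩ := (isCompact_Icc (a := (0:ℝ)) (b := T)).elim_nhds_subcover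
    (fun s => Metric.ball s (δ s)) (fun s hs => Metric.ball_mem_nhds _ (hδ s hs))
  refine ⟨∑ x ∈ fs, m x, fun s hs => ?_⟩
  obtain ⟨x, hxfs, hxball⟩ := Set.mem_iUnion₂.mp (hcover hs)
  calc ‖u s‖ ≤ m x := hmb x (hfs x hxfs) s ⟨hs, hxball⟩
    _ ≤ ∑ y ∈ fs, m y := Finset.single_le_sum (fun y hy => hm0 y (hfs y hy)) hxfs

lemma dtF_cont' (T : ℝ) (hT : 0 < T) (F dtF : ℝ → X → ℝ)
    (hF0 : ContDiffOn ℝ 1 (fun p : ℝ × X => F p.1 p.2) (Set.Icc 0 T ×ˢ Set.univ))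
    (hdtF : ∀ x : X, ∀ t ∈ Set.Icc 0 T,
      HasDerivWithinAt (fun τ => F τ x) (dtF t x) (Set.Icc 0 T) t) :
    ContinuousOn (fun p : ℝ × X => dtF p.1 p.2) (Set.Icc 0 T ×ˢ Set.univ) := by
  have hP : UniqueDiffOn ℝ (Set.Icc 0 T ×ˢ (Set.univ : Set X)) :=
    (uniqueDiffOn_Icc hT).prod uniqueDiffOn_univ
  set P := Set.Icc 0 T ×ˢ (Set.univ : Set X) with hPdef
  set D := fderivWithin ℝ (fun p : ℝ × X => F p.1 p.2) P with hD
  have hDc : ContinuousOn D P := hF0.continuousOn_fderivWithin hP le_rfl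
  have key : ∀ p ∈ P, dtF p.1 p.2 = D p (1, 0) := by
    rintro ⟨t, x⟩ hp
    have htIcc : t ∈ Set.Icc 0 T := hp.1
    have hφ : HasDerivWithinAt (fun τ : ℝ => ((τ, x) : ℝ × X)) ((1:ℝ), (0:X)) (Set.Icc 0 T) t :=
      (hasDerivAt_id t).hasDerivWithinAt.prodMk (hasDerivWithinAt_const _ _ _)
    have hΦ : HasFDerivWithinAt (fun p : ℝ × X => F p.1 p.2) (D (t, x)) P (t, x) :=
      ((hF0.differentiableOn one_ne_zero) (t, x) hp).hasFDerivWithinAt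
    have hcomp := hΦ.comp_hasDerivWithinAt t hφ
      (fun τ hτ => Set.mk_mem_prod hτ (Set.mem_univ x))
    have h1 := (hdtF x t htIcc).derivWithin ((uniqueDiffOn_Icc hT) t htIcc)
    have h2 := HasDerivWithinAt.derivWithin (by simpa using hcomp) ((uniqueDiffOn_Icc hT) t htIcc)
    rw [← h1, ← h2]; rfl
  exact ContinuousOn.congr (hDc.clm_apply continuousOn_const) key

lemma ftc_time' (T : ℝ) (F dtF : ℝ → X → ℝ)
    (hF0 : ContDiffOn ℝ 1 (fun p : ℝ × X => F p.1 p.2) (Set.Icc 0 T ×ˢ Set.univ))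
    (hdtF : ∀ x : X, ∀ t ∈ Set.Icc 0 T,
      HasDerivWithinAt (fun τ => F τ x) (dtF t x) (Set.Icc 0 T) t)
    (hdtFc : ContinuousOn (fun p : ℝ × X => dtF p.1 p.2) (Set.Icc 0 T ×ˢ Set.univ))
    (v : X) (a b : ℝ) (h0a : 0 ≤ a) (hab : a ≤ b) (hbT : b ≤ T) :
    ∫ r in a..b, dtF r v = F b v - F a v := by
  have hsub : Set.Icc a b ⊆ Set.Icc 0 T := Set.Icc_subset_Icc h0a hbT
  have hcont : ContinuousOn (fun τ => F τ v) (Set.Icc a b) := by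
    have : ContinuousOn (fun τ : ℝ => ((τ, v) : ℝ × X)) (Set.Icc a b) :=
      (continuous_id.prodMk continuous_const).continuousOn
    exact hF0.continuousOn.comp this (fun τ hτ => Set.mk_mem_prod (hsub hτ) (Set.mem_univ v))
  have hint : IntervalIntegrable (fun r => dtF r v) MeasureTheory.volume a b := by
    apply ContinuousOn.intervalIntegrable
    rw [Set.uIcc_of_le hab]
    exact hdtFc.comp ((continuous_id.prodMk continuous_const).continuousOn)
      (fun τ hτ => Set.mk_mem_prod (hsub hτ) (Set.mem_univ v))
  refine intervalIntegral.integral_eq_sub_of_hasDeriv_right_of_le hab hcont ?_ hint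
  intro x hx
  have hxT : x ∈ Set.Ioo 0 T := ⟨lt_of_le_of_lt h0a hx.1, lt_of_lt_of_le hx.2 hbT⟩
  have : HasDerivAt (fun τ => F τ v) (dtF x v) x :=
    (hdtF v x (Set.mem_Icc_of_Ioo hxT)).hasDerivAt
      (Filter.mem_of_superset (isOpen_Ioo.mem_nhds hxT) Set.Ioo_subset_Icc_self)
  exact this.hasDerivWithinAt

end AuxLemmas

section Integ

variable {X : Type*} [NormedAddCommGroup X] [InnerProductSpace ℝ X] [FiniteDimensional ℝ X]

set_option linter.unusedVariables false in
lemma g_integrable' (T : ℝ) (hT : 0 < T) (F dtF : ℝ → X → ℝ) (u up um : ℝ → X)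
    (hup : ∀ s ∈ Set.Ico 0 T, Filter.Tendsto u (𝓝[>] s) (𝓝 (up s)))
    (hum : ∀ s ∈ Set.Ioc 0 T, Filter.Tendsto u (𝓝[<] s) (𝓝 (um s)))
    (hdtFc : ContinuousOn (fun p : ℝ × X => dtF p.1 p.2) (Set.Icc 0 T ×ˢ Set.univ))
    (hF0c : ContinuousOn (fun p : ℝ × X => F p.1 p.2) (Set.Icc 0 T ×ˢ Set.univ))
    (M : ℝ) (hM : ∀ s ∈ Set.Icc 0 T, ‖u s‖ ≤ M)
    (C₁ C₂ : ℝ) (hC₁ : 0 < C₁) (hC₂ : 0 < C₂)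
    (hF2 : ∀ t ∈ Set.Icc 0 T, ∀ x : X, |dtF t x| ≤ C₁ * F t x + C₂) :
    MeasureTheory.IntegrableOn (fun r => dtF r (u r)) (Set.Ioc 0 T) MeasureTheory.volume := by
  have hN1 := right_disc_countable' T u up hup
  have hN2 := left_disc_countable' T u um hum
  borelize X
  set N : Set ℝ := {s ∈ Set.Ico 0 T | u s ≠ up s} ∪ {s ∈ Set.Ioc 0 T | u s ≠ um s} with hN
  have hNc : N.Countable := hN1.union hN2
  set S : Set ℝ := Set.Ioo 0 T \ N with hS
  have hSmeas : MeasurableSet S := measurableSet_Ioo.diff hNc.measurableSet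
  have hScont : ContinuousOn u S := by
    rintro s ⟨hsI, hsN⟩
    rw [Set.mem_union, not_or] at hsN
    have h1 : u s = up s := by
      by_contra h; exact hsN.1 ⟨⟨hsI.1.le, hsI.2⟩, h⟩
    have h2 : u s = um s := by
      by_contra h; exact hsN.2 ⟨⟨hsI.1, hsI.2.le⟩, h⟩
    apply ContinuousAt.continuousWithinAt
    rw [ContinuousAt, ← nhdsNE_sup_pure, ← nhdsLT_sup_nhdsGT]
    rw [Filter.tendsto_sup, Filter.tendsto_sup]
    exact ⟨⟨by rw [h2]; exact hum s ⟨hsI.1, hsI.2.le⟩, by rw [h1]; exact hup s ⟨hsI.1.le, hsI.2⟩⟩,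
      tendsto_pure_nhds u s⟩
  obtain ⟨w, hwmeas, hw⟩ := hScont.aemeasurable hSmeas
  have hdiffnull : MeasureTheory.volume (Set.Ioc 0 T \ S) = 0 := by
    apply measure_mono_null (show Set.Ioc 0 T \ S ⊆ N ∪ {T} by
      rintro r ⟨hr1, hr2⟩
      rw [hS, Set.mem_diff, not_and_or, not_not] at hr2
      rcases hr2 with h | h
      · rcases lt_or_eq_of_le hr1.2 with h' | h'
        · exact absurd ⟨hr1.1, h'⟩ h
        · exact Or.inr (by simp [h'])
      · exact Or.inl h)
    exact measure_union_null (hNc.measure_zero _) (by simp)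
  have huw : u =ᵐ[MeasureTheory.volume.restrict (Set.Ioc 0 T)] w := by
    rw [Filter.EventuallyEq, MeasureTheory.ae_iff]
    rw [MeasureTheory.Measure.restrict_apply' measurableSet_Ioc]
    apply measure_mono_null (show {r | ¬ u r = w r} ∩ Set.Ioc 0 T ⊆
        ({r | ¬ u r = w r} ∩ S) ∪ (Set.Ioc 0 T \ S) by
      rintro r ⟨h1, h2⟩
      by_cases hrS : r ∈ S
      · exact Or.inl ⟨h1, hrS⟩
      · exact Or.inr ⟨h2, hrS⟩)
    apply measure_union_null _ hdiffnull
    rw [← MeasureTheory.Measure.restrict_apply' hSmeas]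
    exact hw
  have haes : MeasureTheory.AEStronglyMeasurable (fun r => dtF r (u r))
      (MeasureTheory.volume.restrict (Set.Ioc 0 T)) := by
    set ψ : ℝ → ℝ × X := fun r => (r, w r) with hψ
    have hψmeas : Measurable ψ := measurable_id.prodMk hwmeas
    set μ' := MeasureTheory.volume.restrict (Set.Ioc 0 T) with hμ'
    set P := Set.Icc 0 T ×ˢ (Set.univ : Set X) with hP
    have hPmeas : MeasurableSet P := measurableSet_Icc.prod MeasurableSet.univ
    have hmap : (μ'.map ψ) Pᶜ = 0 := by
      rw [MeasureTheory.Measure.map_apply hψmeas hPmeas.compl]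
      apply measure_mono_null (show ψ ⁻¹' Pᶜ ⊆ (Set.Icc 0 T)ᶜ by
        intro r hr
        simp only [Set.mem_compl_iff, Set.mem_preimage] at hr ⊢
        intro hrI; exact hr (Set.mk_mem_prod hrI (Set.mem_univ _)))
      rw [hμ', MeasureTheory.Measure.restrict_apply' measurableSet_Ioc]
      have hempty : (Set.Icc (0:ℝ) T)ᶜ ∩ Set.Ioc 0 T = ∅ := by
        rw [Set.eq_empty_iff_forall_notMem]
        rintro r ⟨hc, h1, h2⟩
        exact hc ⟨h1.le, h2⟩
      rw [hempty]
      exact measure_empty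
    have hrs : (μ'.map ψ).restrict P = μ'.map ψ :=
      MeasureTheory.Measure.restrict_eq_self_of_ae_mem
        (by rw [MeasureTheory.ae_iff]; exact hmap)
    have hΦ : AEMeasurable (fun p : ℝ × X => dtF p.1 p.2) (μ'.map ψ) := by
      rw [← hrs]; exact hdtFc.aemeasurable hPmeas
    have h1 : AEMeasurable (fun r => dtF r (w r)) μ' :=
      AEMeasurable.comp_aemeasurable hΦ hψmeas.aemeasurable
    have h2 : (fun r => dtF r (u r)) =ᵐ[μ'] (fun r => dtF r (w r)) := by
      filter_upwards [huw] with r hr; rw [hr]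
    exact (h1.congr h2.symm).aestronglyMeasurable
  have hMnn : 0 ≤ M := le_trans (norm_nonneg _) (hM 0 ⟨le_rfl, hT.le⟩)
  obtain ⟨pmax, hpmax, hKmax⟩ := ((isCompact_Icc (a := (0:ℝ)) (b := T)).prod
      (isCompact_closedBall (0:X) M)).exists_isMaxOn
    (Set.Nonempty.prod (Set.nonempty_Icc.mpr hT.le) (Metric.nonempty_closedBall.mpr hMnn))
    (hF0c.mono (Set.prod_mono_right (Set.subset_univ _)))
  set K := F pmax.1 pmax.2 with hK
  have hKmax : ∀ p ∈ Set.Icc (0:ℝ) T ×ˢ Metric.closedBall (0:X) M, F p.1 p.2 ≤ K :=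
    fun p hp => hKmax hp
  apply MeasureTheory.Integrable.mono' (g := fun _ => C₁ * K + C₂)
    ((integrableOn_const_iff (C := C₁ * K + C₂)).mpr (Or.inr (by rw [Real.volume_Ioc]; exact ENNReal.ofReal_lt_top)))
    haes
  apply MeasureTheory.ae_restrict_of_forall_mem measurableSet_Ioc
  intro r hr
  have hrI : r ∈ Set.Icc 0 T := ⟨hr.1.le, hr.2⟩
  have hb : F r (u r) ≤ K := hKmax ((r, u r) : ℝ × X) (Set.mk_mem_prod hrI (by
    simpa [Metric.mem_closedBall, dist_eq_norm] using hM r hrI))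
  calc ‖dtF r (u r)‖ = |dtF r (u r)| := rfl
    _ ≤ C₁ * F r (u r) + C₂ := hF2 r hrI (u r)
    _ ≤ C₁ * K + C₂ := by nlinarith

end Integ

/-- The lower right Dini derivative of `f₊(t) = F(t,u₊(t)) − ∫₀ᵗ ∂ᵣF(r,u(r)) dr` is
non-negative at every `t ∈ [0,T)`. -/
theorem dini_lower_right_derivative_nonneg
    {X : Type*} [NormedAddCommGroup X] [InnerProductSpace ℝ X] [FiniteDimensional ℝ X]
    (T : ℝ) (hT : 0 < T)
    (F dtF : ℝ → X → ℝ) (gradF : ℝ → X → X)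
    -- (F0)
    (hF0 : ContDiffOn ℝ 1 (fun p : ℝ × X => F p.1 p.2) (Set.Icc 0 T ×ˢ Set.univ))
    (hgradF : ∀ t ∈ Set.Icc 0 T, ∀ x : X, HasGradientAt (F t) (gradF t x) x)
    (hdtF : ∀ x : X, ∀ t ∈ Set.Icc 0 T,
      HasDerivWithinAt (fun τ => F τ x) (dtF t x) (Set.Icc 0 T) t)
    -- (F1)
    (hF1 : ∀ ρ > (0 : ℝ), Bornology.IsBounded {x : X | ∀ t ∈ Set.Icc 0 T, |F t x| ≤ ρ})
    -- (F2)
    (C₁ C₂ : ℝ) (hC₁ : 0 < C₁) (hC₂ : 0 < C₂)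
    (hF2 : ∀ t ∈ Set.Icc 0 T, ∀ x : X, |dtF t x| ≤ C₁ * F t x + C₂)
    -- (F3'): t ↦ ∇ₓF(t,u) is Lipschitz on [0,T], locally uniformly in u
    (hF3' : ∀ x₀ : X, ∃ r > (0 : ℝ), ∃ L : ℝ, 0 ≤ L ∧ ∀ x ∈ Metric.ball x₀ r,
      ∀ s ∈ Set.Icc 0 T, ∀ t ∈ Set.Icc 0 T, ‖gradF s x - gradF t x‖ ≤ L * |s - t|)
    -- (F4)
    (hessF : ℝ → X → X →L[ℝ] X)
    (hF4 : ∀ t ∈ Set.Icc 0 T, ContDiff ℝ 2 (F t))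
    (hhessF : ∀ t ∈ Set.Icc 0 T, ∀ x : X, HasFDerivAt (gradF t) (hessF t x) x)
    (hhessFc : ContinuousOn (fun p : ℝ × X => hessF p.1 p.2) (Set.Icc 0 T ×ˢ Set.univ))
    -- (F5)
    (hF5 : ∀ t ∈ Set.Icc 0 T, ∀ x : X, gradF t x = 0 →
      ∃ r > (0 : ℝ), ∀ y : X, gradF t y = 0 → y ∈ Metric.ball x r → y = x)
    -- (F6)
    (hF6 : ∀ t ∈ Set.Icc 0 T, ∀ x : X, gradF t x = 0 →
      0 ≤ Filter.liminf (fun v : X => (((F t v - F t x) / ‖gradF t v‖ : ℝ) : EReal)) (𝓝[≠] x))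
    -- u is regulated, with right limits up and left limits um
    (u up um : ℝ → X)
    (hup : ∀ s ∈ Set.Ico 0 T, Filter.Tendsto u (𝓝[>] s) (𝓝 (up s)))
    (hum : ∀ s ∈ Set.Ioc 0 T, Filter.Tendsto u (𝓝[<] s) (𝓝 (um s)))
    (hupT : up T = u T) (hum0 : um 0 = u 0)
    -- stability of the one-sided limits
    (hstab : ∀ t ∈ Set.Ioc 0 T, gradF t (up t) = 0 ∧ gradF t (um t) = 0)
    -- stationarity outside the jump set of u
    (hstab' : ∀ t ∈ Set.Icc 0 T, (up t = um t ∧ (u t = up t ∨ u t = um t)) →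
      gradF t (u t) = 0)
    -- the function f₊
    (fp : ℝ → ℝ)
    (hfp : ∀ t : ℝ, fp t = F t (up t) - ∫ r in (0 : ℝ)..t, dtF r (u r)) :
    ∀ t ∈ Set.Ico 0 T,
      (0 : EReal) ≤ Filter.liminf
        (fun h : ℝ => (((fp (t + h) - fp t) / h : ℝ) : EReal)) (𝓝[>] 0) := by
  -- preliminary facts
  have hupc := up_right_cont' T u up hup
  have hdtFc := dtF_cont' T hT F dtF hF0 hdtF
  obtain ⟨M, hM⟩ := u_bounded' T hT u up um hup hum
  have hginteg := g_integrable' T hT F dtF u up um hup hum hdtFc hF0.continuousOn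
    M hM C₁ C₂ hC₁ hC₂ hF2
  have hgII : ∀ a b : ℝ, 0 ≤ a → a ≤ b → b ≤ T →
      IntervalIntegrable (fun r => dtF r (u r)) MeasureTheory.volume a b := by
    intro a b h0a hab hbT
    rw [intervalIntegrable_iff_integrableOn_Ioc_of_le hab]
    exact hginteg.mono_set (Set.Ioc_subset_Ioc h0a hbT)
  have hFTC := ftc_time' T F dtF hF0 hdtF hdtFc
  -- criticality of the right limit at every t ∈ [0,T)
  have hcrit : ∀ t ∈ Set.Ico 0 T, gradF t (up t) = 0 := by
    intro t ht
    have htIcc : t ∈ Set.Icc 0 T := ⟨ht.1, ht.2.le⟩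
    obtain ⟨r₁, hr₁, L, hL0, hLip⟩ := hF3' (up t)
    have hgc : ContinuousAt (gradF t) (up t) := (hhessF t htIcc (up t)).continuousAt
    have h1 : Filter.Tendsto (fun s => gradF t (up s)) (𝓝[>] t) (𝓝 (gradF t (up t))) :=
      hgc.tendsto.comp (hupc t ht)
    have h2 : Filter.Tendsto (fun s => gradF s (up s) - gradF t (up s)) (𝓝[>] t) (𝓝 0) := by
      apply squeeze_zero_norm' (a := fun s => L * |s - t|)
      · have hevb : ∀ᶠ s in 𝓝[>] t, up s ∈ Metric.ball (up t) r₁ :=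
          (hupc t ht) (Metric.ball_mem_nhds _ hr₁)
        have hevI : ∀ᶠ s in 𝓝[>] t, s ∈ Set.Ioo t T :=
          Filter.eventually_of_mem (Ioo_mem_nhdsGT_of_mem ⟨le_rfl, ht.2⟩) (fun s hs => hs)
        filter_upwards [hevb, hevI] with s hb hI
        exact hLip (up s) hb s ⟨le_trans ht.1 hI.1.le, hI.2.le⟩ t htIcc
      · have : Filter.Tendsto (fun s : ℝ => L * |s - t|) (𝓝 t) (𝓝 (L * |t - t|)) := by
          apply Filter.Tendsto.const_mul
          exact (continuous_abs.comp (continuous_id.sub continuous_const)).tendsto t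
        simpa using this.mono_left nhdsWithin_le_nhds
    have h3 : Filter.Tendsto (fun s => gradF s (up s)) (𝓝[>] t) (𝓝 (gradF t (up t))) := by
      have := h1.add h2
      simpa using this
    have h4 : Filter.Tendsto (fun s => gradF s (up s)) (𝓝[>] t) (𝓝 (0 : X)) := by
      refine Filter.Tendsto.congr' ?_ (tendsto_const_nhds :
        Filter.Tendsto (fun _ => (0:X)) (𝓝[>] t) (𝓝 (0:X)))
      filter_upwards [Ioo_mem_nhdsGT_of_mem (Set.mem_Ico.mpr ⟨le_rfl, ht.2⟩)] with s hs
      exact ((hstab s ⟨lt_of_le_of_lt ht.1 hs.1, hs.2.le⟩).1).symm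
    exact tendsto_nhds_unique h3 h4
  -- the main estimate
  intro t ht
  set x := up t with hxdef
  have htIcc : t ∈ Set.Icc 0 T := ⟨ht.1, ht.2.le⟩
  have hxcrit : gradF t x = 0 := hcrit t ht
  obtain ⟨r₁, hr₁, L, hL0, hLip⟩ := hF3' x
  obtain ⟨r₂, hr₂, hiso⟩ := hF5 t htIcc x hxcrit
  suffices key : ∀ ε > (0:ℝ), ((-(ε * (L+1)) : ℝ) : EReal) ≤ Filter.liminf
      (fun h : ℝ => (((fp (t + h) - fp t) / h : ℝ) : EReal)) (𝓝[>] 0) by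
    by_contra hcon
    rw [not_le] at hcon
    obtain ⟨y, hy1, hy2⟩ := EReal.lt_iff_exists_real_btwn.mp hcon
    have hy0 : y < 0 := by exact_mod_cast hy2
    have hL1 : (0:ℝ) < L + 1 := by linarith
    have := key (-y / (L+1)) (div_pos (by linarith) hL1)
    rw [show -((-y/(L+1)) * (L+1)) = y by field_simp] at this
    exact absurd (lt_of_le_of_lt this hy1) (lt_irrefl _)
  intro ε hε
  -- the (F6) bound near x
  have hlt : ((-ε : ℝ) : EReal) < Filter.liminf
      (fun v : X => (((F t v - F t x) / ‖gradF t v‖ : ℝ) : EReal)) (𝓝[≠] x) :=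
    lt_of_lt_of_le (by exact_mod_cast (by linarith : -ε < (0:ℝ))) (hF6 t htIcc x hxcrit)
  have hev6 : ∀ᶠ v in 𝓝[≠] x, ((-ε:ℝ) : EReal) < (((F t v - F t x) / ‖gradF t v‖ : ℝ) : EReal) :=
    eventually_lt_of_lt_liminf hlt
  obtain ⟨r₃, hr₃, hball6⟩ := Metric.nhdsWithin_basis_ball.eventually_iff.mp hev6
  -- continuity of dtF at (t,x)
  have hctw : ContinuousWithinAt (fun p : ℝ × X => dtF p.1 p.2)
      (Set.Icc 0 T ×ˢ Set.univ) (t, x) := hdtFc (t, x) ⟨htIcc, Set.mem_univ x⟩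
  rw [Metric.continuousWithinAt_iff] at hctw
  obtain ⟨δ, hδ, hδc⟩ := hctw (ε/2) (by positivity)
  -- u stays close to x just to the right of t
  have hevu : ∀ᶠ τ in 𝓝[>] t, dist (u τ) x < δ := (hup t ht) (Metric.ball_mem_nhds _ hδ)
  obtain ⟨δ₁, hδ₁, hballu⟩ := Metric.nhdsWithin_basis_ball.eventually_iff.mp hevu
  -- up (t+h) tends to x as h↘0
  set ρ : ℝ := min r₁ (min r₂ (min r₃ δ)) with hρdef
  have hρ : 0 < ρ := lt_min hr₁ (lt_min hr₂ (lt_min hr₃ hδ))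
  have hmap : Filter.Tendsto (fun h : ℝ => t + h) (𝓝[>] 0) (𝓝[>] t) := by
    apply tendsto_nhdsWithin_of_tendsto_nhds_of_eventually_within
    · have : Filter.Tendsto (fun h : ℝ => t + h) (𝓝 0) (𝓝 (t + 0)) :=
        (continuous_const.add continuous_id).tendsto 0
      simpa using this.mono_left nhdsWithin_le_nhds
    · filter_upwards [self_mem_nhdsWithin] with h hh
      exact by simpa using (show (0:ℝ) < h from hh)
  have htend : Filter.Tendsto (fun h : ℝ => up (t + h)) (𝓝[>] 0) (𝓝 x) :=
    (hupc t ht).comp hmap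
  have E2 : ∀ᶠ h in 𝓝[>] 0, dist (up (t + h)) x < ρ := htend (Metric.ball_mem_nhds _ hρ)
  have E1 : ∀ᶠ h in 𝓝[>] 0, h < min (min δ δ₁) (T - t) :=
    Filter.eventually_of_mem (Ioo_mem_nhdsGT_of_mem
      ⟨le_rfl, lt_min (lt_min hδ hδ₁) (by linarith [ht.2])⟩) (fun h hh => hh.2)
  refine Filter.le_liminf_of_le (by isBoundedDefault) ?_
  filter_upwards [E1, E2, self_mem_nhdsWithin] with h hE1 hE2 hh0'
  have hh0 : (0:ℝ) < h := hh0'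
  have hhδ : h < δ := lt_of_lt_of_le hE1 (le_trans (min_le_left _ _) (min_le_left _ _))
  have hhδ₁ : h < δ₁ := lt_of_lt_of_le hE1 (le_trans (min_le_left _ _) (min_le_right _ _))
  have hhT : h < T - t := lt_of_lt_of_le hE1 (min_le_right _ _)
  set v := up (t + h) with hvdef
  have hvr₁ : dist v x < r₁ := lt_of_lt_of_le hE2 (min_le_left _ _)
  have hvr₂ : dist v x < r₂ := lt_of_lt_of_le hE2 (le_trans (min_le_right _ _) (min_le_left _ _))
  have hvr₃ : dist v x < r₃ := lt_of_lt_of_le hE2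
    (le_trans (min_le_right _ _) (le_trans (min_le_right _ _) (min_le_left _ _)))
  have hvδ : dist v x < δ := lt_of_lt_of_le hE2
    (le_trans (min_le_right _ _) (le_trans (min_le_right _ _) (min_le_right _ _)))
  have hthIoc : t + h ∈ Set.Ioc 0 T := ⟨by linarith [ht.1], by linarith⟩
  have hthIcc : t + h ∈ Set.Icc 0 T := ⟨by linarith [ht.1], by linarith⟩
  have hgv0 : gradF (t + h) v = 0 := (hstab (t + h) hthIoc).1
  have hgnorm : ‖gradF t v‖ ≤ L * h := by
    calc ‖gradF t v‖ = ‖gradF t v - gradF (t + h) v‖ := by rw [hgv0, sub_zero]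
      _ ≤ L * |t - (t + h)| := hLip v (Metric.mem_ball.mpr hvr₁) t htIcc (t + h) hthIcc
      _ = L * h := by rw [show t - (t + h) = -h by ring, abs_neg, abs_of_pos hh0]
  -- energy estimate via (F6)
  have hFdiff : -(ε * (L * h)) ≤ F t v - F t x := by
    rcases eq_or_ne v x with hvx | hvx
    · rw [hvx, sub_self]
      have : 0 ≤ ε * (L * h) := by positivity
      linarith
    · have h6 := hball6 ⟨Metric.mem_ball.mpr hvr₃, hvx⟩
      have hgvne : gradF t v ≠ 0 := fun h0 => hvx (hiso v h0 (Metric.mem_ball.mpr hvr₂))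
      have hgpos : 0 < ‖gradF t v‖ := norm_pos_iff.mpr hgvne
      rw [EReal.coe_lt_coe_iff] at h6
      have := (lt_div_iff₀ hgpos).mp h6
      nlinarith
  -- integral estimate
  have hint1 : IntervalIntegrable (fun r => dtF r v) MeasureTheory.volume t (t + h) := by
    apply ContinuousOn.intervalIntegrable
    rw [Set.uIcc_of_le (by linarith)]
    exact hdtFc.comp ((continuous_id.prodMk continuous_const).continuousOn)
      (fun τ hτ => Set.mk_mem_prod (Set.Icc_subset_Icc ht.1 (by linarith) hτ) (Set.mem_univ v))
  have hint2 : IntervalIntegrable (fun r => dtF r (u r)) MeasureTheory.volume t (t + h) :=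
    hgII t (t + h) ht.1 (by linarith) (by linarith)
  have hint0t : IntervalIntegrable (fun r => dtF r (u r)) MeasureTheory.volume 0 t :=
    hgII 0 t le_rfl ht.1 ht.2.le
  -- the decomposition of the increment
  have hfpid : fp (t + h) - fp t = (F t v - F t x) +
      ((∫ r in t..(t + h), dtF r v) - ∫ r in t..(t + h), dtF r (u r)) := by
    rw [hfp (t + h), hfp t]
    have hsplit : (∫ r in (0:ℝ)..(t + h), dtF r (u r)) =
        (∫ r in (0:ℝ)..t, dtF r (u r)) + ∫ r in t..(t + h), dtF r (u r) :=
      (intervalIntegral.integral_add_adjacent_intervals hint0t hint2).symm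
    have hFv : (∫ r in t..(t + h), dtF r v) = F (t + h) v - F t v :=
      hFTC v t (t + h) ht.1 (by linarith) (by linarith)
    rw [hsplit, hFv]
    ring
  -- pointwise estimate of the integrand
  have hptwise : ∀ r ∈ Set.Ioc t (t + h), -ε ≤ dtF r v - dtF r (u r) := by
    intro r hr
    have hrIcc : r ∈ Set.Icc 0 T := ⟨le_trans ht.1 hr.1.le, by linarith [hr.2]⟩
    have hdrt : dist r t < δ := by
      rw [Real.dist_eq, abs_of_pos (by linarith [hr.1] : (0:ℝ) < r - t)]
      linarith [hr.2]
    have h1 : |dtF r v - dtF t x| < ε/2 := by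
      have := hδc (Set.mk_mem_prod hrIcc (Set.mem_univ v))
        (show dist ((r, v) : ℝ × X) (t, x) < δ by
          rw [Prod.dist_eq]; exact max_lt hdrt hvδ)
      simpa [Real.dist_eq] using this
    have h2 : |dtF r (u r) - dtF t x| < ε/2 := by
      have hur : dist (u r) x < δ := hballu ⟨Metric.mem_ball.mpr (by
          rw [Real.dist_eq, abs_of_pos (by linarith [hr.1] : (0:ℝ) < r - t)]
          linarith [hr.2]), hr.1⟩
      have := hδc (Set.mk_mem_prod hrIcc (Set.mem_univ (u r)))
        (show dist ((r, u r) : ℝ × X) (t, x) < δ by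
          rw [Prod.dist_eq]; exact max_lt hdrt hur)
      simpa [Real.dist_eq] using this
    have h1' := abs_lt.mp h1
    have h2' := abs_lt.mp h2
    linarith [h1'.1, h2'.2]
  -- lower bound for the integral term
  have hlow : -(ε * h) ≤ (∫ r in t..(t + h), dtF r v) - ∫ r in t..(t + h), dtF r (u r) := by
    have hsub : (∫ r in t..(t + h), (dtF r v - dtF r (u r))) =
        (∫ r in t..(t + h), dtF r v) - ∫ r in t..(t + h), dtF r (u r) :=
      intervalIntegral.integral_sub hint1 hint2
    rw [← hsub]
    have hconst : (∫ _ in t..(t + h), (-ε : ℝ)) = -(ε * h) := by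
      rw [intervalIntegral.integral_const]
      simp [smul_eq_mul]; ring
    rw [← hconst]
    apply intervalIntegral.integral_mono_ae_restrict (by linarith : t ≤ t + h)
      (intervalIntegrable_const) (hint1.sub hint2)
    rw [MeasureTheory.Measure.restrict_congr_set (MeasureTheory.Ioc_ae_eq_Icc).symm]
    apply MeasureTheory.ae_restrict_of_forall_mem measurableSet_Ioc
    exact fun r hr => hptwise r hr
  -- conclusion
  have hsum : -(ε * (L + 1)) * h ≤ fp (t + h) - fp t := by
    rw [hfpid]
    nlinarith [hFdiff, hlow]
  have hq : -(ε * (L + 1)) ≤ (fp (t + h) - fp t) / h := (le_div_iff₀ hh0).mpr hsum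
  exact EReal.coe_le_coe_iff.mpr hq
end

section
/- Assume (F0)-(F5). Then for every t ∈ [0,T] and every u₁, u₂ ∈ X, the energy-dissipation cost dominates the energy gap: c_t(u₁, u₂) ≥ |F(t, u₁) − F(t, u₂)|. -/
set_option maxHeartbeats 1000000

open Set Filter Topology MeasureTheory
open scoped RealInnerProductSpace

lemma amgm_B {X : Type*} [NormedAddCommGroup X] [InnerProductSpace ℝ X]
    (B Binv : X →L[ℝ] X)
    (hBsymm : ∀ x y : X, ⟪B x, y⟫ = ⟪x, B y⟫)
    (hBpos : ∀ x : X, x ≠ 0 → 0 < ⟪x, B x⟫)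
    (hBinv₂ : ∀ x : X, B (Binv x) = x)
    (z w : X) : |⟪z, w⟫| ≤ (1 / 2) * (⟪z, Binv z⟫ + ⟪w, B w⟫) := by
  have hnn : ∀ x : X, 0 ≤ ⟪x, B x⟫ := by
    intro x
    rcases eq_or_ne x 0 with rfl | hx
    · simp
    · exact (hBpos x hx).le
  set y := Binv z with hy
  have hz : z = B y := (hBinv₂ z).symm
  have h1 : ⟪z, Binv z⟫ = ⟪y, B y⟫ := by
    conv_lhs => rw [← hy, hz]
    rw [hBsymm]
  have h2 : ⟪z, w⟫ = ⟪y, B w⟫ := by conv_lhs => rw [hz, hBsymm]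
  have hyw : ⟪w, B y⟫ = ⟪y, B w⟫ := by rw [← hBsymm, real_inner_comm]
  have e1 : ⟪y - w, B (y - w)⟫ = ⟪y, B y⟫ - 2 * ⟪y, B w⟫ + ⟪w, B w⟫ := by
    rw [map_sub, inner_sub_left, inner_sub_right, inner_sub_right, hyw]; ring
  have e2 : ⟪y + w, B (y + w)⟫ = ⟪y, B y⟫ + 2 * ⟪y, B w⟫ + ⟪w, B w⟫ := by
    rw [map_add, inner_add_left, inner_add_right, inner_add_right, hyw]; ring
  have p1 := hnn (y - w)
  have p2 := hnn (y + w)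
  rw [h1, h2, abs_le]
  constructor <;> nlinarith [p1, p2, e1, e2]

lemma cross_zero {X : Type*} [NormedAddCommGroup X] [InnerProductSpace ℝ X]
    [CompleteSpace X]
    (A : X →L[ℝ] X) (hAsymm : ∀ x y : X, ⟪A x, y⟫ = ⟪x, A y⟫) (a b : ℝ)
    (f : ℝ → X) (hf : IntegrableOn f (Ioc a b))
    (htot : ∫ r in Ioc a b, f r = 0) :
    ∫ s in Ioc a b, ⟪A (f s), ∫ r in Ioc a s, f r⟫ = 0 := by
  set μ := volume.restrict (Ioc a b) with hμ
  have hfμ : Integrable f μ := hf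
  set k : ℝ × ℝ → ℝ := fun p => ⟪A (f p.1), f p.2⟫ with hk
  have hmf : AEStronglyMeasurable (fun p : ℝ × ℝ => A (f p.1)) (μ.prod μ) :=
    (A.continuous.comp_aestronglyMeasurable hfμ.1).comp_quasiMeasurePreserving
      Measure.quasiMeasurePreserving_fst
  have hms : AEStronglyMeasurable (fun p : ℝ × ℝ => f p.2) (μ.prod μ) :=
    hfμ.1.comp_quasiMeasurePreserving Measure.quasiMeasurePreserving_snd
  have hk_meas : AEStronglyMeasurable k (μ.prod μ) := hmf.inner hms
  have hk_int : Integrable k (μ.prod μ) := by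
    refine Integrable.mono' ((hfμ.norm.const_mul ‖A‖).mul_prod hfμ.norm) hk_meas ?_
    filter_upwards with p
    calc ‖k p‖ ≤ ‖A (f p.1)‖ * ‖f p.2‖ := by
          rw [hk]; exact abs_real_inner_le_norm _ _
      _ ≤ (‖A‖ * ‖f p.1‖) * ‖f p.2‖ :=
          mul_le_mul_of_nonneg_right (A.le_opNorm _) (norm_nonneg _)
  have hsle : MeasurableSet {p : ℝ × ℝ | p.2 ≤ p.1} :=
    measurableSet_le measurable_snd measurable_fst
  have hsle' : MeasurableSet {p : ℝ × ℝ | p.1 ≤ p.2} :=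
    measurableSet_le measurable_fst measurable_snd
  set K := ({p : ℝ × ℝ | p.2 ≤ p.1}).indicator k with hKdef
  set K' := ({p : ℝ × ℝ | p.1 ≤ p.2}).indicator k with hK'def
  have hK_int : Integrable K (μ.prod μ) := hk_int.indicator hsle
  have hK'_int : Integrable K' (μ.prod μ) := hk_int.indicator hsle'
  -- symmetry of k
  have hksymm : ∀ p : ℝ × ℝ, k (p.2, p.1) = k p := by
    intro p
    simp only [hk]
    rw [hAsymm, real_inner_comm]
  -- swap
  have hswap : ∫ p, K p ∂(μ.prod μ) = ∫ p, K' p ∂(μ.prod μ) := by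
    have := integral_prod_swap (ν := μ) (μ := μ) K
    rw [← this]
    congr 1
    funext p
    simp only [hKdef, hK'def, Prod.swap, Set.indicator_apply, Set.mem_setOf_eq]
    by_cases h : p.1 ≤ p.2 <;> simp [h, hksymm p]
  -- diagonal is null
  have hdiag : ∀ᵐ p ∂(μ.prod μ), p.1 ≠ p.2 := by
    have hds : MeasurableSet {p : ℝ × ℝ | p.1 = p.2} :=
      measurableSet_eq_fun measurable_fst measurable_snd
    rw [ae_iff]
    have : {p : ℝ × ℝ | ¬p.1 ≠ p.2} = {p : ℝ × ℝ | p.1 = p.2} := by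
      ext p; simp
    rw [this, Measure.prod_apply hds]
    have : ∀ s : ℝ, μ (Prod.mk s ⁻¹' {p : ℝ × ℝ | p.1 = p.2}) = 0 := by
      intro s
      have hpre : Prod.mk s ⁻¹' {p : ℝ × ℝ | p.1 = p.2} = {s} := by
        ext r; simp [eq_comm]
      rw [hpre, hμ, Measure.restrict_apply (measurableSet_singleton s)]
      exact measure_mono_null Set.inter_subset_left (measure_singleton s)
    simp [this]
  -- sum of the two halves
  have hsum : ∫ p, K p ∂(μ.prod μ) + ∫ p, K' p ∂(μ.prod μ) = ∫ p, k p ∂(μ.prod μ) := by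
    rw [← integral_add hK_int hK'_int]
    refine integral_congr_ae ?_
    filter_upwards [hdiag] with p hp
    simp only [hKdef, hK'def, Set.indicator_apply, Set.mem_setOf_eq]
    rcases lt_or_gt_of_ne hp with h | h
    · simp [h.le, not_le.2 h]
    · simp [h.le, not_le.2 h]
  -- total integral of k is zero
  have hktot : ∫ p, k p ∂(μ.prod μ) = 0 := by
    have hii := integral_integral (μ := μ) (ν := μ) (f := fun s r => k (s, r)) hk_int
    rw [← hii]
    have : ∀ s : ℝ, ∫ r, k (s, r) ∂μ = 0 := by
      intro s
      have := (innerSL ℝ (A (f s))).integral_comp_comm hfμ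
      simp only [innerSL_apply_apply] at this
      rw [hk]
      simp only
      rw [this, htot, inner_zero_right]
    simp [this]
  have hI : ∫ p, K p ∂(μ.prod μ) = 0 := by
    rw [hswap] at hsum ⊢
    linarith [hsum, hktot]
  -- identify LHS with ∫ K
  have hinner : ∀ s ∈ Ioc a b,
      ⟪A (f s), ∫ r in Ioc a s, f r⟫ = ∫ r, K (s, r) ∂μ := by
    intro s hs
    have h1 : (fun r => K (s, r)) = (Iic s).indicator (fun r => k (s, r)) := by
      funext r
      simp [hKdef, Set.indicator_apply, Set.mem_Iic]
    rw [h1, integral_indicator measurableSet_Iic, hμ,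
      Measure.restrict_restrict measurableSet_Iic]
    have h2 : Iic s ∩ Ioc a b = Ioc a s := by
      ext r
      simp only [mem_inter_iff, mem_Iic, mem_Ioc]
      exact ⟨fun h => ⟨h.2.1, h.1⟩, fun h => ⟨h.2, h.1, h.2.trans hs.2⟩⟩
    rw [h2]
    have h3 := (innerSL ℝ (A (f s))).integral_comp_comm
      (hf.mono_set (Ioc_subset_Ioc_right hs.2))
    simp only [innerSL_apply_apply] at h3
    rw [hk, ← h3]
  calc ∫ s in Ioc a b, ⟪A (f s), ∫ r in Ioc a s, f r⟫
      = ∫ s, (∫ r, K (s, r) ∂μ) ∂μ :=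
        setIntegral_congr_fun measurableSet_Ioc (fun s hs => hinner s hs)
    _ = ∫ p, K p ∂(μ.prod μ) :=
        integral_integral (μ := μ) (ν := μ) (f := fun s r => K (s, r)) hK_int
    _ = 0 := hI

lemma member_lower_bound {X : Type*} [NormedAddCommGroup X] [InnerProductSpace ℝ X]
    [CompleteSpace X]
    (A B Binv : X →L[ℝ] X)
    (hAsymm : ∀ x y : X, ⟪A x, y⟫ = ⟪x, A y⟫)
    (hBsymm : ∀ x y : X, ⟪B x, y⟫ = ⟪x, B y⟫)
    (hBpos : ∀ x : X, x ≠ 0 → 0 < ⟪x, B x⟫)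
    (hBinv₂ : ∀ x : X, B (Binv x) = x)
    (FF : X → ℝ) (G : X → X) (hG : Continuous G)
    (hFG : ∀ x : X, HasGradientAt FF (G x) x)
    (a b : ℝ) (hab : a ≤ b) (v v' v'' : ℝ → X)
    (h1 : ∀ s ∈ Icc a b, HasDerivWithinAt v (v' s) (Icc a b) s)
    (h2 : ContinuousOn v' (Icc a b))
    (h3 : IntegrableOn v'' (Icc a b))
    (h4 : IntegrableOn (fun s => ‖v'' s‖ ^ 2) (Icc a b))
    (h5 : ∀ s ∈ Icc a b, v' s = v' a + ∫ r in a..s, v'' r)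
    (h8 : v' a = 0) (h9 : v' b = 0) :
    |FF (v a) - FF (v b)| ≤
      (1 / 2) * ∫ s in a..b,
        (⟪G (v s) + A (v'' s), Binv (G (v s) + A (v'' s))⟫ + ⟪v' s, B (v' s)⟫) := by
  have haIcc : a ∈ Icc a b := ⟨le_refl a, hab⟩
  have hbIcc : b ∈ Icc a b := ⟨hab, le_refl b⟩
  set g : ℝ → X := fun s => G (v s) with hgdef
  set z : ℝ → X := fun s => g s + A (v'' s) with hzdef
  have hv_cont : ContinuousOn v (Icc a b) := fun s hs => (h1 s hs).continuousWithinAt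
  have hg_cont : ContinuousOn g (Icc a b) := hG.comp_continuousOn hv_cont
  -- bounds
  obtain ⟨Mg, hMg⟩ := isCompact_Icc.exists_bound_of_continuousOn hg_cont
  obtain ⟨Mw, hMw⟩ := isCompact_Icc.exists_bound_of_continuousOn h2
  have hMg0 : 0 ≤ Mg := le_trans (norm_nonneg _) (hMg a haIcc)
  have hMw0 : 0 ≤ Mw := le_trans (norm_nonneg _) (hMw a haIcc)
  -- measurability
  have hv''m : AEStronglyMeasurable v'' (volume.restrict (Icc a b)) := h3.1
  have hg_m : AEStronglyMeasurable g (volume.restrict (Icc a b)) :=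
    hg_cont.aestronglyMeasurable measurableSet_Icc
  have hw_m : AEStronglyMeasurable v' (volume.restrict (Icc a b)) :=
    h2.aestronglyMeasurable measurableSet_Icc
  have hAv''m : AEStronglyMeasurable (fun s => A (v'' s)) (volume.restrict (Icc a b)) :=
    A.continuous.comp_aestronglyMeasurable hv''m
  have hz_m : AEStronglyMeasurable z (volume.restrict (Icc a b)) := hg_m.add hAv''m
  -- norm of z bound
  have hznorm : ∀ s ∈ Icc a b, ‖z s‖ ≤ Mg + ‖A‖ * ‖v'' s‖ := by
    intro s hs
    calc ‖z s‖ ≤ ‖g s‖ + ‖A (v'' s)‖ := norm_add_le _ _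
      _ ≤ Mg + ‖A‖ * ‖v'' s‖ := add_le_add (hMg s hs) (A.le_opNorm _)
  -- integrability of Q
  have hQ1_int : IntegrableOn (fun s => ⟪z s, Binv (z s)⟫) (Icc a b) := by
    have hdom : IntegrableOn
        (fun s => ‖Binv‖ * (2 * Mg ^ 2 + 2 * ‖A‖ ^ 2 * ‖v'' s‖ ^ 2)) (Icc a b) := by
      have hc : IntegrableOn (fun _ : ℝ => 2 * Mg ^ 2) (Icc a b) :=
        integrableOn_const measure_Icc_lt_top.ne
      exact (hc.add (h4.const_mul (2 * ‖A‖ ^ 2))).const_mul ‖Binv‖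
    refine Integrable.mono' hdom
      (hz_m.inner (Binv.continuous.comp_aestronglyMeasurable hz_m)) ?_
    filter_upwards [ae_restrict_mem measurableSet_Icc] with s hs
    have hb := hznorm s hs
    have hz0 : (0:ℝ) ≤ ‖z s‖ := norm_nonneg _
    calc ‖⟪z s, Binv (z s)⟫‖ ≤ ‖z s‖ * ‖Binv (z s)‖ := abs_real_inner_le_norm _ _
      _ ≤ ‖z s‖ * (‖Binv‖ * ‖z s‖) :=
          mul_le_mul_of_nonneg_left (Binv.le_opNorm _) hz0
      _ ≤ ‖Binv‖ * (2 * Mg ^ 2 + 2 * ‖A‖ ^ 2 * ‖v'' s‖ ^ 2) := by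
          nlinarith [norm_nonneg (Binv : X →L[ℝ] X), norm_nonneg (v'' s),
            norm_nonneg (A : X →L[ℝ] X), hb, hMg0,
            mul_self_le_mul_self hz0 hb,
            sq_nonneg (Mg - ‖A‖ * ‖v'' s‖),
            mul_nonneg (norm_nonneg (A : X →L[ℝ] X)) (norm_nonneg (v'' s)),
            mul_le_mul_of_nonneg_left (mul_self_le_mul_self hz0 hb)
              (norm_nonneg (Binv : X →L[ℝ] X))]
  have hQ2_int : IntegrableOn (fun s => ⟪v' s, B (v' s)⟫) (Icc a b) :=
    (h2.inner (B.continuous.comp_continuousOn h2)).integrableOn_compact isCompact_Icc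
  have hQ_int : IntegrableOn
      (fun s => ⟪z s, Binv (z s)⟫ + ⟪v' s, B (v' s)⟫) (Icc a b) := hQ1_int.add hQ2_int
  -- integrability of h and its pieces
  have hh1_int : IntegrableOn (fun s => ⟪g s, v' s⟫) (Icc a b) :=
    (hg_cont.inner h2).integrableOn_compact isCompact_Icc
  have hh2_int : IntegrableOn (fun s => ⟪A (v'' s), v' s⟫) (Icc a b) := by
    refine Integrable.mono' (g := fun s => (‖A‖ * ‖v'' s‖) * Mw)
      (((h3.norm.const_mul ‖A‖).mul_const Mw))
      (hAv''m.inner hw_m) ?_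
    filter_upwards [ae_restrict_mem measurableSet_Icc] with s hs
    calc ‖⟪A (v'' s), v' s⟫‖ ≤ ‖A (v'' s)‖ * ‖v' s‖ := abs_real_inner_le_norm _ _
      _ ≤ (‖A‖ * ‖v'' s‖) * Mw :=
          mul_le_mul (A.le_opNorm _) (hMw s hs) (norm_nonneg _)
            (by positivity)
  have hh_int : IntegrableOn (fun s => ⟪z s, v' s⟫) (Icc a b) := by
    have : (fun s => ⟪z s, v' s⟫) =
        fun s => ⟪g s, v' s⟫ + ⟪A (v'' s), v' s⟫ := by
      funext s; rw [hzdef]; exact inner_add_left _ _ _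
    rw [this]; exact hh1_int.add hh2_int
  -- interval integrability
  have toII : ∀ {f : ℝ → ℝ}, IntegrableOn f (Icc a b) → IntervalIntegrable f volume a b := by
    intro f hf
    rw [intervalIntegrable_iff_integrableOn_Icc_of_le hab]
    exact hf
  -- FTC : ∫ ⟪g, v'⟫ = FF (v b) - FF (v a)
  have hFTC : ∫ s in a..b, ⟪g s, v' s⟫ = FF (v b) - FF (v a) := by
    have hψ : ∀ s ∈ Icc a b,
        HasDerivWithinAt (fun s => FF (v s)) (⟪g s, v' s⟫) (Icc a b) s := by
      intro s hs
      have hfd := (hFG (v s)).hasFDerivAt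
      have := hfd.comp_hasDerivWithinAt s (h1 s hs)
      simp [InnerProductSpace.toDual_apply_apply] at this; exact this
    refine intervalIntegral.integral_eq_sub_of_hasDeriv_right_of_le hab
      (fun s hs => (hψ s hs).continuousWithinAt) ?_ (toII hh1_int)
    intro s hs
    exact ((hψ s (Ioo_subset_Icc_self hs)).hasDerivAt
      (Icc_mem_nhds hs.1 hs.2)).hasDerivWithinAt
  -- cross term vanishes
  have htot : ∫ r in Ioc a b, v'' r = 0 := by
    have h5b := h5 b hbIcc
    rw [h8, h9, zero_add] at h5b
    rw [← intervalIntegral.integral_of_le hab, ← h5b]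
  have hcross : ∫ s in a..b, ⟪A (v'' s), v' s⟫ = 0 := by
    rw [intervalIntegral.integral_of_le hab]
    have hcongr : ∀ s ∈ Ioc a b,
        ⟪A (v'' s), v' s⟫ = ⟪A (v'' s), ∫ r in Ioc a s, v'' r⟫ := by
      intro s hs
      rw [h5 (s := s) (Ioc_subset_Icc_self hs), h8, zero_add,
        intervalIntegral.integral_of_le hs.1.le]
    rw [setIntegral_congr_fun measurableSet_Ioc hcongr]
    exact cross_zero A hAsymm a b v'' (h3.mono_set Ioc_subset_Icc_self) htot
  -- split ∫ h
  have hsplit : ∫ s in a..b, ⟪z s, v' s⟫ = FF (v b) - FF (v a) := by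
    have : ∀ s : ℝ, ⟪z s, v' s⟫ = ⟪g s, v' s⟫ + ⟪A (v'' s), v' s⟫ := by
      intro s; rw [hzdef]; exact inner_add_left _ _ _
    calc ∫ s in a..b, ⟪z s, v' s⟫
        = ∫ s in a..b, (⟪g s, v' s⟫ + ⟪A (v'' s), v' s⟫) := by
          simp only [this]
      _ = (∫ s in a..b, ⟪g s, v' s⟫) + ∫ s in a..b, ⟪A (v'' s), v' s⟫ :=
          intervalIntegral.integral_add (toII hh1_int) (toII hh2_int)
      _ = FF (v b) - FF (v a) := by rw [hFTC, hcross, add_zero]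
  -- pointwise bound and conclusion
  have hpt : ∀ s ∈ Icc a b, |⟪z s, v' s⟫| ≤
      (1 / 2) * (⟪z s, Binv (z s)⟫ + ⟪v' s, B (v' s)⟫) :=
    fun s _ => amgm_B B Binv hBsymm hBpos hBinv₂ (z s) (v' s)
  calc |FF (v a) - FF (v b)|
      = |∫ s in a..b, ⟪z s, v' s⟫| := by rw [hsplit, abs_sub_comm]
    _ ≤ ∫ s in a..b, |⟪z s, v' s⟫| := by
        simpa [Real.norm_eq_abs] using
          intervalIntegral.norm_integral_le_integral_norm (f := fun s => ⟪z s, v' s⟫) hab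
    _ ≤ ∫ s in a..b, (1 / 2) * (⟪z s, Binv (z s)⟫ + ⟪v' s, B (v' s)⟫) := by
        refine intervalIntegral.integral_mono_on hab ?_ ((toII hQ_int).const_mul _) hpt
        simpa [Real.norm_eq_abs] using (toII hh_int).norm
    _ = (1 / 2) * ∫ s in a..b,
        (⟪G (v s) + A (v'' s), Binv (G (v s) + A (v'' s))⟫ + ⟪v' s, B (v' s)⟫) := by
        rw [intervalIntegral.integral_const_mul]

noncomputable def cost {X : Type*} [NormedAddCommGroup X] [InnerProductSpace ℝ X]
    (A B Binv : X →L[ℝ] X) (gradF : ℝ → X → X) (t : ℝ) (u₁ u₂ : X) : ℝ :=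
  sInf { c : ℝ | ∃ (N : ℕ) (v v' v'' : ℝ → X),
    -- v is C¹ on [-N,N] with derivative v'
    (∀ s ∈ Set.Icc (-(N : ℝ)) (N : ℝ),
      HasDerivWithinAt v (v' s) (Set.Icc (-(N : ℝ)) (N : ℝ)) s) ∧
    ContinuousOn v' (Set.Icc (-(N : ℝ)) (N : ℝ)) ∧
    -- v' is absolutely continuous with (second) derivative v'' in L²
    MeasureTheory.IntegrableOn v'' (Set.Icc (-(N : ℝ)) (N : ℝ)) ∧
    MeasureTheory.IntegrableOn (fun s => ‖v'' s‖ ^ 2) (Set.Icc (-(N : ℝ)) (N : ℝ)) ∧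
    (∀ s ∈ Set.Icc (-(N : ℝ)) (N : ℝ), v' s = v' (-(N : ℝ)) + ∫ r in (-(N : ℝ))..s, v'' r) ∧
    -- boundary conditions
    v (-(N : ℝ)) = u₁ ∧ v (N : ℝ) = u₂ ∧ v' (-(N : ℝ)) = 0 ∧ v' (N : ℝ) = 0 ∧
    -- value of the functional
    c = (1 / 2) * ∫ s in (-(N : ℝ))..(N : ℝ),
      (⟪gradF t (v s) + A (v'' s), Binv (gradF t (v s) + A (v'' s))⟫
        + ⟪v' s, B (v' s)⟫) }

theorem cost_ge_energy_gap
    {X : Type*} [NormedAddCommGroup X] [InnerProductSpace ℝ X] [FiniteDimensional ℝ X]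
    (A B Binv : X →L[ℝ] X)
    (hAsymm : ∀ x y : X, ⟪A x, y⟫ = ⟪x, A y⟫)
    (hApos : ∀ x : X, x ≠ 0 → 0 < ⟪x, A x⟫)
    (hBsymm : ∀ x y : X, ⟪B x, y⟫ = ⟪x, B y⟫)
    (hBpos : ∀ x : X, x ≠ 0 → 0 < ⟪x, B x⟫)
    -- Binv is the inverse of B
    (hBinv₁ : ∀ x : X, Binv (B x) = x) (hBinv₂ : ∀ x : X, B (Binv x) = x)
    (T : ℝ) (hT : 0 < T)
    (F dtF : ℝ → X → ℝ) (gradF : ℝ → X → X)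
    -- (F0)
    (hF0 : ContDiffOn ℝ 1 (fun p : ℝ × X => F p.1 p.2) (Set.Icc 0 T ×ˢ Set.univ))
    (hgradF : ∀ t ∈ Set.Icc 0 T, ∀ x : X, HasGradientAt (F t) (gradF t x) x)
    (hdtF : ∀ x : X, ∀ t ∈ Set.Icc 0 T,
      HasDerivWithinAt (fun τ => F τ x) (dtF t x) (Set.Icc 0 T) t)
    -- (F1)
    (hF1 : ∀ ρ > (0 : ℝ), Bornology.IsBounded {x : X | ∀ t ∈ Set.Icc 0 T, |F t x| ≤ ρ})
    -- (F2)
    (C₁ C₂ : ℝ) (hC₁ : 0 < C₁) (hC₂ : 0 < C₂)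
    (hF2 : ∀ t ∈ Set.Icc 0 T, ∀ x : X, |dtF t x| ≤ C₁ * F t x + C₂)
    -- (F3)
    (dtgradF : ℝ → X → X)
    (hdtgradF : ∀ x : X, ∀ t ∈ Set.Icc 0 T,
      HasDerivWithinAt (fun τ => gradF τ x) (dtgradF t x) (Set.Icc 0 T) t)
    (hF3 : ∀ M > (0 : ℝ), ∃ a : ℝ → ℝ, MeasureTheory.IntegrableOn a (Set.Icc 0 T) ∧
      ∀ t ∈ Set.Icc 0 T, ∀ x : X, ‖x‖ ≤ M → ‖dtgradF t x‖ ≤ a t)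
    -- (F4)
    (hessF : ℝ → X → X →L[ℝ] X)
    (hF4 : ∀ t ∈ Set.Icc 0 T, ContDiff ℝ 2 (F t))
    (hhessF : ∀ t ∈ Set.Icc 0 T, ∀ x : X, HasFDerivAt (gradF t) (hessF t x) x)
    (hhessFc : ContinuousOn (fun p : ℝ × X => hessF p.1 p.2) (Set.Icc 0 T ×ˢ Set.univ))
    -- (F5)
    (hF5 : ∀ t ∈ Set.Icc 0 T, ∀ x : X, gradF t x = 0 →
      ∃ r > (0 : ℝ), ∀ y : X, gradF t y = 0 → y ∈ Metric.ball x r → y = x)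
    (t : ℝ) (ht : t ∈ Set.Icc 0 T) (u₁ u₂ : X) :
    |F t u₁ - F t u₂| ≤ cost A B Binv gradF t u₁ u₂ := by
  have hGcont : Continuous (gradF t) := by
    rw [continuous_iff_continuousAt]
    exact fun x => (hhessF t ht x).differentiableAt.continuousAt
  rw [cost]
  refine le_csInf ?_ ?_
  · -- the admissible set is nonempty
    have hp : ∀ s : ℝ, HasDerivAt (fun s : ℝ => (-s ^ 3 + 3 * s + 2) / 4)
        ((3 - 3 * s ^ 2) / 4) s := by
      intro s
      have h := ((((hasDerivAt_pow 3 s).neg.add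
        ((hasDerivAt_id' s).const_mul (3 : ℝ))).add_const 2).div_const 4)
      refine h.congr_deriv ?_
      push_cast
      ring
    have hv : ∀ s : ℝ, HasDerivAt (fun s : ℝ => u₁ + ((-s ^ 3 + 3 * s + 2) / 4) • (u₂ - u₁))
        (((3 - 3 * s ^ 2) / 4) • (u₂ - u₁)) s :=
      fun s => ((hp s).smul_const (u₂ - u₁)).const_add u₁
    have hc2 : Continuous fun s : ℝ => ((3 - 3 * s ^ 2) / 4) • (u₂ - u₁) := by
      fun_prop
    have hc3 : Continuous fun s : ℝ => (-(3 / 2) * s) • (u₂ - u₁) := by fun_prop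
    refine ⟨_, 1, fun s => u₁ + ((-s ^ 3 + 3 * s + 2) / 4) • (u₂ - u₁),
      fun s => ((3 - 3 * s ^ 2) / 4) • (u₂ - u₁),
      fun s => (-(3 / 2) * s) • (u₂ - u₁),
      fun s _ => (hv s).hasDerivWithinAt, hc2.continuousOn,
      hc3.integrableOn_Icc, ((hc3.norm.pow 2).integrableOn_Icc), ?_, ?_, ?_, ?_, ?_, rfl⟩
    · intro s _
      simp only [Nat.cast_one]
      rw [intervalIntegral.integral_smul_const, intervalIntegral.integral_const_mul,
        integral_id, ← add_smul]
      congr 1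
      norm_num
      ring
    · norm_num
    · norm_num
    · norm_num
    · norm_num
  · rintro c ⟨N, v, v', v'', h1, h2, h3, h4, h5, h6, h7, h8, h9, rfl⟩
    have hab : -(N : ℝ) ≤ (N : ℝ) := le_trans (neg_nonpos.2 N.cast_nonneg) N.cast_nonneg
    have hkey := member_lower_bound A B Binv hAsymm hBsymm hBpos hBinv₂
      (F t) (gradF t) hGcont (hgradF t ht) (-(N : ℝ)) (N : ℝ) hab v v' v''
      h1 h2 h3 h4 h5 h8 h9
    rw [h6, h7] at hkey
    exact hkey
end

section
/- Assume (F0)-(F5). Then for every t ∈ [0,T] and every u₁, u₂, u₃ ∈ X, the energy-dissipation cost satisfies the triangle inequality: c_t(u₁, u₂) ≤ c_t(u₁, u₃) + c_t(u₃, u₂). -/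
open Set Filter Topology MeasureTheory
open scoped RealInnerProductSpace

section Auxiliary

variable {X : Type*} [NormedAddCommGroup X] [InnerProductSpace ℝ X]

def costSet (A B Binv : X →L[ℝ] X) (gradF : ℝ → X → X) (t : ℝ) (u₁ u₂ : X) : Set ℝ :=
  { c : ℝ | ∃ (N : ℕ) (v v' v'' : ℝ → X),
    (∀ s ∈ Set.Icc (-(N : ℝ)) (N : ℝ),
      HasDerivWithinAt v (v' s) (Set.Icc (-(N : ℝ)) (N : ℝ)) s) ∧
    ContinuousOn v' (Set.Icc (-(N : ℝ)) (N : ℝ)) ∧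
    MeasureTheory.IntegrableOn v'' (Set.Icc (-(N : ℝ)) (N : ℝ)) ∧
    MeasureTheory.IntegrableOn (fun s => ‖v'' s‖ ^ 2) (Set.Icc (-(N : ℝ)) (N : ℝ)) ∧
    (∀ s ∈ Set.Icc (-(N : ℝ)) (N : ℝ), v' s = v' (-(N : ℝ)) + ∫ r in (-(N : ℝ))..s, v'' r) ∧
    v (-(N : ℝ)) = u₁ ∧ v (N : ℝ) = u₂ ∧ v' (-(N : ℝ)) = 0 ∧ v' (N : ℝ) = 0 ∧
    c = (1 / 2) * ∫ s in (-(N : ℝ))..(N : ℝ),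
      (⟪gradF t (v s) + A (v'' s), Binv (gradF t (v s) + A (v'' s))⟫
        + ⟪v' s, B (v' s)⟫) }

lemma mem_costSet_intro (A B Binv : X →L[ℝ] X) (gradF : ℝ → X → X) (t : ℝ) (u₁ u₂ : X)
    (c : ℝ) (N : ℕ) {a b : ℝ} (ha : a = -(N : ℝ)) (hb : b = (N : ℝ)) (v v' v'' : ℝ → X)
    (h1 : ∀ s ∈ Set.Icc a b, HasDerivWithinAt v (v' s) (Set.Icc a b) s)
    (h2 : ContinuousOn v' (Set.Icc a b))
    (h3 : MeasureTheory.IntegrableOn v'' (Set.Icc a b))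
    (h4 : MeasureTheory.IntegrableOn (fun s => ‖v'' s‖ ^ 2) (Set.Icc a b))
    (h5 : ∀ s ∈ Set.Icc a b, v' s = v' a + ∫ r in a..s, v'' r)
    (h6 : v a = u₁) (h7 : v b = u₂) (h8 : v' a = 0) (h9 : v' b = 0)
    (h10 : c = (1 / 2) * ∫ s in a..b,
      (⟪gradF t (v s) + A (v'' s), Binv (gradF t (v s) + A (v'' s))⟫ + ⟪v' s, B (v' s)⟫)) :
    c ∈ costSet A B Binv gradF t u₁ u₂ := by
  subst ha hb
  exact ⟨N, v, v', v'', h1, h2, h3, h4, h5, h6, h7, h8, h9, h10⟩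


lemma ae_ne_restrict {s : Set ℝ} (m : ℝ) :
    ∀ᵐ x ∂(MeasureTheory.volume.restrict s), x ≠ m := by
  refine ae_restrict_of_ae ?_
  have : MeasureTheory.volume ({m} : Set ℝ) = 0 := measure_singleton m
  rw [MeasureTheory.ae_iff]
  simpa using this

lemma glueIntegrableOn {E : Type*} [NormedAddCommGroup E] {f fl fr : ℝ → E}
    {a m b n₁ n₂ : ℝ} (ha : a = -(n₁ + n₂)) (hm : m = n₁ - n₂) (hb : b = n₁ + n₂)
    (hn₁ : 0 ≤ n₁) (hn₂ : 0 ≤ n₂)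
    (hfl : MeasureTheory.IntegrableOn fl (Set.Icc (-n₁) n₁))
    (hfr : MeasureTheory.IntegrableOn fr (Set.Icc (-n₂) n₂))
    (hl : ∀ x ∈ Set.Icc a m, f x = fl (x + n₂))
    (hr : ∀ x ∈ Set.Ioc m b, f x = fr (x - n₁)) :
    MeasureTheory.IntegrableOn f (Set.Icc a b) := by
  have ham : a ≤ m := by rw [ha, hm]; linarith
  have hmb : m ≤ b := by rw [hm, hb]; linarith
  have hn : -n₁ ≤ n₁ := by linarith
  have hn' : -n₂ ≤ n₂ := by linarith
  have hL : MeasureTheory.IntegrableOn (fun x => fl (x + n₂)) (Set.Icc a m) := by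
    have h1 : IntervalIntegrable fl MeasureTheory.volume (-n₁) n₁ :=
      (intervalIntegrable_iff_integrableOn_Icc_of_le hn).mpr hfl
    have h2 := h1.comp_add_right n₂
    have h3 : IntervalIntegrable (fun x => fl (x + n₂)) MeasureTheory.volume a m := by
      rw [ha, hm, show -(n₁ + n₂) = -n₁ - n₂ from by ring]; exact h2
    exact (intervalIntegrable_iff_integrableOn_Icc_of_le ham).mp h3
  have hR : MeasureTheory.IntegrableOn (fun x => fr (x - n₁)) (Set.Icc m b) := by
    have h1 : IntervalIntegrable fr MeasureTheory.volume (-n₂) n₂ :=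
      (intervalIntegrable_iff_integrableOn_Icc_of_le hn').mpr hfr
    have h2 := h1.comp_sub_right n₁
    have h3 : IntervalIntegrable (fun x => fr (x - n₁)) MeasureTheory.volume m b := by
      rw [hm, hb, show n₁ - n₂ = -n₂ + n₁ from by ring, show n₁ + n₂ = n₂ + n₁ from by ring]
      exact h1.comp_sub_right n₁
    exact (intervalIntegrable_iff_integrableOn_Icc_of_le hmb).mp h3
  have hLf : MeasureTheory.IntegrableOn f (Set.Icc a m) :=
    hL.congr_fun (fun x hx => (hl x hx).symm) measurableSet_Icc
  have hRf : MeasureTheory.IntegrableOn f (Set.Icc m b) := by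
    refine hR.congr ?_
    filter_upwards [ae_ne_restrict m, MeasureTheory.ae_restrict_mem measurableSet_Icc]
      with x hx hx'
    exact (hr x ⟨lt_of_le_of_ne hx'.1 (Ne.symm hx), hx'.2⟩).symm
  exact (hLf.union hRf).mono_set (by rw [Set.Icc_union_Icc_eq_Icc ham hmb])

lemma glueIntegral {E : Type*} [NormedAddCommGroup E] [NormedSpace ℝ E] {f fl fr : ℝ → E}
    {a m b n₁ n₂ : ℝ} (ha : a = -(n₁ + n₂)) (hm : m = n₁ - n₂) (hb : b = n₁ + n₂)
    (hn₁ : 0 ≤ n₁) (hn₂ : 0 ≤ n₂)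
    (hfl : MeasureTheory.IntegrableOn fl (Set.Icc (-n₁) n₁))
    (hfr : MeasureTheory.IntegrableOn fr (Set.Icc (-n₂) n₂))
    (hl : ∀ x ∈ Set.Icc a m, f x = fl (x + n₂))
    (hr : ∀ x ∈ Set.Ioc m b, f x = fr (x - n₁)) :
    ∫ s in a..b, f s = (∫ s in (-n₁)..n₁, fl s) + ∫ s in (-n₂)..n₂, fr s := by
  have ham : a ≤ m := by rw [ha, hm]; linarith
  have hmb : m ≤ b := by rw [hm, hb]; linarith
  have hI := glueIntegrableOn ha hm hb hn₁ hn₂ hfl hfr hl hr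
  have hIl : IntervalIntegrable f MeasureTheory.volume a m :=
    (intervalIntegrable_iff_integrableOn_Icc_of_le ham).mpr
      (hI.mono_set (Set.Icc_subset_Icc le_rfl hmb))
  have hIr : IntervalIntegrable f MeasureTheory.volume m b :=
    (intervalIntegrable_iff_integrableOn_Icc_of_le hmb).mpr
      (hI.mono_set (Set.Icc_subset_Icc ham le_rfl))
  rw [← intervalIntegral.integral_add_adjacent_intervals hIl hIr]
  congr 1
  · have h1 : ∫ s in a..m, f s = ∫ s in a..m, fl (s + n₂) := by
      apply intervalIntegral.integral_congr
      intro x hx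
      rw [Set.uIcc_of_le ham] at hx
      exact hl x hx
    rw [h1, intervalIntegral.integral_comp_add_right,
      show a + n₂ = -n₁ from by rw [ha]; ring, show m + n₂ = n₁ from by rw [hm]; ring]
  · have h1 : ∫ s in m..b, f s = ∫ s in m..b, fr (s - n₁) := by
      apply intervalIntegral.integral_congr_ae
      refine MeasureTheory.ae_of_all _ ?_
      intro x hx
      rw [Set.uIoc_of_le hmb] at hx
      exact hr x hx
    rw [h1, intervalIntegral.integral_comp_sub_right,
      show m - n₁ = -n₂ from by rw [hm]; ring, show b - n₁ = n₂ from by rw [hb]; ring]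


lemma integrandIntegrable [FiniteDimensional ℝ X] (A B Binv : X →L[ℝ] X) (g : X → X)
    (hg : Continuous g) {n : ℝ} (hn : 0 ≤ n) {v v' v'' : ℝ → X}
    (hv : ContinuousOn v (Set.Icc (-n) n))
    (hv' : ContinuousOn v' (Set.Icc (-n) n))
    (hv'' : MeasureTheory.IntegrableOn v'' (Set.Icc (-n) n))
    (hv''sq : MeasureTheory.IntegrableOn (fun s => ‖v'' s‖ ^ 2) (Set.Icc (-n) n)) :
    MeasureTheory.IntegrableOn
      (fun s => ⟪g (v s) + A (v'' s), Binv (g (v s) + A (v'' s))⟫ + ⟪v' s, B (v' s)⟫)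
      (Set.Icc (-n) n) := by
  have hgv : ContinuousOn (fun s => g (v s)) (Set.Icc (-n) n) := hg.comp_continuousOn hv
  obtain ⟨M, hM⟩ := (isCompact_Icc (a := -n) (b := n)).exists_bound_of_continuousOn hgv
  obtain ⟨M', hM'⟩ := (isCompact_Icc (a := -n) (b := n)).exists_bound_of_continuousOn hv'
  -- measurability
  have hmv'' : MeasureTheory.AEStronglyMeasurable v''
      (MeasureTheory.volume.restrict (Set.Icc (-n) n)) := hv''.aestronglyMeasurable
  have hmgv : MeasureTheory.AEStronglyMeasurable (fun s => g (v s))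
      (MeasureTheory.volume.restrict (Set.Icc (-n) n)) :=
    hgv.aestronglyMeasurable measurableSet_Icc
  have hmw : MeasureTheory.AEStronglyMeasurable (fun s => g (v s) + A (v'' s))
      (MeasureTheory.volume.restrict (Set.Icc (-n) n)) :=
    hmgv.add (A.continuous.comp_aestronglyMeasurable hmv'')
  have hmv' : MeasureTheory.AEStronglyMeasurable v'
      (MeasureTheory.volume.restrict (Set.Icc (-n) n)) :=
    hv'.aestronglyMeasurable measurableSet_Icc
  have hmeas : MeasureTheory.AEStronglyMeasurable
      (fun s => ⟪g (v s) + A (v'' s), Binv (g (v s) + A (v'' s))⟫ + ⟪v' s, B (v' s)⟫)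
      (MeasureTheory.volume.restrict (Set.Icc (-n) n)) :=
    (hmw.inner (Binv.continuous.comp_aestronglyMeasurable hmw)).add
      (hmv'.inner (B.continuous.comp_aestronglyMeasurable hmv'))
  -- dominating function
  have hdom : MeasureTheory.IntegrableOn
      (fun s => (‖Binv‖ * (2*‖A‖^2)) * ‖v'' s‖^2 + (‖Binv‖ * (2*M^2) + ‖B‖ * M'^2))
      (Set.Icc (-n) n) :=
    (hv''sq.const_mul (‖Binv‖ * (2*‖A‖^2))).add (MeasureTheory.integrable_const _)
  refine hdom.mono' hmeas ?_
  filter_upwards [MeasureTheory.ae_restrict_mem measurableSet_Icc] with s hs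
  have h1 : ‖g (v s)‖ ≤ M := hM s hs
  have h2 : ‖v' s‖ ≤ M' := hM' s hs
  have hw : ‖g (v s) + A (v'' s)‖ ≤ M + ‖A‖ * ‖v'' s‖ := by
    refine (norm_add_le _ _).trans (add_le_add h1 (A.le_opNorm _))
  have hw2 : ‖g (v s) + A (v'' s)‖^2 ≤ 2*M^2 + 2*‖A‖^2 * ‖v'' s‖^2 := by
    have h0 : (0:ℝ) ≤ ‖g (v s) + A (v'' s)‖ := norm_nonneg _
    nlinarith [norm_nonneg (v'' s), norm_nonneg (A : X →L[ℝ] X), sq_nonneg (M - ‖A‖ * ‖v'' s‖)]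
  have hin1 : |⟪g (v s) + A (v'' s), Binv (g (v s) + A (v'' s))⟫| ≤
      ‖Binv‖ * ‖g (v s) + A (v'' s)‖^2 := by
    calc |⟪g (v s) + A (v'' s), Binv (g (v s) + A (v'' s))⟫|
        ≤ ‖g (v s) + A (v'' s)‖ * ‖Binv (g (v s) + A (v'' s))‖ := abs_real_inner_le_norm _ _
      _ ≤ ‖g (v s) + A (v'' s)‖ * (‖Binv‖ * ‖g (v s) + A (v'' s)‖) := by
          exact mul_le_mul_of_nonneg_left (Binv.le_opNorm _) (norm_nonneg _)
      _ = ‖Binv‖ * ‖g (v s) + A (v'' s)‖^2 := by ring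
  have hin2 : |⟪v' s, B (v' s)⟫| ≤ ‖B‖ * M'^2 := by
    calc |⟪v' s, B (v' s)⟫| ≤ ‖v' s‖ * ‖B (v' s)‖ := abs_real_inner_le_norm _ _
      _ ≤ ‖v' s‖ * (‖B‖ * ‖v' s‖) := mul_le_mul_of_nonneg_left (B.le_opNorm _) (norm_nonneg _)
      _ = ‖B‖ * ‖v' s‖^2 := by ring
      _ ≤ ‖B‖ * M'^2 := by
          have := norm_nonneg (v' s)
          have h2' : ‖v' s‖^2 ≤ M'^2 := by nlinarith
          exact mul_le_mul_of_nonneg_left h2' (norm_nonneg _)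
  have hBnn : (0:ℝ) ≤ ‖Binv‖ := norm_nonneg _
  calc ‖⟪g (v s) + A (v'' s), Binv (g (v s) + A (v'' s))⟫ + ⟪v' s, B (v' s)⟫‖
      = |⟪g (v s) + A (v'' s), Binv (g (v s) + A (v'' s))⟫ + ⟪v' s, B (v' s)⟫| :=
        Real.norm_eq_abs _
    _ ≤ |⟪g (v s) + A (v'' s), Binv (g (v s) + A (v'' s))⟫| + |⟪v' s, B (v' s)⟫| := abs_add_le _ _
    _ ≤ ‖Binv‖ * ‖g (v s) + A (v'' s)‖^2 + ‖B‖ * M'^2 := add_le_add hin1 hin2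
    _ ≤ ‖Binv‖ * (2*M^2 + 2*‖A‖^2 * ‖v'' s‖^2) + ‖B‖ * M'^2 :=
        add_le_add (mul_le_mul_of_nonneg_left hw2 hBnn) le_rfl
    _ = (‖Binv‖ * (2*‖A‖^2)) * ‖v'' s‖^2 + (‖Binv‖ * (2*M^2) + ‖B‖ * M'^2) := by ring


lemma costSet_add [FiniteDimensional ℝ X] (A B Binv : X →L[ℝ] X) (gradF : ℝ → X → X)
    (t : ℝ) (hgc : Continuous (gradF t)) (u₁ u₂ u₃ : X) {c₁ c₂ : ℝ}
    (h₁ : c₁ ∈ costSet A B Binv gradF t u₁ u₃)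
    (h₂ : c₂ ∈ costSet A B Binv gradF t u₃ u₂) :
    c₁ + c₂ ∈ costSet A B Binv gradF t u₁ u₂ := by
  obtain ⟨N₁, p, p', p'', hp, hp'c, hp''i, hp''sq, hpftc, hpa, hpb, hp'a, hp'b, hc₁⟩ := h₁
  obtain ⟨N₂, q, q', q'', hq, hq'c, hq''i, hq''sq, hqftc, hqa, hqb, hq'a, hq'b, hc₂⟩ := h₂
  set n₁ : ℝ := (N₁ : ℝ) with hn₁def
  set n₂ : ℝ := (N₂ : ℝ) with hn₂def
  have hn₁ : 0 ≤ n₁ := Nat.cast_nonneg N₁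
  have hn₂ : 0 ≤ n₂ := Nat.cast_nonneg N₂
  set a : ℝ := -(n₁ + n₂) with hadef
  set m : ℝ := n₁ - n₂ with hmdef
  set b : ℝ := n₁ + n₂ with hbdef
  have ham : a ≤ m := by rw [hadef, hmdef]; linarith
  have hmb : m ≤ b := by rw [hmdef, hbdef]; linarith
  have han : a + n₂ = -n₁ := by rw [hadef]; ring
  have hmn : m + n₂ = n₁ := by rw [hmdef]; ring
  have hmn' : m - n₁ = -n₂ := by rw [hmdef]; ring
  have hbn : b - n₁ = n₂ := by rw [hbdef]; ring
  set v : ℝ → X := fun s => if s ≤ m then p (s + n₂) else q (s - n₁) with hvdef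
  set v' : ℝ → X := fun s => if s ≤ m then p' (s + n₂) else q' (s - n₁) with hv'def
  set v'' : ℝ → X := fun s => if s ≤ m then p'' (s + n₂) else q'' (s - n₁) with hv''def
  -- branch equalities
  have hE1v : ∀ s, s ≤ m → v s = p (s + n₂) := fun s hs => if_pos hs
  have hE1v' : ∀ s, s ≤ m → v' s = p' (s + n₂) := fun s hs => if_pos hs
  have hE1v'' : ∀ s, s ≤ m → v'' s = p'' (s + n₂) := fun s hs => if_pos hs
  have hE1v'N : ∀ s, ¬ (s ≤ m) → v s = q (s - n₁) := fun s hs => if_neg hs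
  have hqm : q (m - n₁) = u₃ := by rw [hmn']; exact hqa
  have hq'm : q' (m - n₁) = 0 := by rw [hmn']; exact hq'a
  have hpm : p (m + n₂) = u₃ := by rw [hmn]; exact hpb
  have hp'm : p' (m + n₂) = 0 := by rw [hmn]; exact hp'b
  have hE2v : ∀ s, m ≤ s → v s = q (s - n₁) := by
    intro s hs
    rcases lt_or_eq_of_le hs with h | h
    · exact if_neg (not_le.mpr h)
    · rw [← h, hE1v m le_rfl, hpm, hqm]
  have hE2v' : ∀ s, m ≤ s → v' s = q' (s - n₁) := by
    intro s hs
    rcases lt_or_eq_of_le hs with h | h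
    · exact if_neg (not_le.mpr h)
    · rw [← h, hE1v' m le_rfl, hp'm, hq'm]
  -- interval membership under shifts
  have hmemL : ∀ s ∈ Set.Icc a m, s + n₂ ∈ Set.Icc (-n₁) n₁ := by
    intro s hs
    constructor
    · rw [← han]; linarith [hs.1]
    · rw [← hmn]; linarith [hs.2]
  have hmemR : ∀ s ∈ Set.Icc m b, s - n₁ ∈ Set.Icc (-n₂) n₂ := by
    intro s hs
    constructor
    · rw [← hmn']; linarith [hs.1]
    · rw [← hbn]; linarith [hs.2]
  -- derivative on left piece
  have keyL : ∀ s ∈ Set.Icc a m, HasDerivWithinAt v (v' s) (Set.Icc a m) s := by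
    intro s hs
    have hmem := hmemL s hs
    have hmaps : Set.MapsTo (fun x => x + n₂) (Set.Icc a m) (Set.Icc (-n₁) n₁) :=
      fun x hx => hmemL x hx
    have hshift : HasDerivWithinAt (fun x => p (x + n₂)) (p' (s + n₂)) (Set.Icc a m) s := by
      have h := (hp _ hmem).scomp (x := s) ((hasDerivWithinAt_id s _).add_const n₂) hmaps
      simpa [Function.comp_def] using h
    rw [hE1v' s hs.2]
    exact hshift.congr (fun x hx => hE1v x hx.2) (hE1v s hs.2)
  have keyR : ∀ s ∈ Set.Icc m b, HasDerivWithinAt v (v' s) (Set.Icc m b) s := by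
    intro s hs
    have hmem := hmemR s hs
    have hmaps : Set.MapsTo (fun x => x - n₁) (Set.Icc m b) (Set.Icc (-n₂) n₂) :=
      fun x hx => hmemR x hx
    have hshift : HasDerivWithinAt (fun x => q (x - n₁)) (q' (s - n₁)) (Set.Icc m b) s := by
      have h := (hq _ hmem).scomp (x := s) ((hasDerivWithinAt_id s _).sub_const n₁) hmaps
      simpa [Function.comp_def] using h
    rw [hE2v' s hs.1]
    exact hshift.congr (fun x hx => hE2v x hx.1) (hE2v s hs.1)
  have hunion : Set.Icc a b ⊆ Set.Icc a m ∪ Set.Icc m b := by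
    rw [Set.Icc_union_Icc_eq_Icc ham hmb]
  have hDeriv : ∀ s ∈ Set.Icc a b, HasDerivWithinAt v (v' s) (Set.Icc a b) s := by
    intro s hs
    rcases lt_trichotomy s m with h | h | h
    · refine (keyL s ⟨hs.1, h.le⟩).mono_of_mem_nhdsWithin ?_
      rw [mem_nhdsWithin]
      exact ⟨Set.Iio m, isOpen_Iio, h, fun x hx => ⟨hx.2.1, hx.1.le⟩⟩
    · rw [h]
      exact ((keyL m ⟨ham, le_rfl⟩).union (keyR m ⟨le_rfl, hmb⟩)).mono hunion
    · refine (keyR s ⟨h.le, hs.2⟩).mono_of_mem_nhdsWithin ?_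
      rw [mem_nhdsWithin]
      exact ⟨Set.Ioi m, isOpen_Ioi, h, fun x hx => ⟨hx.1.le, hx.2.2⟩⟩
  -- integrability of v''
  have hv''int : MeasureTheory.IntegrableOn v'' (Set.Icc a b) := by
    refine glueIntegrableOn hadef hmdef hbdef hn₁ hn₂ hp''i hq''i
      (fun x hx => hE1v'' x hx.2) (fun x hx => if_neg (not_le.mpr hx.1))
  have hv''sq : MeasureTheory.IntegrableOn (fun s => ‖v'' s‖ ^ 2) (Set.Icc a b) := by
    refine glueIntegrableOn (fl := fun y => ‖p'' y‖ ^ 2) (fr := fun y => ‖q'' y‖ ^ 2)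
      hadef hmdef hbdef hn₁ hn₂ hp''sq hq''sq
      (fun x hx => by rw [hE1v'' x hx.2])
      (fun x hx => by
        have h3 : v'' x = q'' (x - n₁) := if_neg (not_le.mpr hx.1)
        rw [h3])
  -- interval integrability of pieces of v''
  have hIl : IntervalIntegrable v'' MeasureTheory.volume a m :=
    (intervalIntegrable_iff_integrableOn_Icc_of_le ham).mpr
      (hv''int.mono_set (Set.Icc_subset_Icc le_rfl hmb))
  have hIms : ∀ s ∈ Set.Icc m b, IntervalIntegrable v'' MeasureTheory.volume m s := by
    intro s hs
    exact (intervalIntegrable_iff_integrableOn_Icc_of_le hs.1).mpr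
      (hv''int.mono_set (Set.Icc_subset_Icc ham hs.2))
  -- FTC for the glued curve
  have hv'a : v' a = 0 := by rw [hE1v' a ham, han, hp'a]
  have hIntL : ∀ s ∈ Set.Icc a m, (∫ r in a..s, v'' r) = p' (s + n₂) := by
    intro s hs
    have h1 : (∫ r in a..s, v'' r) = ∫ r in a..s, p'' (r + n₂) := by
      apply intervalIntegral.integral_congr
      intro x hx
      rw [Set.uIcc_of_le hs.1] at hx
      exact hE1v'' x (le_trans hx.2 hs.2)
    rw [h1, intervalIntegral.integral_comp_add_right, han]
    have h2 := hpftc (s + n₂) (hmemL s hs)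
    rw [hp'a, zero_add] at h2
    exact h2.symm
  have hFTC : ∀ s ∈ Set.Icc a b, v' s = v' a + ∫ r in a..s, v'' r := by
    intro s hs
    rcases le_or_gt s m with h | h
    · rw [hv'a, zero_add, hIntL s ⟨hs.1, h⟩, hE1v' s h]
    · have hsm : s ∈ Set.Icc m b := ⟨h.le, hs.2⟩
      rw [hv'a, zero_add,
        ← intervalIntegral.integral_add_adjacent_intervals hIl (hIms s hsm)]
      have hL0 : (∫ r in a..m, v'' r) = 0 := by
        rw [hIntL m ⟨ham, le_rfl⟩, hp'm]
      have hR : (∫ r in m..s, v'' r) = q' (s - n₁) := by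
        have h1 : (∫ r in m..s, v'' r) = ∫ r in m..s, q'' (r - n₁) := by
          apply intervalIntegral.integral_congr_ae
          refine MeasureTheory.ae_of_all _ ?_
          intro x hx
          rw [Set.uIoc_of_le h.le] at hx
          exact if_neg (not_le.mpr hx.1)
        rw [h1, intervalIntegral.integral_comp_sub_right, hmn']
        have h2 := hqftc (s - n₁) (hmemR s hsm)
        rw [hq'a, zero_add] at h2
        exact h2.symm
      rw [hL0, zero_add, hR, hE2v' s h.le]
  -- continuity of v'
  have hv'cont : ContinuousOn v' (Set.Icc a b) := by
    have hprim : ContinuousOn (fun s => ∫ r in a..s, v'' r) (Set.Icc a b) := by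
      have := intervalIntegral.continuousOn_primitive_interval
        (a := a) (b := b) (f := v'') (μ := MeasureTheory.volume) ?_
      · rwa [Set.uIcc_of_le (ham.trans hmb)] at this
      · rwa [Set.uIcc_of_le (ham.trans hmb)]
    refine hprim.congr ?_
    intro s hs
    rw [hFTC s hs, hv'a, zero_add]
  -- the integrand identity and value
  set f : ℝ → ℝ := fun s =>
    ⟪gradF t (v s) + A (v'' s), Binv (gradF t (v s) + A (v'' s))⟫ + ⟪v' s, B (v' s)⟫ with hf
  set f₁ : ℝ → ℝ := fun s =>
    ⟪gradF t (p s) + A (p'' s), Binv (gradF t (p s) + A (p'' s))⟫ + ⟪p' s, B (p' s)⟫ with hf₁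
  set f₂ : ℝ → ℝ := fun s =>
    ⟪gradF t (q s) + A (q'' s), Binv (gradF t (q s) + A (q'' s))⟫ + ⟪q' s, B (q' s)⟫ with hf₂
  have hpc : ContinuousOn p (Set.Icc (-n₁) n₁) := fun x hx => (hp x hx).continuousWithinAt
  have hqc : ContinuousOn q (Set.Icc (-n₂) n₂) := fun x hx => (hq x hx).continuousWithinAt
  have hf₁int : MeasureTheory.IntegrableOn f₁ (Set.Icc (-n₁) n₁) :=
    integrandIntegrable A B Binv (gradF t) hgc hn₁ hpc hp'c hp''i hp''sq
  have hf₂int : MeasureTheory.IntegrableOn f₂ (Set.Icc (-n₂) n₂) :=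
    integrandIntegrable A B Binv (gradF t) hgc hn₂ hqc hq'c hq''i hq''sq
  have hfl : ∀ x ∈ Set.Icc a m, f x = f₁ (x + n₂) := by
    intro x hx
    simp only [hf, hf₁, hE1v x hx.2, hE1v' x hx.2, hE1v'' x hx.2]
  have hfr : ∀ x ∈ Set.Ioc m b, f x = f₂ (x - n₁) := by
    intro x hx
    have hx' := not_le.mpr hx.1
    have h3 : v'' x = q'' (x - n₁) := if_neg hx'
    simp only [hf, hf₂, h3, hE2v' x hx.1.le, hE2v x hx.1.le]
  have hglue := glueIntegral hadef hmdef hbdef hn₁ hn₂ hf₁int hf₂int hfl hfr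
  -- conclude
  have hNcast : a = -(((N₁ + N₂ : ℕ)) : ℝ) := by rw [hadef]; push_cast; ring
  have hNcast' : b = (((N₁ + N₂ : ℕ)) : ℝ) := by rw [hbdef]; push_cast; ring
  refine mem_costSet_intro A B Binv gradF t u₁ u₂ (c₁ + c₂) (N₁ + N₂) hNcast hNcast'
    v v' v'' hDeriv hv'cont hv''int hv''sq hFTC ?_ ?_ hv'a ?_ ?_
  · rw [hE1v a ham, han, hpa]
  · rw [hE2v b hmb, hbn, hqb]
  · rw [hE2v' b hmb, hbn, hq'b]
  · rw [hc₁, hc₂, hglue]; ring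

lemma costSet_nonneg (A B Binv : X →L[ℝ] X)
    (hBpos : ∀ x : X, x ≠ 0 → 0 < ⟪x, B x⟫) (hBinv₂ : ∀ x : X, B (Binv x) = x)
    (gradF : ℝ → X → X) (t : ℝ) (u₁ u₂ : X) :
    ∀ c ∈ costSet A B Binv gradF t u₁ u₂, 0 ≤ c := by
  have hBnn : ∀ x : X, 0 ≤ ⟪x, B x⟫ := by
    intro x
    rcases eq_or_ne x 0 with h | h
    · simp [h]
    · exact (hBpos x h).le
  have hBinn : ∀ x : X, 0 ≤ ⟪x, Binv x⟫ := by
    intro x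
    have h := hBnn (Binv x)
    rwa [hBinv₂, real_inner_comm] at h
  rintro c ⟨N, v, v', v'', -, -, -, -, -, -, -, -, -, rfl⟩
  have hab : -(N : ℝ) ≤ (N : ℝ) := by
    have := Nat.cast_nonneg (α := ℝ) N; linarith
  refine mul_nonneg (by norm_num) (intervalIntegral.integral_nonneg hab ?_)
  intro s _
  exact add_nonneg (hBinn _) (hBnn _)

lemma costSet_nonempty [CompleteSpace X] (A B Binv : X →L[ℝ] X) (gradF : ℝ → X → X)
    (t : ℝ) (u₁ u₂ : X) : (costSet A B Binv gradF t u₁ u₂).Nonempty := by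
  set d := u₂ - u₁ with hd
  set v : ℝ → X := fun s => u₁ + ((2 + 3*s - s^3)/4) • d with hv
  set v' : ℝ → X := fun s => ((3 - 3*s^2)/4) • d with hv'
  set v'' : ℝ → X := fun s => (-(3/2)*s) • d with hv''
  have hderiv : ∀ s : ℝ, HasDerivAt v (v' s) s := by
    intro s
    have h1 : HasDerivAt (fun x : ℝ => 2 + 3*x - x^3) (3 - 3*s^2) s := by
      have h2 : HasDerivAt (fun x : ℝ => 2 + 3*x) 3 s := by
        simpa using ((hasDerivAt_id s).const_mul (3:ℝ)).const_add 2
      simpa [Pi.sub_def] using h2.sub (hasDerivAt_pow 3 s)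
    exact ((h1.div_const 4).smul_const d).const_add u₁
  have hcv'' : Continuous v'' := by fun_prop
  have hcv' : Continuous v' := by fun_prop
  have hint : ∀ s : ℝ, (∫ r in (-1:ℝ)..s, v'' r) = v' s - v' (-1) := by
    intro s
    have h : (∫ r in (-1:ℝ)..s, v'' r) = (∫ r in (-1:ℝ)..s, -(3/2)*r) • d := by
      rw [← intervalIntegral.integral_smul_const]
    rw [h, intervalIntegral.integral_const_mul, integral_id]
    simp only [hv']
    rw [← sub_smul]
    congr 1
    norm_num
    ring
  have h1 : ((1:ℕ):ℝ) = (1:ℝ) := Nat.cast_one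
  refine ⟨_, 1, v, v', v'', ?_, ?_, ?_, ?_, ?_, ?_, ?_, ?_, ?_, rfl⟩
  · intro s _; exact (hderiv s).hasDerivWithinAt
  · exact hcv'.continuousOn
  · exact hcv''.integrableOn_Icc
  · exact ((hcv''.norm).pow 2).integrableOn_Icc
  · intro s _
    rw [h1, hint s]
    abel
  · simp only [hv, h1]; norm_num
  · simp only [hv, h1, hd]; norm_num
  · simp only [hv', h1]; norm_num
  · simp only [hv', h1]; norm_num

end Auxiliary

theorem cost_triangle
    {X : Type*} [NormedAddCommGroup X] [InnerProductSpace ℝ X] [FiniteDimensional ℝ X]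
    (A B Binv : X →L[ℝ] X)
    (hAsymm : ∀ x y : X, ⟪A x, y⟫ = ⟪x, A y⟫)
    (hApos : ∀ x : X, x ≠ 0 → 0 < ⟪x, A x⟫)
    (hBsymm : ∀ x y : X, ⟪B x, y⟫ = ⟪x, B y⟫)
    (hBpos : ∀ x : X, x ≠ 0 → 0 < ⟪x, B x⟫)
    -- Binv is the inverse of B
    (hBinv₁ : ∀ x : X, Binv (B x) = x) (hBinv₂ : ∀ x : X, B (Binv x) = x)
    (T : ℝ) (hT : 0 < T)
    (F dtF : ℝ → X → ℝ) (gradF : ℝ → X → X)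
    -- (F0)
    (hF0 : ContDiffOn ℝ 1 (fun p : ℝ × X => F p.1 p.2) (Set.Icc 0 T ×ˢ Set.univ))
    (hgradF : ∀ t ∈ Set.Icc 0 T, ∀ x : X, HasGradientAt (F t) (gradF t x) x)
    (hdtF : ∀ x : X, ∀ t ∈ Set.Icc 0 T,
      HasDerivWithinAt (fun τ => F τ x) (dtF t x) (Set.Icc 0 T) t)
    -- (F1)
    (hF1 : ∀ ρ > (0 : ℝ), Bornology.IsBounded {x : X | ∀ t ∈ Set.Icc 0 T, |F t x| ≤ ρ})
    -- (F2)
    (C₁ C₂ : ℝ) (hC₁ : 0 < C₁) (hC₂ : 0 < C₂)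
    (hF2 : ∀ t ∈ Set.Icc 0 T, ∀ x : X, |dtF t x| ≤ C₁ * F t x + C₂)
    -- (F3)
    (dtgradF : ℝ → X → X)
    (hdtgradF : ∀ x : X, ∀ t ∈ Set.Icc 0 T,
      HasDerivWithinAt (fun τ => gradF τ x) (dtgradF t x) (Set.Icc 0 T) t)
    (hF3 : ∀ M > (0 : ℝ), ∃ a : ℝ → ℝ, MeasureTheory.IntegrableOn a (Set.Icc 0 T) ∧
      ∀ t ∈ Set.Icc 0 T, ∀ x : X, ‖x‖ ≤ M → ‖dtgradF t x‖ ≤ a t)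
    -- (F4)
    (hessF : ℝ → X → X →L[ℝ] X)
    (hF4 : ∀ t ∈ Set.Icc 0 T, ContDiff ℝ 2 (F t))
    (hhessF : ∀ t ∈ Set.Icc 0 T, ∀ x : X, HasFDerivAt (gradF t) (hessF t x) x)
    (hhessFc : ContinuousOn (fun p : ℝ × X => hessF p.1 p.2) (Set.Icc 0 T ×ˢ Set.univ))
    -- (F5)
    (hF5 : ∀ t ∈ Set.Icc 0 T, ∀ x : X, gradF t x = 0 →
      ∃ r > (0 : ℝ), ∀ y : X, gradF t y = 0 → y ∈ Metric.ball x r → y = x)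
    (t : ℝ) (ht : t ∈ Set.Icc 0 T) (u₁ u₂ u₃ : X) :
    cost A B Binv gradF t u₁ u₂ ≤ cost A B Binv gradF t u₁ u₃ + cost A B Binv gradF t u₃ u₂ := by
  have hgc : Continuous (gradF t) :=
    continuous_iff_continuousAt.2 fun x => (hhessF t ht x).continuousAt
  have hcost : ∀ w₁ w₂ : X, cost A B Binv gradF t w₁ w₂ = sInf (costSet A B Binv gradF t w₁ w₂) :=
    fun _ _ => rfl
  have hne : ∀ w₁ w₂ : X, (costSet A B Binv gradF t w₁ w₂).Nonempty :=
    fun w₁ w₂ => costSet_nonempty A B Binv gradF t w₁ w₂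
  have hbdd : ∀ w₁ w₂ : X, BddBelow (costSet A B Binv gradF t w₁ w₂) :=
    fun w₁ w₂ => ⟨0, fun c hc => costSet_nonneg A B Binv hBpos hBinv₂ gradF t w₁ w₂ c hc⟩
  have hkey : ∀ x ∈ costSet A B Binv gradF t u₁ u₃, ∀ y ∈ costSet A B Binv gradF t u₃ u₂,
      cost A B Binv gradF t u₁ u₂ ≤ x + y := by
    intro x hx y hy
    rw [hcost]
    exact csInf_le (hbdd u₁ u₂) (costSet_add A B Binv gradF t hgc u₁ u₂ u₃ hx hy)
  have h1 : cost A B Binv gradF t u₁ u₂ - cost A B Binv gradF t u₃ u₂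
      ≤ cost A B Binv gradF t u₁ u₃ := by
    rw [hcost u₁ u₃]
    refine le_csInf (hne u₁ u₃) ?_
    intro x hx
    have h2 : cost A B Binv gradF t u₁ u₂ - x ≤ cost A B Binv gradF t u₃ u₂ := by
      rw [hcost u₃ u₂]
      refine le_csInf (hne u₃ u₂) ?_
      intro y hy
      linarith [hkey x hx y hy]
    linarith
  linarith
end

section
/- Assume (F0) and (F5), and fix t ∈ [0,T]. Let v : ℝ → X be bounded and differentiable with v̇ ∈ L²(ℝ, X), and suppose ∫_{-∞}^{+∞} ‖∇ₓF(t, v(s))‖² ds < +∞. Then the limits v_* := lim_{s→−∞} v(s) and v^* := lim_{s→+∞} v(s) exist and v_*, v^* ∈ C(t), i.e. ∇ₓF(t, v_*) = ∇ₓF(t, v^*) = 0. If in addition v̇ is (weakly) differentiable with v̈ ∈ L²(ℝ, X), then also lim_{s→±∞} v̇(s) = 0. -/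
open Set Filter Topology MeasureTheory
open scoped RealInnerProductSpace

section AuxLemmas

variable {X : Type*} [NormedAddCommGroup X] [InnerProductSpace ℝ X] [FiniteDimensional ℝ X]

private lemma aux_le_add_sq_div {x c : ℝ} (hx : 0 ≤ x) (hc : 0 < c) : x ≤ c + x ^ 2 / c := by
  have h : x ^ 2 / c * c = x ^ 2 := div_mul_cancel₀ _ hc.ne'
  nlinarith [sq_nonneg (x - c)]

private lemma aux_norm_le_one_add_sq (x : ℝ) (hx : 0 ≤ x) : x ≤ 1 + x ^ 2 := by
  nlinarith [sq_nonneg (x - 1)]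

/-- A function with square-integrable derivative is uniformly continuous. -/
private lemma uc_of_deriv_L2 (v v' : ℝ → X) (hv : ∀ s, HasDerivAt v (v' s) s)
    (hsm : AEStronglyMeasurable v' volume)
    (hL2 : Integrable (fun s => ‖v' s‖ ^ 2)) : UniformContinuous v := by
  set K := ∫ s, ‖v' s‖ ^ 2 with hKdef
  have hK0 : 0 ≤ K := integral_nonneg fun s => sq_nonneg _
  have hII : ∀ a b : ℝ, IntervalIntegrable v' volume a b := by
    intro a b
    apply IntervalIntegrable.mono_fun' (g := fun s => (1 : ℝ) + ‖v' s‖ ^ 2)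
      ((intervalIntegrable_const).add hL2.intervalIntegrable) hsm.restrict
    filter_upwards with s
    simpa using aux_norm_le_one_add_sq ‖v' s‖ (norm_nonneg _)
  have key : ∀ c : ℝ, 0 < c → ∀ a b : ℝ, a ≤ b → ‖v b - v a‖ ≤ c * (b - a) + K / c := by
    intro c hc a b hab
    have hFTC : ∫ s in a..b, v' s = v b - v a :=
      intervalIntegral.integral_eq_sub_of_hasDerivAt (fun x _ => hv x) (hII a b)
    rw [← hFTC]
    have h1 : ‖∫ s in a..b, v' s‖ ≤ ∫ s in a..b, ‖v' s‖ :=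
      intervalIntegral.norm_integral_le_integral_norm hab
    have hIInorm : IntervalIntegrable (fun s => ‖v' s‖) volume a b := (hII a b).norm
    have hIIg : IntervalIntegrable (fun s => c + ‖v' s‖ ^ 2 / c) volume a b :=
      (intervalIntegrable_const).add (hL2.intervalIntegrable.div_const c)
    have h2 : ∫ s in a..b, ‖v' s‖ ≤ ∫ s in a..b, (c + ‖v' s‖ ^ 2 / c) := by
      apply intervalIntegral.integral_mono_on hab hIInorm hIIg
      intro x _
      exact aux_le_add_sq_div (norm_nonneg _) hc
    have h3 : ∫ s in a..b, (c + ‖v' s‖ ^ 2 / c)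
        = c * (b - a) + (∫ s in a..b, ‖v' s‖ ^ 2) / c := by
      rw [intervalIntegral.integral_add intervalIntegrable_const
        (hL2.intervalIntegrable.div_const c), intervalIntegral.integral_const,
        intervalIntegral.integral_div, smul_eq_mul]
      ring
    have h4 : (∫ s in a..b, ‖v' s‖ ^ 2) ≤ K := by
      rw [intervalIntegral.integral_of_le hab]
      exact setIntegral_le_integral hL2 (Filter.Eventually.of_forall fun s => sq_nonneg _)
    have h5 : (∫ s in a..b, ‖v' s‖ ^ 2) / c ≤ K / c := by gcongr
    linarith
  rw [Metric.uniformContinuous_iff]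
  intro ε hε
  set c : ℝ := 2 * (K + 1) / ε with hcdef
  have hc : 0 < c := by positivity
  refine ⟨ε / (2 * c), by positivity, ?_⟩
  intro a b hab
  have main : ∀ a b : ℝ, a ≤ b → dist a b < ε / (2 * c) → dist (v a) (v b) < ε := by
    intro a b hab' hd
    have hba : b - a < ε / (2 * c) := by
      rw [Real.dist_eq, abs_of_nonpos (by linarith)] at hd
      linarith
    have h1 : ‖v b - v a‖ ≤ c * (b - a) + K / c := key c hc a b hab'
    have h2 : c * (b - a) < c * (ε / (2 * c)) := by
      rcases lt_or_ge 0 (b - a) with h | h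
      · exact (mul_lt_mul_iff_right₀ hc).2 hba
      · calc c * (b - a) ≤ 0 := mul_nonpos_of_nonneg_of_nonpos hc.le h
          _ < c * (ε / (2 * c)) := by positivity
    have h3 : c * (ε / (2 * c)) = ε / 2 := by field_simp; try ring
    have h4 : K / c = K * ε / (2 * (K + 1)) := by rw [hcdef]; field_simp; try ring
    have h5 : K * ε / (2 * (K + 1)) < ε / 2 := by
      rw [div_lt_div_iff₀ (by positivity) (by norm_num)]
      nlinarith
    rw [dist_eq_norm, norm_sub_rev]
    linarith
  rcases le_total a b with h | h
  · exact main a b h hab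
  · rw [dist_comm]
    exact main b a h (dist_comm a b ▸ hab)

/-- Barbălat's lemma: a uniformly continuous nonnegative integrable function tends to zero. -/
private lemma barbalat {g : ℝ → ℝ} (hg : UniformContinuous g) (h0 : ∀ s, 0 ≤ g s)
    (hint : Integrable g) : Tendsto g atTop (𝓝 0) := by
  by_contra hcon
  rw [Metric.tendsto_atTop] at hcon
  push_neg at hcon
  obtain ⟨ε, hε, hfreq⟩ := hcon
  obtain ⟨δ', hδ', hδ⟩ := Metric.uniformContinuous_iff.1 hg (ε / 2) (by positivity)
  set δ : ℝ := δ' / 2 with hδdef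
  have hδpos : 0 < δ := by positivity
  -- choose times uₙ ≥ n with g (uₙ) ≥ ε
  choose u hu1 hu2 using fun n : ℕ => hfreq (n : ℝ)
  have hu2' : ∀ n, ε ≤ g (u n) := by
    intro n
    have := hu2 n
    rw [Real.dist_eq, sub_zero, abs_of_nonneg (h0 _)] at this
    linarith
  have hulim : Tendsto u atTop atTop :=
    tendsto_atTop_mono hu1 tendsto_natCast_atTop_atTop
  -- the integral function converges at infinity
  have hlim : Tendsto (fun b => ∫ s in (0:ℝ)..b, g s) atTop (𝓝 (∫ s in Ioi (0:ℝ), g s)) :=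
    intervalIntegral_tendsto_integral_Ioi 0 hint.integrableOn tendsto_id
  have hd0 : Tendsto (fun n => (∫ s in (0:ℝ)..(u n + δ), g s) - ∫ s in (0:ℝ)..(u n), g s)
      atTop (𝓝 0) := by
    have h1 := hlim.comp (tendsto_atTop_add_const_right atTop δ hulim)
    have h2 := hlim.comp hulim
    simpa using h1.sub h2
  have hdlb : ∀ n, δ * (ε / 2) ≤
      (∫ s in (0:ℝ)..(u n + δ), g s) - ∫ s in (0:ℝ)..(u n), g s := by
    intro n
    have hadj : (∫ s in (0:ℝ)..(u n), g s) + (∫ s in (u n)..(u n + δ), g s)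
        = ∫ s in (0:ℝ)..(u n + δ), g s :=
      intervalIntegral.integral_add_adjacent_intervals hint.intervalIntegrable
        hint.intervalIntegrable
    have hmono : ∫ s in (u n)..(u n + δ), (ε / 2) ≤ ∫ s in (u n)..(u n + δ), g s := by
      apply intervalIntegral.integral_mono_on (by linarith) intervalIntegrable_const
        hint.intervalIntegrable
      intro x hx
      have hdist : dist x (u n) < δ' := by
        rw [Real.dist_eq, abs_of_nonneg (by linarith [hx.1])]
        have := hx.2
        rw [hδdef] at *
        linarith
      have := hδ hdist
      rw [Real.dist_eq, abs_lt] at this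
      linarith [hu2' n]
    have hconst : ∫ s in (u n)..(u n + δ), (ε / 2 : ℝ) = δ * (ε / 2) := by
      rw [intervalIntegral.integral_const]
      simp
    linarith
  have : (0:ℝ) ≥ δ * (ε / 2) := ge_of_tendsto hd0 (Filter.Eventually.of_forall hdlb)
  nlinarith

/-- Convergence at `+∞` to a critical point. -/
private lemma conv_atTop (g : X → X) (hgc : Continuous g)
    (hiso : ∀ x : X, g x = 0 → ∃ r > (0:ℝ), ∀ y : X, g y = 0 → y ∈ Metric.ball x r → y = x)
    (v v' : ℝ → X) (hv : ∀ s : ℝ, HasDerivAt v (v' s) s)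
    (M : ℝ) (hbdd : ∀ s : ℝ, ‖v s‖ ≤ M)
    (hv'L2 : Integrable (fun s => ‖v' s‖ ^ 2))
    (hgL2 : Integrable (fun s => ‖g (v s)‖ ^ 2)) :
    ∃ p : X, Tendsto v atTop (𝓝 p) ∧ g p = 0 := by
  have hvc : Continuous v := by
    rw [continuous_iff_continuousAt]
    exact fun s => (hv s).continuousAt
  have hv'eq : v' = deriv v := funext fun s => ((hv s).deriv).symm
  have hsm : AEStronglyMeasurable v' volume := by
    rw [hv'eq]; exact aestronglyMeasurable_deriv v volume
  have hucv : UniformContinuous v := uc_of_deriv_L2 v v' hv hsm hv'L2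
  -- uniform continuity of  s ↦ ‖g (v s)‖²
  have hmem : ∀ s : ℝ, v s ∈ Metric.closedBall (0:X) M := by
    intro s; rw [Metric.mem_closedBall, dist_zero_right]; exact hbdd s
  have hcomp : IsCompact (Metric.closedBall (0:X) M) := isCompact_closedBall 0 M
  have hψc : Continuous (fun x : X => ‖g x‖ ^ 2) := (hgc.norm.pow 2)
  have hψuc : UniformContinuousOn (fun x : X => ‖g x‖ ^ 2) (Metric.closedBall (0:X) M) :=
    hcomp.uniformContinuousOn_of_continuous hψc.continuousOn
  have huc2 : UniformContinuous (fun s => ‖g (v s)‖ ^ 2) := by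
    rw [Metric.uniformContinuous_iff]
    intro ε hε
    obtain ⟨δ₁, hδ₁, h1⟩ := Metric.uniformContinuousOn_iff.1 hψuc ε hε
    obtain ⟨δ₂, hδ₂, h2⟩ := Metric.uniformContinuous_iff.1 hucv δ₁ hδ₁
    exact ⟨δ₂, hδ₂, fun {a b} hab => h1 _ (hmem a) _ (hmem b) (h2 hab)⟩
  have hnorm0 : Tendsto (fun s => ‖g (v s)‖ ^ 2) atTop (𝓝 0) :=
    barbalat huc2 (fun s => sq_nonneg _) hgL2
  have hgv0 : Tendsto (fun s => g (v s)) atTop (𝓝 0) := by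
    rw [tendsto_zero_iff_norm_tendsto_zero]
    have h := (Real.continuous_sqrt.tendsto 0).comp hnorm0
    have heq : ((fun x => Real.sqrt x) ∘ fun s => ‖g (v s)‖ ^ 2) = fun s => ‖g (v s)‖ := by
      funext s
      simp [Function.comp, Real.sqrt_sq (norm_nonneg _)]
    rw [heq, Real.sqrt_zero] at h
    exact h
  -- every sequential cluster value of v at +∞ is a zero of g
  have clusterZero : ∀ (u : ℕ → ℝ) (w : X), Tendsto u atTop atTop →
      Tendsto (fun k => v (u k)) atTop (𝓝 w) → g w = 0 := by
    intro u w hu hw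
    have h1 : Tendsto (fun k => g (v (u k))) atTop (𝓝 (g w)) :=
      ((hgc.tendsto w).comp hw)
    have h2 : Tendsto (fun k => g (v (u k))) atTop (𝓝 0) := hgv0.comp hu
    exact tendsto_nhds_unique h1 h2
  -- existence of a cluster point
  obtain ⟨p, -, φ, hφmono, hφlim⟩ := hcomp.tendsto_subseq (x := fun n : ℕ => v n) (fun n => hmem n)
  have hφat : Tendsto (fun k => ((φ k : ℕ) : ℝ)) atTop atTop :=
    tendsto_natCast_atTop_atTop.comp hφmono.tendsto_atTop
  have hgp : g p = 0 := clusterZero (fun k => ((φ k : ℕ) : ℝ)) p hφat hφlim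
  refine ⟨p, ?_, hgp⟩
  by_contra hnot
  rw [Metric.tendsto_atTop] at hnot
  push_neg at hnot
  obtain ⟨ε, hε, hfreq⟩ := hnot
  obtain ⟨r₀, hr₀, hr⟩ := hiso p hgp
  set ρ : ℝ := min ε r₀ with hρdef
  have hρ : 0 < ρ := lt_min hε hr₀
  have hρε : ρ ≤ ε := min_le_left _ _
  have hρr : ρ ≤ r₀ := min_le_right _ _
  have hstep : ∀ n : ℕ, ∃ cn : ℝ, (n:ℝ) ≤ cn ∧ dist (v cn) p = 3 / 4 * ρ := by
    intro n
    -- first a time a ≥ n with dist (v a) p < ρ/2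
    have hev1 : ∀ᶠ k in atTop, dist (v ((φ k : ℕ) : ℝ)) p < ρ / 2 := by
      have := Metric.tendsto_atTop.1 hφlim (ρ / 2) (by positivity)
      obtain ⟨N, hN⟩ := this
      exact eventually_atTop.2 ⟨N, fun k hk => hN k hk⟩
    have hev2 : ∀ᶠ k in atTop, (n : ℝ) ≤ ((φ k : ℕ) : ℝ) :=
      hφat.eventually_ge_atTop _
    obtain ⟨k, hk1, hk2⟩ := (hev1.and hev2).exists
    set a : ℝ := ((φ k : ℕ) : ℝ) with ha
    -- then a time b ≥ a with dist (v b) p ≥ ε ≥ ρ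
    obtain ⟨b, hb1, hb2⟩ := hfreq a
    have hab : a ≤ b := hb1
    -- intermediate value theorem
    have hcont : ContinuousOn (fun s => dist (v s) p) (Icc a b) :=
      (hvc.dist continuous_const).continuousOn
    have hmemIcc : (3 / 4 * ρ) ∈ Icc (dist (v a) p) (dist (v b) p) := by
      constructor
      · linarith
      · linarith
    obtain ⟨cn, hcn1, hcn2⟩ := intermediate_value_Icc hab hcont hmemIcc
    exact ⟨cn, le_trans hk2 hcn1.1, hcn2⟩
  choose c hc1 hc2 using hstep
  obtain ⟨w, -, ψ, hψmono, hψlim⟩ := hcomp.tendsto_subseq (x := fun n => v (c n))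
    (fun n => hmem (c n))
  have hcat : Tendsto (fun k => c (ψ k)) atTop atTop := by
    apply tendsto_atTop_mono (fun k => ?_) tendsto_natCast_atTop_atTop
    calc ((k:ℕ):ℝ) ≤ ((ψ k : ℕ) : ℝ) := Nat.cast_le.2 (hψmono.le_apply)
      _ ≤ c (ψ k) := hc1 (ψ k)
  have hw0 : g w = 0 := clusterZero (fun k => c (ψ k)) w hcat hψlim
  have hdw : dist w p = 3 / 4 * ρ := by
    have h1 : Tendsto (fun k => dist (v (c (ψ k))) p) atTop (𝓝 (dist w p)) :=
      hψlim.dist tendsto_const_nhds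
    have h2 : Tendsto (fun k => dist (v (c (ψ k))) p) atTop (𝓝 (3 / 4 * ρ)) := by
      have : (fun k => dist (v (c (ψ k))) p) = fun _ => 3 / 4 * ρ :=
        funext fun k => hc2 (ψ k)
      rw [this]; exact tendsto_const_nhds
    exact tendsto_nhds_unique h1 h2
  have hwp : w = p := by
    apply hr w hw0
    rw [Metric.mem_ball, hdw]
    linarith
  rw [hwp, dist_self] at hdw
  linarith

/-- An `L²` function with `L²` derivative tends to `0` at `+∞`. -/
private lemma deriv_zero_atTop (f f' : ℝ → X) (hf : ∀ s : ℝ, HasDerivAt f (f' s) s)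
    (hfL2 : Integrable (fun s => ‖f s‖ ^ 2)) (hf'L2 : Integrable (fun s => ‖f' s‖ ^ 2)) :
    Tendsto f atTop (𝓝 0) := by
  have hfc : Continuous f := by
    rw [continuous_iff_continuousAt]; exact fun s => (hf s).continuousAt
  have hf'eq : f' = deriv f := funext fun s => ((hf s).deriv).symm
  have hf'sm : StronglyMeasurable f' := by rw [hf'eq]; exact stronglyMeasurable_deriv f
  set h : ℝ → ℝ := fun s => ‖f s‖ ^ 2 with hdef
  set h' : ℝ → ℝ := fun s => ⟪f s, f' s⟫ + ⟪f' s, f s⟫ with h'def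
  have hhd : ∀ s, HasDerivAt h (h' s) s := by
    intro s
    have := (hf s).inner ℝ (hf s)
    have heq : (fun t => (⟪f t, f t⟫ : ℝ)) = h := by
      funext t; rw [real_inner_self_eq_norm_sq]
    rw [heq] at this
    exact this
  have hsm' : AEStronglyMeasurable h' volume := by
    have h1 : StronglyMeasurable (fun s => (⟪f s, f' s⟫ : ℝ)) :=
      continuous_inner.comp_stronglyMeasurable (hfc.stronglyMeasurable.prodMk hf'sm)
    have h2 : StronglyMeasurable (fun s => (⟪f' s, f s⟫ : ℝ)) :=
      continuous_inner.comp_stronglyMeasurable (hf'sm.prodMk hfc.stronglyMeasurable)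
    exact (h1.add h2).aestronglyMeasurable
  have hh'int : Integrable h' := by
    apply Integrable.mono' (hfL2.add hf'L2) hsm'
    filter_upwards with s
    show ‖h' s‖ ≤ ‖f s‖ ^ 2 + ‖f' s‖ ^ 2
    have h1 : |(⟪f s, f' s⟫ : ℝ)| ≤ ‖f s‖ * ‖f' s‖ := abs_real_inner_le_norm _ _
    have h2 : |(⟪f' s, f s⟫ : ℝ)| ≤ ‖f' s‖ * ‖f s‖ := abs_real_inner_le_norm _ _
    have h3 : ‖h' s‖ = |(⟪f s, f' s⟫ : ℝ) + (⟪f' s, f s⟫ : ℝ)| := rfl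
    rw [h3]
    have h4 : |(⟪f s, f' s⟫ : ℝ) + (⟪f' s, f s⟫ : ℝ)| ≤ |(⟪f s, f' s⟫ : ℝ)| + |(⟪f' s, f s⟫ : ℝ)| :=
      abs_add_le _ _
    nlinarith [sq_nonneg (‖f s‖ - ‖f' s‖), norm_nonneg (f s), norm_nonneg (f' s)]
  have hFTC : ∀ b : ℝ, h b = h 0 + ∫ s in (0:ℝ)..b, h' s := by
    intro b
    have := intervalIntegral.integral_eq_sub_of_hasDerivAt (f := h) (f' := h')
      (a := 0) (b := b) (fun x _ => hhd x) hh'int.intervalIntegrable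
    linarith
  have hlim' : Tendsto (fun b => ∫ s in (0:ℝ)..b, h' s) atTop (𝓝 (∫ s in Ioi (0:ℝ), h' s)) :=
    intervalIntegral_tendsto_integral_Ioi 0 hh'int.integrableOn tendsto_id
  set L : ℝ := h 0 + ∫ s in Ioi (0:ℝ), h' s with hLdef
  have hhlim : Tendsto h atTop (𝓝 L) :=
    Tendsto.congr (fun b => (hFTC b).symm) (tendsto_const_nhds.add hlim')
  have hL0 : 0 ≤ L := ge_of_tendsto hhlim (Filter.Eventually.of_forall fun s => sq_nonneg _)
  have hK0 : 0 ≤ ∫ s, h s := integral_nonneg fun s => sq_nonneg _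
  set K : ℝ := ∫ s, h s with hKdef
  have hL1 : L ≤ 0 := by
    by_contra hL
    push_neg at hL
    have hev : ∀ᶠ b in atTop, L / 2 ≤ h b := by
      have := Metric.tendsto_atTop.1 hhlim (L / 2) (by positivity)
      obtain ⟨N, hN⟩ := this
      apply eventually_atTop.2 ⟨N, fun b hb => ?_⟩
      have := hN b hb
      rw [Real.dist_eq, abs_lt] at this
      linarith
    obtain ⟨A, hA⟩ := eventually_atTop.1 hev
    have hbound : ∀ b, A ≤ b → (b - A) * (L / 2) ≤ K := by
      intro b hb
      have h1 : ∫ s in A..b, (L / 2 : ℝ) ≤ ∫ s in A..b, h s := by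
        apply intervalIntegral.integral_mono_on hb intervalIntegrable_const
          hfL2.intervalIntegrable
        intro x hx
        exact hA x hx.1
      have h2 : ∫ s in A..b, (L / 2 : ℝ) = (b - A) * (L / 2) := by
        rw [intervalIntegral.integral_const]; simp
      have h3 : ∫ s in A..b, h s ≤ K := by
        rw [intervalIntegral.integral_of_le hb]
        exact setIntegral_le_integral hfL2 (Filter.Eventually.of_forall fun s => sq_nonneg _)
      linarith
    have hLne : L ≠ 0 := ne_of_gt hL
    have h6 : 0 ≤ 2 * K / L := div_nonneg (by linarith) hL.le
    have hbig := hbound (A + (2 * K / L + 1)) (by linarith)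
    have : (A + (2 * K / L + 1) - A) * (L / 2) = K + L / 2 := by
      field_simp
      ring
    rw [this] at hbig
    linarith
  have hLeq : L = 0 := le_antisymm hL1 hL0
  rw [tendsto_zero_iff_norm_tendsto_zero]
  have hsq := (Real.continuous_sqrt.tendsto 0).comp (hLeq ▸ hhlim)
  have heq : ((fun x => Real.sqrt x) ∘ h) = fun s => ‖f s‖ := by
    funext s
    simp [Function.comp, hdef, Real.sqrt_sq (norm_nonneg _)]
  rw [heq, Real.sqrt_zero] at hsq
  exact hsq

end AuxLemmas

/-- A bounded curve with derivative in `L²` along which `‖∇ₓF(t,·)‖` is square-integrable has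
limits at `±∞`, which are critical points of `F(t,·)`; if moreover the second derivative is in
`L²`, the derivative vanishes at `±∞`. -/
theorem limits_at_infinity
    {X : Type*} [NormedAddCommGroup X] [InnerProductSpace ℝ X] [FiniteDimensional ℝ X]
    (T : ℝ) (hT : 0 < T)
    (F : ℝ → X → ℝ) (gradF : ℝ → X → X)
    -- (F0)
    (hF0 : ContDiffOn ℝ 1 (fun p : ℝ × X => F p.1 p.2) (Set.Icc 0 T ×ˢ Set.univ))
    (hgradF : ∀ t ∈ Set.Icc 0 T, ∀ x : X, HasGradientAt (F t) (gradF t x) x)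
    -- (F5)
    (hF5 : ∀ t ∈ Set.Icc 0 T, ∀ x : X, gradF t x = 0 →
      ∃ r > (0 : ℝ), ∀ y : X, gradF t y = 0 → y ∈ Metric.ball x r → y = x)
    (t : ℝ) (ht : t ∈ Set.Icc 0 T)
    -- v is bounded and differentiable with derivative v' ∈ L²(ℝ,X)
    (v v' : ℝ → X)
    (hv : ∀ s : ℝ, HasDerivAt v (v' s) s)
    (M : ℝ) (hbdd : ∀ s : ℝ, ‖v s‖ ≤ M)
    (hv'L2 : MeasureTheory.Integrable (fun s => ‖v' s‖ ^ 2))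
    (hgradL2 : MeasureTheory.Integrable (fun s => ‖gradF t (v s)‖ ^ 2)) :
    (∃ vm vp : X,
      Filter.Tendsto v Filter.atBot (𝓝 vm) ∧ Filter.Tendsto v Filter.atTop (𝓝 vp) ∧
      gradF t vm = 0 ∧ gradF t vp = 0) ∧
    (∀ v'' : ℝ → X, (∀ s : ℝ, HasDerivAt v' (v'' s) s) →
      MeasureTheory.Integrable (fun s => ‖v'' s‖ ^ 2) →
      Filter.Tendsto v' Filter.atBot (𝓝 0) ∧ Filter.Tendsto v' Filter.atTop (𝓝 0)) := by
  -- continuity of the gradient map `gradF t`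
  have hFt : ContDiff ℝ 1 (F t) := by
    rw [← contDiffOn_univ]
    have h1 : ContDiffOn ℝ 1 (fun x : X => ((t, x) : ℝ × X)) univ :=
      (contDiff_const.prodMk contDiff_id).contDiffOn
    have h2 := hF0.comp h1 (fun x _ => ⟨ht, mem_univ x⟩)
    exact h2
  have hfderivc : Continuous fun x : X => fderiv ℝ (F t) x :=
    hFt.continuous_fderiv one_ne_zero
  have hgradeq : ∀ x : X,
      gradF t x = (InnerProductSpace.toDual ℝ X).symm (fderiv ℝ (F t) x) := by
    intro x
    have h1 : HasFDerivAt (F t) (InnerProductSpace.toDual ℝ X (gradF t x)) x :=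
      (hasGradientAt_iff_hasFDerivAt.1 (hgradF t ht x))
    rw [h1.fderiv]
    simp
  have hgc : Continuous (gradF t) := by
    have : (gradF t) = fun x => (InnerProductSpace.toDual ℝ X).symm (fderiv ℝ (F t) x) :=
      funext hgradeq
    rw [this]
    exact (InnerProductSpace.toDual ℝ X).symm.continuous.comp hfderivc
  have hiso := fun x => hF5 t ht x
  constructor
  · -- limits at ±∞
    obtain ⟨vp, hvp, hgvp⟩ := conv_atTop (gradF t) hgc hiso v v' hv M hbdd hv'L2 hgradL2
    -- reflected curve for the limit at -∞
    set w : ℝ → X := fun s => v (-s) with hwdef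
    set w' : ℝ → X := fun s => -v' (-s) with hw'def
    have hw : ∀ s : ℝ, HasDerivAt w (w' s) s := by
      intro s
      have h1 : HasDerivAt (fun x : ℝ => -x) (-1 : ℝ) s := (hasDerivAt_neg s)
      have h2 := (hv (-s)).scomp s h1
      simpa [hwdef, hw'def, Function.comp_def] using h2
    have hw'L2 : Integrable (fun s => ‖w' s‖ ^ 2) := by
      have := hv'L2.comp_neg
      simpa [hw'def] using this
    have hwgL2 : Integrable (fun s => ‖gradF t (w s)‖ ^ 2) := by
      have := hgradL2.comp_neg
      simpa [hwdef] using this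
    obtain ⟨vm, hvm, hgvm⟩ := conv_atTop (gradF t) hgc hiso w w' hw M
      (fun s => hbdd (-s)) hw'L2 hwgL2
    refine ⟨vm, vp, ?_, hvp, hgvm, hgvp⟩
    have := hvm.comp tendsto_neg_atBot_atTop
    have heq : (w ∘ fun s : ℝ => -s) = v := by
      funext s; simp [hwdef]
    rwa [heq] at this
  · -- derivative tends to zero at ±∞
    intro v'' hv'' hv''L2
    constructor
    · set w : ℝ → X := fun s => v' (-s) with hwdef
      set w' : ℝ → X := fun s => -v'' (-s) with hw'def
      have hw : ∀ s : ℝ, HasDerivAt w (w' s) s := by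
        intro s
        have h1 : HasDerivAt (fun x : ℝ => -x) (-1 : ℝ) s := (hasDerivAt_neg s)
        have h2 := (hv'' (-s)).scomp s h1
        simpa [hwdef, hw'def, Function.comp_def] using h2
      have hwL2 : Integrable (fun s => ‖w s‖ ^ 2) := by
        have := hv'L2.comp_neg
        simpa [hwdef] using this
      have hw'L2 : Integrable (fun s => ‖w' s‖ ^ 2) := by
        have := hv''L2.comp_neg
        simpa [hw'def] using this
      have := (deriv_zero_atTop w w' hw hwL2 hw'L2).comp tendsto_neg_atBot_atTop
      have heq : (w ∘ fun s : ℝ => -s) = v' := by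
        funext s; simp [hwdef]
      rwa [heq] at this
    · exact deriv_zero_atTop v' v'' hv'' hv'L2 hv''L2
end

section
/- Let X be a normed space, and let (f_k)_{k∈ℕ} be a sequence of functions f_k : ℝ → X converging to f : ℝ → X uniformly on compact subsets of ℝ. Assume that lim_{x→+∞} f(x) = f*. Then there exist a sequence x_j → +∞ and a strictly increasing sequence of indices (k_j)_{j∈ℕ} such that, for every τ ∈ ℝ, ‖f_{k_j}(x_j + τ) − f*‖ → 0 as j → +∞. -/
open Set Filter Topology

/-- If `f_k → f` uniformly on compact sets and `f(x) → f*` as `x → +∞`, then there are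
`x_j → +∞` and indices `k_j` such that `f_{k_j}(x_j + τ) → f*` for every `τ ∈ ℝ`. -/
theorem diagonal_shift_convergence
    {X : Type*} [NormedAddCommGroup X] [NormedSpace ℝ X]
    (f : ℕ → ℝ → X) (flim : ℝ → X) (fstar : X)
    (hconv : ∀ K : Set ℝ, IsCompact K → TendstoUniformlyOn f flim Filter.atTop K)
    (hlim : Filter.Tendsto flim Filter.atTop (𝓝 fstar)) :
    ∃ (x : ℕ → ℝ) (k : ℕ → ℕ),
      Filter.Tendsto x Filter.atTop Filter.atTop ∧ StrictMono k ∧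
      ∀ τ : ℝ, Filter.Tendsto (fun j => ‖f (k j) (x j + τ) - fstar‖) Filter.atTop (𝓝 0) := by
  rw [Metric.tendsto_atTop] at hlim
  have hpos : ∀ j : ℕ, (0:ℝ) < 1 / (j + 1) := by
    intro j; positivity
  -- choose M j : for y ≥ M j, dist (flim y) fstar < 1/(j+1)
  choose M hM using fun j : ℕ => hlim (1 / (j + 1)) (hpos j)
  set x : ℕ → ℝ := fun j => max (M j) 0 + j with hx
  have hxj : ∀ j : ℕ, (j : ℝ) ≤ x j := fun j => by
    have := le_max_right (M j) 0
    simp only [hx]; linarith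
  have hxM : ∀ j : ℕ, M j ≤ x j - j := fun j => by
    have := le_max_left (M j) 0
    simp only [hx]; linarith
  -- choose N j : uniform convergence index on [x j - j, x j + j]
  have hN : ∀ j : ℕ, ∃ N : ℕ, ∀ n ≥ N, ∀ y ∈ Icc (x j - j) (x j + j),
      dist (flim y) (f n y) < 1 / (j + 1) := by
    intro j
    have h := (Metric.tendstoUniformlyOn_iff).mp
      (hconv (Icc (x j - j) (x j + j)) isCompact_Icc) (1 / (j+1)) (hpos j)
    exact eventually_atTop.mp h
  choose N hNspec using hN
  set k : ℕ → ℕ := fun j => Nat.rec (N 0) (fun j kj => max (N (j+1)) (kj+1)) j with hk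
  have hkN : ∀ j : ℕ, N j ≤ k j := by
    intro j; cases j with
    | zero => exact le_refl _
    | succ n => exact le_max_left _ _
  have hkmono : StrictMono k := by
    apply strictMono_nat_of_lt_succ
    intro n
    have : k n + 1 ≤ k (n+1) := le_max_right _ _
    omega
  refine ⟨x, k, ?_, hkmono, ?_⟩
  · exact tendsto_atTop_mono hxj tendsto_natCast_atTop_atTop
  · intro τ
    have hbound : ∀ᶠ j : ℕ in atTop,
        ‖f (k j) (x j + τ) - fstar‖ ≤ 1 / (j + 1) + 1 / (j + 1) := by
      filter_upwards [tendsto_natCast_atTop_atTop.eventually_ge_atTop |τ|] with j hj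
      have h1 : -(j:ℝ) ≤ τ := by
        have := neg_abs_le τ; linarith
      have h2 : τ ≤ (j:ℝ) := le_trans (le_abs_self τ) hj
      have hmem : x j + τ ∈ Icc (x j - j) (x j + j) := ⟨by linarith, by linarith⟩
      have hge : M j ≤ x j + τ := by have := hxM j; linarith
      have e1 : dist (flim (x j + τ)) fstar < 1 / (j + 1) := hM j _ hge
      have e2 : dist (flim (x j + τ)) (f (k j) (x j + τ)) < 1 / (j + 1) :=
        hNspec j (k j) (hkN j) _ hmem
      have : ‖f (k j) (x j + τ) - fstar‖ ≤
          dist (f (k j) (x j + τ)) (flim (x j + τ)) + dist (flim (x j + τ)) fstar := by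
        rw [← dist_eq_norm]; exact dist_triangle _ _ _
      rw [dist_comm] at e2
      linarith
    have hzero : Tendsto (fun j : ℕ => 1 / ((j:ℝ) + 1) + 1 / ((j:ℝ) + 1)) atTop (𝓝 0) := by
      have := tendsto_one_div_add_atTop_nhds_zero_nat (𝕜 := ℝ)
      simpa using this.add this
    exact squeeze_zero' (Eventually.of_forall fun j => norm_nonneg _) hbound hzero
end
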